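/- arXiv:0804.0316 — 4 statements merged into one kernel-verified Lean document; each statement's English description precedes it below -/
import Mathlib

section
/- Let a ≥ 1 and r_1 ≥ r_2 ≥ … ≥ r_a > 0 be integers, and let F1 = {(i,j) ∈ ℤ² : 1 ≤ i ≤ a, 1 ≤ j ≤ r_i} (a set of triangular shape). Let F2 be a finite subset of ℤ² with |F1| = |F2| whose error in the line sums with F1 equals 2α for a positive integer α. Assume that every row containing elements of F1 and every column containing elements of F1 also contains a point of F1 △ F2. Then for every i with 1 ≤ i ≤ a−1 one has r_i − r_{i+1} ≤ α, and symmetrically the column sums of F1 of two consecutive nonempty columns differ by at most α. -/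
/-- Number of elements of `F` in row `i` (points with first coordinate `i`). -/
def rowSum (F : Finset (ℤ × ℤ)) (i : ℤ) : ℕ := (F.filter (fun p => p.1 = i)).card

/-- Number of elements of `F` in column `j` (points with second coordinate `j`). -/
def colSum (F : Finset (ℤ × ℤ)) (j : ℤ) : ℕ := (F.filter (fun p => p.2 = j)).card

/-- The total error in the line sums of `F` and `G`:
`∑ i |r_i(F) − r_i(G)| + ∑ j |c_j(F) − c_j(G)|`. -/
noncomputable def lineError (F G : Finset (ℤ × ℤ)) : ℤ :=
  (∑ᶠ i : ℤ, |(rowSum F i : ℤ) - (rowSum G i : ℤ)|) +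
  (∑ᶠ j : ℤ, |(colSum F j : ℤ) - (colSum G j : ℤ)|)

/-- `F` is uniquely determined by its row and column sums. -/
def UniquelyDetermined (F : Finset (ℤ × ℤ)) : Prop :=
  ∀ G : Finset (ℤ × ℤ),
    (∀ i, rowSum G i = rowSum F i) → (∀ j, colSum G j = colSum F j) → G = F

open Finset

lemma rowSum_zero (F : Finset (ℤ × ℤ)) (i : ℤ) (h : i ∉ F.image Prod.fst) : rowSum F i = 0 := by
  rw [rowSum, card_eq_zero, filter_eq_empty_iff]
  exact fun p hp hpi => h (mem_image.2 ⟨p, hp, hpi⟩)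

lemma colSum_zero (F : Finset (ℤ × ℤ)) (j : ℤ) (h : j ∉ F.image Prod.snd) : colSum F j = 0 := by
  rw [colSum, card_eq_zero, filter_eq_empty_iff]
  exact fun p hp hpj => h (mem_image.2 ⟨p, hp, hpj⟩)

lemma sums_le_lineError (F1 F2 : Finset (ℤ × ℤ)) (T U : Finset ℤ) :
    ((∑ i ∈ T, |(rowSum F1 i : ℤ) - rowSum F2 i|) +
     (∑ j ∈ U, |(colSum F1 j : ℤ) - colSum F2 j|)) ≤ lineError F1 F2 := by
  have hrow : (∑ i ∈ T, |(rowSum F1 i : ℤ) - rowSum F2 i|) ≤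
      ∑ᶠ i : ℤ, |(rowSum F1 i : ℤ) - rowSum F2 i| := by
    set V := T ∪ (F1 ∪ F2).image Prod.fst with hV
    have hsupp : (Function.support fun i => |(rowSum F1 i : ℤ) - rowSum F2 i|) ⊆ ↑V := by
      intro i hi
      by_contra hiV
      have h1 : i ∉ (F1 ∪ F2).image Prod.fst := fun h => hiV (mem_coe.2 (mem_union_right _ h))
      have h2 : rowSum F1 i = 0 := rowSum_zero _ _ (fun h => h1 (image_subset_image subset_union_left h))
      have h3 : rowSum F2 i = 0 := rowSum_zero _ _ (fun h => h1 (image_subset_image subset_union_right h))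
      apply hi; simp [h2, h3]
    rw [finsum_eq_finset_sum_of_support_subset _ hsupp]
    exact sum_le_sum_of_subset_of_nonneg subset_union_left (fun _ _ _ => abs_nonneg _)
  have hcol : (∑ j ∈ U, |(colSum F1 j : ℤ) - colSum F2 j|) ≤
      ∑ᶠ j : ℤ, |(colSum F1 j : ℤ) - colSum F2 j| := by
    set V := U ∪ (F1 ∪ F2).image Prod.snd with hV
    have hsupp : (Function.support fun j => |(colSum F1 j : ℤ) - colSum F2 j|) ⊆ ↑V := by
      intro j hj
      by_contra hjV
      have h1 : j ∉ (F1 ∪ F2).image Prod.snd := fun h => hjV (mem_coe.2 (mem_union_right _ h))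
      have h2 : colSum F1 j = 0 := colSum_zero _ _ (fun h => h1 (image_subset_image subset_union_left h))
      have h3 : colSum F2 j = 0 := colSum_zero _ _ (fun h => h1 (image_subset_image subset_union_right h))
      apply hj; simp [h2, h3]
    rw [finsum_eq_finset_sum_of_support_subset _ hsupp]
    exact sum_le_sum_of_subset_of_nonneg subset_union_left (fun _ _ _ => abs_nonneg _)
  rw [lineError]
  exact add_le_add hrow hcol

lemma col_split (F1 F2 : Finset (ℤ × ℤ)) (j : ℤ) :
    colSum F1 j = (F1.filter (fun p => p.2 = j ∧ p ∈ F2)).card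
      + (F1.filter (fun p => p.2 = j ∧ p ∉ F2)).card := by
  have h1 := card_filter_add_card_filter_not (s := F1.filter (fun p => p.2 = j))
      (p := fun p => p ∈ F2)
  rw [filter_filter, filter_filter] at h1
  rw [colSum, ← h1]

lemma colsum_identity (F1 F2 : Finset (ℤ × ℤ)) (j : ℤ) :
    colSum F1 j + (F2.filter (fun p => p.2 = j ∧ p ∉ F1)).card
      = colSum F2 j + (F1.filter (fun p => p.2 = j ∧ p ∉ F2)).card := by
  rw [col_split F1 F2 j, col_split F2 F1 j]
  have : F1.filter (fun p => p.2 = j ∧ p ∈ F2) = F2.filter (fun p => p.2 = j ∧ p ∈ F1) := by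
    ext p; simp only [mem_filter]; tauto
  rw [this]; ring

lemma low_side (F1 F2 : Finset (ℤ × ℤ)) (k c R : ℤ)
    (hk : 1 ≤ k) (hc : 1 ≤ c) (hcR : c ≤ R)
    (h0 : ∀ p ∈ F1, 1 ≤ p.1)
    (h1 : ∀ p ∈ F1, 1 ≤ p.2)
    (h2 : ∀ p ∈ F1, k < p.1 → p.2 ≤ c)
    (h3 : ∀ x y : ℤ, 1 ≤ x → x ≤ k → 1 ≤ y → y ≤ R → (x, y) ∈ F1) :
    (∑ j ∈ Icc (c+1) R, ((F2.filter (fun p => p.2 = j ∧ p ∉ F1)).card : ℤ))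
      ≤ (∑ i ∈ ((F1 ∪ F2).image Prod.fst).filter (fun i => ¬(1 ≤ i ∧ i ≤ k)),
            |(rowSum F1 i : ℤ) - rowSum F2 i|)
        + (∑ j ∈ Icc 1 c, |(colSum F1 j : ℤ) - colSum F2 j|) := by
  classical
  set J : Finset ℤ := Icc (c+1) R with hJ
  set TL : Finset ℤ := ((F1 ∪ F2).image Prod.fst).filter (fun i => ¬(1 ≤ i ∧ i ≤ k)) with hTL
  set G1 := F1.filter (fun p => ¬(1 ≤ p.1 ∧ p.1 ≤ k)) with hG1
  set G2 := F2.filter (fun p => ¬(1 ≤ p.1 ∧ p.1 ≤ k)) with hG2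
  set W := F2.filter (fun p => p ∉ F1 ∧ c < p.2 ∧ p.2 ≤ R) with hW
  -- Σ_J B = |W|
  have hWcard : W.card = ∑ j ∈ J, (F2.filter (fun p => p.2 = j ∧ p ∉ F1)).card := by
    rw [card_eq_sum_card_fiberwise (f := Prod.snd) (t := J) (fun p hp => by
      rw [mem_coe, hW, mem_filter] at hp; rw [mem_coe, hJ, mem_Icc]; omega)]
    apply sum_congr rfl
    intro j hj
    rw [hJ, mem_Icc] at hj
    congr 1
    ext p
    rw [hW, filter_filter, mem_filter, mem_filter]
    constructor
    · rintro ⟨hpF2, ⟨hn, _, _⟩, hpj⟩; exact ⟨hpF2, hpj, hn⟩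
    · rintro ⟨hpF2, hpj, hn⟩; exact ⟨hpF2, ⟨hn, by omega, by omega⟩, hpj⟩
  -- W ⊆ S (low rows, high cols)
  have hWS : W ⊆ G2.filter (fun p => c < p.2) := by
    intro p hp
    rw [hW, mem_filter] at hp
    rw [hG2, filter_filter, mem_filter]
    refine ⟨hp.1, ?_, hp.2.2.1⟩
    rintro ⟨hp1, hpk⟩
    have := h3 p.1 p.2 hp1 hpk (by omega) hp.2.2.2
    rw [Prod.mk.eta] at this
    exact hp.2.1 this
  have hsplit := card_filter_add_card_filter_not (s := G2) (p := fun p => c < p.2)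
  have hsub : G2.filter (fun p => 1 ≤ p.2 ∧ p.2 ≤ c) ⊆ G2.filter (fun p => ¬ c < p.2) := by
    intro p hp; rw [mem_filter] at *; exact ⟨hp.1, by omega⟩
  -- mid part counted columnwise
  have hSmidcard : (G2.filter (fun p => 1 ≤ p.2 ∧ p.2 ≤ c)).card = ∑ j ∈ Icc 1 c, colSum G2 j := by
    rw [card_eq_sum_card_fiberwise (f := Prod.snd) (t := Icc 1 c) (fun p hp => by
      rw [mem_coe, mem_filter] at hp; rw [mem_coe, mem_Icc]; exact hp.2)]
    apply sum_congr rfl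
    intro j hj
    rw [mem_Icc] at hj
    rw [colSum]
    congr 1
    ext p
    simp only [hG2, filter_filter, mem_filter]
    constructor
    · rintro ⟨hpF, ⟨hn, _⟩, hpj⟩; exact ⟨hpF, hn, hpj⟩
    · rintro ⟨hpF, hn, hpj⟩; exact ⟨hpF, ⟨hn, by omega, by omega⟩, hpj⟩
  -- G1 counted columnwise
  have hG1col : G1.card = ∑ j ∈ Icc 1 c, colSum G1 j := by
    rw [card_eq_sum_card_fiberwise (f := Prod.snd) (t := Icc 1 c) (fun p hp => by
      rw [mem_coe, hG1, mem_filter] at hp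
      rw [mem_coe, mem_Icc]
      have hp1 : 1 ≤ p.1 := h0 p hp.1
      have hpk : k < p.1 := by
        by_contra h'
        exact hp.2 ⟨hp1, by omega⟩
      exact ⟨h1 p hp.1, h2 p hp.1 hpk⟩)]
    rfl
  -- key per-column inequality on [1,c]
  have hkey : ∀ j ∈ Icc 1 c, (colSum G1 j : ℤ) - colSum G2 j
      ≤ |(colSum F1 j : ℤ) - colSum F2 j| := by
    intro j hj
    rw [mem_Icc] at hj
    have e1 := card_filter_add_card_filter_not
      (s := F1.filter (fun p => p.2 = j)) (p := fun p => 1 ≤ p.1 ∧ p.1 ≤ k)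
    have e2 := card_filter_add_card_filter_not
      (s := F2.filter (fun p => p.2 = j)) (p := fun p => 1 ≤ p.1 ∧ p.1 ≤ k)
    have r1 : (F1.filter (fun p => p.2 = j)).filter (fun p => ¬(1 ≤ p.1 ∧ p.1 ≤ k))
        = G1.filter (fun p => p.2 = j) := by
      rw [hG1, filter_filter, filter_filter]
      ext p; rw [mem_filter, mem_filter]; tauto
    have r2 : (F2.filter (fun p => p.2 = j)).filter (fun p => ¬(1 ≤ p.1 ∧ p.1 ≤ k))
        = G2.filter (fun p => p.2 = j) := by
      rw [hG2, filter_filter, filter_filter]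
      ext p; rw [mem_filter, mem_filter]; tauto
    rw [r1] at e1; rw [r2] at e2
    have eX : ((F1.filter (fun p => p.2 = j)).filter (fun p => 1 ≤ p.1 ∧ p.1 ≤ k)).card
        = k.toNat := by
      have hset : (F1.filter (fun p => p.2 = j)).filter (fun p => 1 ≤ p.1 ∧ p.1 ≤ k)
          = (Icc (1:ℤ) k) ×ˢ ({j} : Finset ℤ) := by
        ext p
        rw [filter_filter, mem_filter, mem_product, mem_Icc, mem_singleton]
        constructor
        · rintro ⟨_, hpj, hpk⟩; exact ⟨hpk, hpj⟩
        · rintro ⟨hpk, hpj⟩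
          have := h3 p.1 p.2 hpk.1 hpk.2 (by omega) (by omega)
          rw [Prod.mk.eta] at this
          exact ⟨this, hpj, hpk⟩
      rw [hset, card_product, card_singleton, Int.card_Icc]
      have : (k + 1 - 1).toNat = k.toNat := by omega
      rw [this, mul_one]
    have eY : ((F2.filter (fun p => p.2 = j)).filter (fun p => 1 ≤ p.1 ∧ p.1 ≤ k)).card
        ≤ k.toNat := by
      have hsub' : (F2.filter (fun p => p.2 = j)).filter (fun p => 1 ≤ p.1 ∧ p.1 ≤ k)
          ⊆ (Icc (1:ℤ) k) ×ˢ ({j} : Finset ℤ) := by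
        intro p hp
        rw [filter_filter, mem_filter] at hp
        rw [mem_product, mem_Icc, mem_singleton]
        exact ⟨hp.2.2, hp.2.1⟩
      calc ((F2.filter (fun p => p.2 = j)).filter (fun p => 1 ≤ p.1 ∧ p.1 ≤ k)).card
          ≤ ((Icc (1:ℤ) k) ×ˢ ({j} : Finset ℤ)).card := card_le_card hsub'
        _ = k.toNat := by
            rw [card_product, card_singleton, Int.card_Icc]
            have : (k + 1 - 1).toNat = k.toNat := by omega
            rw [this, mul_one]
    have habs := le_abs_self ((colSum F1 j : ℤ) - colSum F2 j)
    have ecolG1 : (G1.filter (fun p => p.2 = j)).card = colSum G1 j := rfl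
    have ecolF1 : (F1.filter (fun p => p.2 = j)).card = colSum F1 j := rfl
    have ecolG2 : (G2.filter (fun p => p.2 = j)).card = colSum G2 j := rfl
    have ecolF2 : (F2.filter (fun p => p.2 = j)).card = colSum F2 j := rfl
    rw [ecolG1, ecolF1] at e1
    rw [ecolG2, ecolF2] at e2
    have c1 : ((colSum G1 j : ℤ)) = (colSum F1 j : ℤ) - k.toNat := by omega
    have c2 : ((colSum G2 j : ℤ)) ≥ (colSum F2 j : ℤ) - k.toNat := by omega
    linarith
  -- rows: G2 vs G1 over TL
  have hG2row : G2.card = ∑ i ∈ TL, rowSum G2 i := by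
    rw [card_eq_sum_card_fiberwise (f := Prod.fst) (t := TL) (fun p hp => by
      rw [mem_coe, hG2, mem_filter] at hp
      rw [mem_coe, hTL, mem_filter]
      exact ⟨mem_image.2 ⟨p, mem_union.2 (Or.inr hp.1), rfl⟩, hp.2⟩)]
    rfl
  have hG1row : G1.card = ∑ i ∈ TL, rowSum G1 i := by
    rw [card_eq_sum_card_fiberwise (f := Prod.fst) (t := TL) (fun p hp => by
      rw [mem_coe, hG1, mem_filter] at hp
      rw [mem_coe, hTL, mem_filter]
      exact ⟨mem_image.2 ⟨p, mem_union.2 (Or.inl hp.1), rfl⟩, hp.2⟩)]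
    rfl
  have hrowpt : ∀ i ∈ TL, (rowSum G2 i : ℤ) ≤ rowSum G1 i
      + |(rowSum F1 i : ℤ) - rowSum F2 i| := by
    intro i hi
    rw [hTL, mem_filter] at hi
    have g2 : G2.filter (fun p => p.1 = i) = F2.filter (fun p => p.1 = i) := by
      rw [hG2, filter_filter]
      ext p; rw [mem_filter, mem_filter]
      constructor
      · rintro ⟨h, _, hpi⟩; exact ⟨h, hpi⟩
      · rintro ⟨h, hpi⟩; exact ⟨h, by rw [hpi]; exact hi.2, hpi⟩
    have g1 : G1.filter (fun p => p.1 = i) = F1.filter (fun p => p.1 = i) := by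
      rw [hG1, filter_filter]
      ext p; rw [mem_filter, mem_filter]
      constructor
      · rintro ⟨h, _, hpi⟩; exact ⟨h, hpi⟩
      · rintro ⟨h, hpi⟩; exact ⟨h, by rw [hpi]; exact hi.2, hpi⟩
    have e2 : rowSum G2 i = rowSum F2 i := by rw [rowSum, rowSum, g2]
    have e1 : rowSum G1 i = rowSum F1 i := by rw [rowSum, rowSum, g1]
    rw [e1, e2]
    have := neg_abs_le ((rowSum F1 i : ℤ) - rowSum F2 i)
    linarith
  -- assemble
  have sum2 : (G2.card : ℤ) ≤ G1.card + ∑ i ∈ TL, |(rowSum F1 i : ℤ) - rowSum F2 i| := by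
    rw [hG2row, hG1row]
    push_cast
    rw [← sum_add_distrib]
    exact sum_le_sum hrowpt
  have sum3 : (G1.card : ℤ) - (∑ j ∈ Icc 1 c, |(colSum F1 j : ℤ) - colSum F2 j|)
      ≤ ((G2.filter (fun p => 1 ≤ p.2 ∧ p.2 ≤ c)).card : ℤ) := by
    rw [hG1col, hSmidcard]
    push_cast
    rw [← sum_sub_distrib]
    apply sum_le_sum
    intro j hj
    have := hkey j hj
    linarith
  have hWbound : (W.card : ℤ) ≤ (G2.card : ℤ)
      - ((G2.filter (fun p => 1 ≤ p.2 ∧ p.2 ≤ c)).card : ℤ) := by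
    have h5 := card_le_card hsub
    have h7 := card_le_card hWS
    omega
  have hWcast : (∑ j ∈ J, ((F2.filter (fun p => p.2 = j ∧ p ∉ F1)).card : ℤ)) = (W.card : ℤ) := by
    rw [hWcard]; push_cast; rfl
  rw [hWcast]
  linarith

lemma high_side (F1 F2 : Finset (ℤ × ℤ)) (k c R : ℤ)
    (hk : 1 ≤ k) (hc : 1 ≤ c) (hcR : c ≤ R)
    (h0 : ∀ p ∈ F1, 1 ≤ p.1)
    (h1 : ∀ p ∈ F1, 1 ≤ p.2)
    (h2 : ∀ p ∈ F1, k < p.1 → p.2 ≤ c)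
    (h3 : ∀ x y : ℤ, 1 ≤ x → x ≤ k → 1 ≤ y → y ≤ R → (x, y) ∈ F1) :
    (∑ j ∈ Icc (c+1) R, ((F1.filter (fun p => p.2 = j ∧ p ∉ F2)).card : ℤ))
      ≤ (∑ i ∈ Icc 1 k, |(rowSum F1 i : ℤ) - rowSum F2 i|)
        + (∑ j ∈ ((F1 ∪ F2).image Prod.snd).filter (fun j => R < j),
            |(colSum F1 j : ℤ) - colSum F2 j|)
        + (∑ j ∈ ((F1 ∪ F2).image Prod.snd).filter (fun j => j ≤ 0),
            |(colSum F1 j : ℤ) - colSum F2 j|) := by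
  classical
  set J : Finset ℤ := Icc (c+1) R with hJ
  set TR : Finset ℤ := ((F1 ∪ F2).image Prod.snd).filter (fun j => R < j) with hTR
  set T0 : Finset ℤ := ((F1 ∪ F2).image Prod.snd).filter (fun j => j ≤ 0) with hT0
  set K1 := F1.filter (fun p => 1 ≤ p.1 ∧ p.1 ≤ k) with hK1
  set K2 := F2.filter (fun p => 1 ≤ p.1 ∧ p.1 ≤ k) with hK2
  set Rect := (Icc (1:ℤ) k) ×ˢ (Icc (1:ℤ) R) with hRect
  set VA := F1.filter (fun p => p ∉ F2 ∧ c < p.2 ∧ p.2 ≤ R) with hVA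
  -- Σ_J A = |VA|
  have hVAcard : VA.card = ∑ j ∈ J, (F1.filter (fun p => p.2 = j ∧ p ∉ F2)).card := by
    rw [card_eq_sum_card_fiberwise (f := Prod.snd) (t := J) (fun p hp => by
      rw [mem_coe, hVA, mem_filter] at hp; rw [mem_coe, hJ, mem_Icc]; omega)]
    apply sum_congr rfl
    intro j hj
    rw [hJ, mem_Icc] at hj
    congr 1
    ext p
    rw [hVA, filter_filter, mem_filter, mem_filter]
    constructor
    · rintro ⟨hpF1, ⟨hn, _, _⟩, hpj⟩; exact ⟨hpF1, hpj, hn⟩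
    · rintro ⟨hpF1, hpj, hn⟩; exact ⟨hpF1, ⟨hn, by omega, by omega⟩, hpj⟩
  have hVAsub : VA ⊆ Rect \ F2 := by
    intro p hp
    rw [hVA, mem_filter] at hp
    rw [mem_sdiff, hRect, mem_product, mem_Icc, mem_Icc]
    have hpk : p.1 ≤ k := by
      by_contra h'
      have := h2 p hp.1 (by omega)
      omega
    exact ⟨⟨⟨h0 p hp.1, hpk⟩, ⟨h1 p hp.1, hp.2.2.2⟩⟩, hp.2.1⟩
  have hRectcard : (Rect.card : ℤ) = k * R := by
    rw [hRect, card_product, Int.card_Icc, Int.card_Icc]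
    have t1 : ((k + 1 - 1).toNat : ℤ) = k := by omega
    have t2 : ((R + 1 - 1).toNat : ℤ) = R := by omega
    push_cast
    rw [t1, t2]
  have hsdiff := card_sdiff_add_card_inter Rect F2
  have hInter : Rect ∩ F2 = K2.filter (fun p => 1 ≤ p.2 ∧ p.2 ≤ R) := by
    ext p
    rw [mem_inter, hRect, mem_product, mem_Icc, mem_Icc, hK2, filter_filter, mem_filter]
    constructor
    · rintro ⟨⟨ha', hb'⟩, hpF2⟩; exact ⟨hpF2, ha', hb'⟩
    · rintro ⟨hpF2, ha', hb'⟩; exact ⟨⟨ha', hb'⟩, hpF2⟩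
  have hK2split : (K2.filter (fun p => p.2 ≤ 0)).card
      + (K2.filter (fun p => 1 ≤ p.2 ∧ p.2 ≤ R)).card
      + (K2.filter (fun p => R < p.2)).card = K2.card := by
    have s1 := card_filter_add_card_filter_not (s := K2) (p := fun p => p.2 ≤ 0)
    have s2 := card_filter_add_card_filter_not
      (s := K2.filter (fun p => ¬ p.2 ≤ 0)) (p := fun p => p.2 ≤ R)
    have r1 : (K2.filter (fun p => ¬ p.2 ≤ 0)).filter (fun p => p.2 ≤ R)
        = K2.filter (fun p => 1 ≤ p.2 ∧ p.2 ≤ R) := by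
      ext p; simp only [filter_filter, mem_filter]
      constructor
      · rintro ⟨hpK, hn, hR'⟩; exact ⟨hpK, by omega, hR'⟩
      · rintro ⟨hpK, h1', hR'⟩; exact ⟨hpK, by omega, hR'⟩
    have r2 : (K2.filter (fun p => ¬ p.2 ≤ 0)).filter (fun p => ¬ p.2 ≤ R)
        = K2.filter (fun p => R < p.2) := by
      ext p; simp only [filter_filter, mem_filter]
      constructor
      · rintro ⟨hpK, _, hR'⟩; exact ⟨hpK, by omega⟩
      · rintro ⟨hpK, hR'⟩; exact ⟨hpK, by omega, by omega⟩
    rw [r1, r2] at s2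
    omega
  -- rows over Icc 1 k
  have hK2row : K2.card = ∑ i ∈ Icc 1 k, rowSum K2 i := by
    rw [card_eq_sum_card_fiberwise (f := Prod.fst) (t := Icc 1 k) (fun p hp => by
      rw [mem_coe, hK2, mem_filter] at hp; rw [mem_coe, mem_Icc]; exact hp.2)]
    rfl
  have hK1row : K1.card = ∑ i ∈ Icc 1 k, rowSum K1 i := by
    rw [card_eq_sum_card_fiberwise (f := Prod.fst) (t := Icc 1 k) (fun p hp => by
      rw [mem_coe, hK1, mem_filter] at hp; rw [mem_coe, mem_Icc]; exact hp.2)]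
    rfl
  have hrowpt : ∀ i ∈ Icc 1 k, (rowSum K1 i : ℤ) ≤ rowSum K2 i
      + |(rowSum F1 i : ℤ) - rowSum F2 i| := by
    intro i hi
    rw [mem_Icc] at hi
    have g1 : K1.filter (fun p => p.1 = i) = F1.filter (fun p => p.1 = i) := by
      rw [hK1, filter_filter]
      ext p; rw [mem_filter, mem_filter]
      constructor
      · rintro ⟨h, _, hpi⟩; exact ⟨h, hpi⟩
      · rintro ⟨h, hpi⟩; exact ⟨h, by omega, hpi⟩
    have g2 : K2.filter (fun p => p.1 = i) = F2.filter (fun p => p.1 = i) := by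
      rw [hK2, filter_filter]
      ext p; rw [mem_filter, mem_filter]
      constructor
      · rintro ⟨h, _, hpi⟩; exact ⟨h, hpi⟩
      · rintro ⟨h, hpi⟩; exact ⟨h, by omega, hpi⟩
    have e1 : rowSum K1 i = rowSum F1 i := by rw [rowSum, rowSum, g1]
    have e2 : rowSum K2 i = rowSum F2 i := by rw [rowSum, rowSum, g2]
    rw [e1, e2]
    have := le_abs_self ((rowSum F1 i : ℤ) - rowSum F2 i)
    linarith
  have sumK : (K1.card : ℤ) ≤ K2.card + ∑ i ∈ Icc 1 k, |(rowSum F1 i : ℤ) - rowSum F2 i| := by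
    rw [hK1row, hK2row]
    push_cast
    rw [← sum_add_distrib]
    exact sum_le_sum hrowpt
  have hK1split : K1.card = Rect.card + (K1.filter (fun p => R < p.2)).card := by
    have s := card_filter_add_card_filter_not (s := K1) (p := fun p => R < p.2)
    have rr : K1.filter (fun p => ¬ R < p.2) = Rect := by
      ext p
      rw [hK1, filter_filter, mem_filter, hRect, mem_product, mem_Icc, mem_Icc]
      constructor
      · rintro ⟨hpF1, ⟨ha', hb'⟩, hR'⟩; exact ⟨⟨ha', hb'⟩, h1 p hpF1, by omega⟩
      · rintro ⟨⟨ha', hb'⟩, hc', hd'⟩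
        have := h3 p.1 p.2 ha' hb' hc' hd'
        rw [Prod.mk.eta] at this
        exact ⟨this, ⟨ha', hb'⟩, by omega⟩
    rw [rr] at s
    omega
  -- right columns
  have hTRbound : ((K2.filter (fun p => R < p.2)).card : ℤ)
      - ((K1.filter (fun p => R < p.2)).card : ℤ)
      ≤ ∑ j ∈ TR, |(colSum F1 j : ℤ) - colSum F2 j| := by
    have a2 : (K2.filter (fun p => R < p.2)).card
        = ∑ j ∈ TR, ((K2.filter (fun p => R < p.2)).filter (fun p => p.2 = j)).card := by
      apply card_eq_sum_card_fiberwise (f := Prod.snd)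
      intro p hp
      rw [mem_coe, hK2, filter_filter, mem_filter] at hp
      rw [mem_coe, hTR, mem_filter]
      exact ⟨mem_image.2 ⟨p, mem_union.2 (Or.inr hp.1), rfl⟩, hp.2.2⟩
    have a1 : (K1.filter (fun p => R < p.2)).card
        = ∑ j ∈ TR, ((K1.filter (fun p => R < p.2)).filter (fun p => p.2 = j)).card := by
      apply card_eq_sum_card_fiberwise (f := Prod.snd)
      intro p hp
      rw [mem_coe, hK1, filter_filter, mem_filter] at hp
      rw [mem_coe, hTR, mem_filter]
      exact ⟨mem_image.2 ⟨p, mem_union.2 (Or.inl hp.1), rfl⟩, hp.2.2⟩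
    rw [a1, a2]
    push_cast
    rw [← sum_sub_distrib]
    apply sum_le_sum
    intro j hj
    rw [hTR, mem_filter] at hj
    have f2sub : (K2.filter (fun p => R < p.2)).filter (fun p => p.2 = j)
        ⊆ F2.filter (fun p => p.2 = j) := by
      intro p hp
      rw [hK2, filter_filter, filter_filter, mem_filter] at hp
      rw [mem_filter]
      exact ⟨hp.1, hp.2.2.2⟩
    have f1eq : (K1.filter (fun p => R < p.2)).filter (fun p => p.2 = j)
        = F1.filter (fun p => p.2 = j) := by
      rw [hK1, filter_filter, filter_filter]
      ext p; rw [mem_filter, mem_filter]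
      constructor
      · rintro ⟨hpF1, _, _, hpj⟩; exact ⟨hpF1, hpj⟩
      · rintro ⟨hpF1, hpj⟩
        have hpk : p.1 ≤ k := by
          by_contra h'
          have := h2 p hpF1 (by omega)
          omega
        exact ⟨hpF1, ⟨h0 p hpF1, hpk⟩, by omega, hpj⟩
    have b2 : ((K2.filter (fun p => R < p.2)).filter (fun p => p.2 = j)).card
        ≤ colSum F2 j := card_le_card f2sub
    have b1 : ((K1.filter (fun p => R < p.2)).filter (fun p => p.2 = j)).card
        = colSum F1 j := by rw [f1eq]; rfl
    have := neg_abs_le ((colSum F1 j : ℤ) - colSum F2 j)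
    have b2' : (((K2.filter (fun p => R < p.2)).filter (fun p => p.2 = j)).card : ℤ)
        ≤ colSum F2 j := by exact_mod_cast b2
    rw [b1]
    linarith
  -- zero/negative columns
  have hT0bound : ((K2.filter (fun p => p.2 ≤ 0)).card : ℤ)
      ≤ ∑ j ∈ T0, |(colSum F1 j : ℤ) - colSum F2 j| := by
    have a2 : (K2.filter (fun p => p.2 ≤ 0)).card
        = ∑ j ∈ T0, ((K2.filter (fun p => p.2 ≤ 0)).filter (fun p => p.2 = j)).card := by
      apply card_eq_sum_card_fiberwise (f := Prod.snd)
      intro p hp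
      rw [mem_coe, hK2, filter_filter, mem_filter] at hp
      rw [mem_coe, hT0, mem_filter]
      exact ⟨mem_image.2 ⟨p, mem_union.2 (Or.inr hp.1), rfl⟩, hp.2.2⟩
    rw [a2]
    push_cast
    apply sum_le_sum
    intro j hj
    rw [hT0, mem_filter] at hj
    have f2sub : (K2.filter (fun p => p.2 ≤ 0)).filter (fun p => p.2 = j)
        ⊆ F2.filter (fun p => p.2 = j) := by
      intro p hp
      rw [hK2, filter_filter, filter_filter, mem_filter] at hp
      rw [mem_filter]
      exact ⟨hp.1, hp.2.2.2⟩
    have hcol1 : colSum F1 j = 0 := by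
      rw [colSum, card_eq_zero, filter_eq_empty_iff]
      intro p hp hpj
      have := h1 p hp
      omega
    have b2 : ((K2.filter (fun p => p.2 ≤ 0)).filter (fun p => p.2 = j)).card
        ≤ colSum F2 j := card_le_card f2sub
    have habs : |(colSum F1 j : ℤ) - colSum F2 j| = colSum F2 j := by
      rw [hcol1]
      push_cast
      rw [zero_sub, abs_neg, abs_of_nonneg (by positivity)]
    rw [habs]
    exact_mod_cast b2
  -- assemble
  have hVAc : (∑ j ∈ J, ((F1.filter (fun p => p.2 = j ∧ p ∉ F2)).card : ℤ)) = (VA.card : ℤ) := by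
    rw [hVAcard]; push_cast; rfl
  have hsub2 : (VA.card : ℤ) ≤ ((Rect \ F2).card : ℤ) := by
    exact_mod_cast card_le_card hVAsub
  have hIc : ((Rect ∩ F2).card : ℤ) = ((K2.filter (fun p => 1 ≤ p.2 ∧ p.2 ≤ R)).card : ℤ) := by
    rw [hInter]
  have hsd : ((Rect \ F2).card : ℤ) + ((Rect ∩ F2).card : ℤ) = (Rect.card : ℤ) := by
    exact_mod_cast hsdiff
  have hK2s : ((K2.filter (fun p => p.2 ≤ 0)).card : ℤ)
      + ((K2.filter (fun p => 1 ≤ p.2 ∧ p.2 ≤ R)).card : ℤ)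
      + ((K2.filter (fun p => R < p.2)).card : ℤ) = (K2.card : ℤ) := by
    exact_mod_cast hK2split
  have hK1s : (K1.card : ℤ) = (Rect.card : ℤ) + ((K1.filter (fun p => R < p.2)).card : ℤ) := by
    exact_mod_cast hK1split
  rw [hVAc]
  linarith

lemma core (F1 F2 : Finset (ℤ × ℤ)) (k c R : ℤ)
    (hk : 1 ≤ k) (hc : 1 ≤ c) (hcR : c ≤ R)
    (h0 : ∀ p ∈ F1, 1 ≤ p.1)
    (h1 : ∀ p ∈ F1, 1 ≤ p.2)
    (h2 : ∀ p ∈ F1, k < p.1 → p.2 ≤ c)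
    (h3 : ∀ x y : ℤ, 1 ≤ x → x ≤ k → 1 ≤ y → y ≤ R → (x, y) ∈ F1)
    (htouch : ∀ j, c < j → j ≤ R → ∃ q ∈ (F1 \ F2) ∪ (F2 \ F1), q.2 = j) :
    2 * (R - c) ≤ lineError F1 F2 := by
  classical
  set J : Finset ℤ := Icc (c+1) R with hJ
  set TL : Finset ℤ := ((F1 ∪ F2).image Prod.fst).filter (fun i => ¬(1 ≤ i ∧ i ≤ k)) with hTL
  set TR : Finset ℤ := ((F1 ∪ F2).image Prod.snd).filter (fun j => R < j) with hTR
  set T0 : Finset ℤ := ((F1 ∪ F2).image Prod.snd).filter (fun j => j ≤ 0) with hT0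
  -- step: touched columns
  have htouch2 : ∀ j ∈ J, (2:ℤ) ≤ ((F1.filter (fun p => p.2 = j ∧ p ∉ F2)).card : ℤ)
      + ((F2.filter (fun p => p.2 = j ∧ p ∉ F1)).card : ℤ)
      + |((F1.filter (fun p => p.2 = j ∧ p ∉ F2)).card : ℤ)
         - ((F2.filter (fun p => p.2 = j ∧ p ∉ F1)).card : ℤ)| := by
    intro j hj
    rw [hJ, mem_Icc] at hj
    obtain ⟨q, hq, hqj⟩ := htouch j (by omega) hj.2
    have hone : 1 ≤ (F1.filter (fun p => p.2 = j ∧ p ∉ F2)).card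
        ∨ 1 ≤ (F2.filter (fun p => p.2 = j ∧ p ∉ F1)).card := by
      rcases mem_union.1 hq with h | h
      · exact Or.inl (card_pos.2 ⟨q, mem_filter.2 ⟨(mem_sdiff.1 h).1, hqj, (mem_sdiff.1 h).2⟩⟩)
      · exact Or.inr (card_pos.2 ⟨q, mem_filter.2 ⟨(mem_sdiff.1 h).1, hqj, (mem_sdiff.1 h).2⟩⟩)
    rcases abs_cases (((F1.filter (fun p => p.2 = j ∧ p ∉ F2)).card : ℤ)
        - ((F2.filter (fun p => p.2 = j ∧ p ∉ F1)).card : ℤ)) with ⟨he, _⟩ | ⟨he, _⟩ <;>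
      rw [he] <;> omega
  -- step: |A - B| ≤ column error
  have hcolid : ∀ j : ℤ, |((F1.filter (fun p => p.2 = j ∧ p ∉ F2)).card : ℤ)
         - ((F2.filter (fun p => p.2 = j ∧ p ∉ F1)).card : ℤ)|
      ≤ |(colSum F1 j : ℤ) - colSum F2 j| := by
    intro j
    have hid := colsum_identity F1 F2 j
    have : ((F1.filter (fun p => p.2 = j ∧ p ∉ F2)).card : ℤ)
         - ((F2.filter (fun p => p.2 = j ∧ p ∉ F1)).card : ℤ)
         = (colSum F1 j : ℤ) - colSum F2 j := by omega
    rw [this]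
  -- C3: low side
  have C3 : (∑ j ∈ J, ((F2.filter (fun p => p.2 = j ∧ p ∉ F1)).card : ℤ))
      ≤ (∑ i ∈ TL, |(rowSum F1 i : ℤ) - rowSum F2 i|)
        + (∑ j ∈ Icc 1 c, |(colSum F1 j : ℤ) - colSum F2 j|) :=
    low_side F1 F2 k c R hk hc hcR h0 h1 h2 h3
  -- C4: high side
  have C4 : (∑ j ∈ J, ((F1.filter (fun p => p.2 = j ∧ p ∉ F2)).card : ℤ))
      ≤ (∑ i ∈ Icc 1 k, |(rowSum F1 i : ℤ) - rowSum F2 i|)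
        + (∑ j ∈ TR, |(colSum F1 j : ℤ) - colSum F2 j|)
        + (∑ j ∈ T0, |(colSum F1 j : ℤ) - colSum F2 j|) :=
    high_side F1 F2 k c R hk hc hcR h0 h1 h2 h3
  -- assemble
  have hJcard : (∑ j ∈ J, (2:ℤ)) = 2 * (R - c) := by
    rw [sum_const, hJ, Int.card_Icc]
    have : (R + 1 - (c + 1)).toNat = (R - c).toNat := by congr 1; ring
    rw [this, nsmul_eq_mul, Int.toNat_of_nonneg (by omega)]
    ring
  have hmain : 2 * (R - c) ≤
      (∑ j ∈ J, ((F1.filter (fun p => p.2 = j ∧ p ∉ F2)).card : ℤ))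
      + (∑ j ∈ J, ((F2.filter (fun p => p.2 = j ∧ p ∉ F1)).card : ℤ))
      + (∑ j ∈ J, |(colSum F1 j : ℤ) - colSum F2 j|) := by
    rw [← hJcard, ← sum_add_distrib, ← sum_add_distrib]
    apply sum_le_sum
    intro j hj
    have := htouch2 j hj
    have := hcolid j
    omega
  -- disjointness and final sum
  have hdisj1 : Disjoint (Icc 1 k) TL := by
    rw [disjoint_left]; intro i hi hi'
    rw [mem_Icc] at hi
    rw [hTL, mem_filter] at hi'
    exact hi'.2 hi
  have hdisj2 : Disjoint (Icc 1 c) J := by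
    rw [disjoint_left]; intro j hj hj'
    rw [mem_Icc] at hj; rw [hJ, mem_Icc] at hj'; omega
  have hdisj3 : Disjoint (Icc 1 c ∪ J) TR := by
    rw [disjoint_left]; intro j hj hj'
    rw [hTR, mem_filter] at hj'
    rcases mem_union.1 hj with h | h
    · rw [mem_Icc] at h; omega
    · rw [hJ, mem_Icc] at h; omega
  have hdisj4 : Disjoint (Icc 1 c ∪ J ∪ TR) T0 := by
    rw [disjoint_left]; intro j hj hj'
    rw [hT0, mem_filter] at hj'
    rcases mem_union.1 hj with h | h
    · rcases mem_union.1 h with h' | h'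
      · rw [mem_Icc] at h'; omega
      · rw [hJ, mem_Icc] at h'; omega
    · rw [hTR, mem_filter] at h; omega
  have hfin := sums_le_lineError F1 F2 (Icc 1 k ∪ TL) (Icc 1 c ∪ J ∪ TR ∪ T0)
  rw [sum_union hdisj1, sum_union hdisj4, sum_union hdisj3, sum_union hdisj2] at hfin
  linarith [hmain, C3, C4]

def swapEmb : ℤ × ℤ ↪ ℤ × ℤ := ⟨Prod.swap, Prod.swap_injective⟩

lemma rowSum_swap (F : Finset (ℤ × ℤ)) (i : ℤ) : rowSum (F.map swapEmb) i = colSum F i := by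
  rw [rowSum, colSum, Finset.filter_map, Finset.card_map]
  congr 1

lemma colSum_swap (F : Finset (ℤ × ℤ)) (j : ℤ) : colSum (F.map swapEmb) j = rowSum F j := by
  rw [colSum, rowSum, Finset.filter_map, Finset.card_map]
  congr 1

lemma lineError_swap (F G : Finset (ℤ × ℤ)) :
    lineError (F.map swapEmb) (G.map swapEmb) = lineError F G := by
  have h1 : (∑ᶠ i : ℤ, |(rowSum (F.map swapEmb) i : ℤ) - (rowSum (G.map swapEmb) i : ℤ)|)
      = ∑ᶠ i : ℤ, |(colSum F i : ℤ) - (colSum G i : ℤ)| :=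
    finsum_congr (fun i => by rw [rowSum_swap, rowSum_swap])
  have h2 : (∑ᶠ j : ℤ, |(colSum (F.map swapEmb) j : ℤ) - (colSum (G.map swapEmb) j : ℤ)|)
      = ∑ᶠ j : ℤ, |(rowSum F j : ℤ) - (rowSum G j : ℤ)| :=
    finsum_congr (fun j => by rw [colSum_swap, colSum_swap])
  rw [lineError, lineError, h1, h2]
  exact add_comm _ _


theorem consecutive_line_sums_close
    (a : ℤ) (ha : 1 ≤ a)
    (r : ℤ → ℤ)
    (hrpos : ∀ i, 1 ≤ i → i ≤ a → 0 < r i)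
    (hrmono : ∀ i, 1 ≤ i → i + 1 ≤ a → r (i + 1) ≤ r i)
    (F1 F2 : Finset (ℤ × ℤ))
    -- `F1` has triangular shape: `F1 = {(i,j) : 1 ≤ i ≤ a, 1 ≤ j ≤ r i}`
    (hF1 : ∀ p : ℤ × ℤ, p ∈ F1 ↔ 1 ≤ p.1 ∧ p.1 ≤ a ∧ 1 ≤ p.2 ∧ p.2 ≤ r p.1)
    (hcard : F1.card = F2.card)
    (α : ℕ) (hα : 0 < α)
    (herr : lineError F1 F2 = 2 * α)
    -- every nonempty row of `F1` contains a point of `F1 △ F2`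
    (hrows : ∀ i : ℤ, (∃ p ∈ F1, p.1 = i) → ∃ q ∈ (F1 \ F2) ∪ (F2 \ F1), q.1 = i)
    -- every nonempty column of `F1` contains a point of `F1 △ F2`
    (hcols : ∀ j : ℤ, (∃ p ∈ F1, p.2 = j) → ∃ q ∈ (F1 \ F2) ∪ (F2 \ F1), q.2 = j) :
    -- row sums of consecutive rows differ by at most `α`
    (∀ i, 1 ≤ i → i ≤ a - 1 → r i - r (i + 1) ≤ α) ∧
    -- column sums of consecutive nonempty columns differ by at most `α`
    (∀ j, 1 ≤ j → j + 1 ≤ r 1 → (colSum F1 j : ℤ) - (colSum F1 (j + 1) : ℤ) ≤ α) := by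
  classical
  have mono : ∀ i₁ i₂ : ℤ, 1 ≤ i₁ → i₁ ≤ i₂ → i₂ ≤ a → r i₂ ≤ r i₁ := by
    intro i₁ i₂ h1' h2' h3'
    have key : ∀ n : ℤ, i₁ ≤ n → (n ≤ a → r n ≤ r i₁) := by
      intro n hn
      refine Int.le_induction (motive := fun n _ => n ≤ a → r n ≤ r i₁) ?_ ?_ n hn
      · intro _; exact le_refl _
      · intro m hm ih hma
        have hmm := hrmono m (by omega) (by omega)
        have := ih (by omega)
        omega
    exact key i₂ h2' h3'
  constructor
  · -- rows part
    intro i hi1 hia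
    have hcore := core F1 F2 i (r (i+1)) (r i) hi1
      (by have := hrpos (i+1) (by omega) (by omega); omega)
      (hrmono i hi1 (by omega))
      (fun p hp => ((hF1 p).1 hp).1)
      (fun p hp => ((hF1 p).1 hp).2.2.1)
      (fun p hp hpk => by
        obtain ⟨q1, q2, q3, q4⟩ := (hF1 p).1 hp
        have := mono (i+1) p.1 (by omega) (by omega) q2
        omega)
      (fun x y hx1 hxk hy1 hyR => by
        rw [hF1]
        have := mono x i hx1 hxk (by omega)
        exact ⟨hx1, by omega, hy1, by simpa using le_trans hyR this⟩)
      (fun jv hjv1 hjv2 => hcols jv ⟨(i, jv), (hF1 (i, jv)).2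
        ⟨by show (1:ℤ) ≤ i; omega, by show i ≤ a; omega,
         by show (1:ℤ) ≤ jv; have := hrpos (i+1) (by omega) (by omega); omega,
         by show jv ≤ r i; omega⟩, rfl⟩)
    rw [herr] at hcore
    omega
  · -- columns part
    intro j hj1 hjr
    -- basic facts about columns of the staircase F1
    have colbound : ∀ y jj : ℤ, 1 ≤ y → 1 ≤ jj → (y, jj) ∉ F1 → (colSum F1 jj : ℤ) ≤ y - 1 := by
      intro y jj hy hjj hnot
      have hinj : ∀ p ∈ F1.filter (fun p => p.2 = jj), p.1 ∈ Icc (1:ℤ) (y-1) := by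
        intro p hp
        rw [mem_filter] at hp
        obtain ⟨q1, q2, q3, q4⟩ := (hF1 p).1 hp.1
        rw [mem_Icc]
        refine ⟨q1, ?_⟩
        by_contra h'
        apply hnot
        rw [hF1]
        have hle := mono y p.1 hy (by omega) q2
        have hpj : p.2 = jj := hp.2
        exact ⟨by show (1:ℤ) ≤ y; omega, by show y ≤ a; omega,
          by show (1:ℤ) ≤ jj; omega, by show jj ≤ r y; omega⟩
      have hcard' := card_le_card_of_injOn Prod.fst hinj (fun p hp q hq hpq => by
        rw [mem_coe, mem_filter] at hp hq
        exact Prod.ext hpq (hp.2.trans hq.2.symm))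
      rw [Int.card_Icc] at hcard'
      rw [colSum]
      omega
    have colmem : ∀ y jj : ℤ, 1 ≤ y → 1 ≤ jj → (y ≤ (colSum F1 jj : ℤ)) → (y, jj) ∈ F1 := by
      intro y jj hy hjj hyc
      by_contra hnot
      have := colbound y jj hy hjj hnot
      omega
    have hc'pos : 1 ≤ colSum F1 (j+1) := by
      rw [colSum]
      apply card_pos.2
      exact ⟨(1, j+1), mem_filter.2 ⟨(hF1 (1, j+1)).2 ⟨le_refl _, ha, by omega, hjr⟩, rfl⟩⟩
    have hcmono : colSum F1 (j+1) ≤ colSum F1 j := by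
      apply card_le_card_of_injOn (fun p => (p.1, j))
      · intro p hp
        rw [mem_coe, mem_filter] at hp
        obtain ⟨q1, q2, q3, q4⟩ := (hF1 p).1 hp.1
        rw [mem_coe, mem_filter]
        refine ⟨(hF1 (p.1, j)).2 ⟨q1, q2, hj1, ?_⟩, rfl⟩
        show j ≤ r p.1
        have hpj : p.2 = j + 1 := hp.2
        omega
      · intro p hp q hq hpq
        rw [mem_coe, mem_filter] at hp hq
        simp only [Prod.mk.injEq] at hpq
        exact Prod.ext hpq.1 (hp.2.trans hq.2.symm)
    have hcore := core (F1.map swapEmb) (F2.map swapEmb) j (colSum F1 (j+1)) (colSum F1 j)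
      hj1 (by exact_mod_cast hc'pos) (by exact_mod_cast hcmono)
      (fun p' hp' => by
        obtain ⟨p, hp, rfl⟩ := Finset.mem_map.1 hp'
        exact ((hF1 p).1 hp).2.2.1)
      (fun p' hp' => by
        obtain ⟨p, hp, rfl⟩ := Finset.mem_map.1 hp'
        exact ((hF1 p).1 hp).1)
      (fun p' hp' hgt => by
        obtain ⟨p, hp, rfl⟩ := Finset.mem_map.1 hp'
        -- p.2 > j; show p.1 ≤ colSum F1 (j+1)
        obtain ⟨q1, q2, q3, q4⟩ := (hF1 p).1 hp
        show p.1 ≤ (colSum F1 (j+1) : ℤ)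
        have hinj : ∀ x ∈ Icc (1:ℤ) p.1, (x, j+1) ∈ F1.filter (fun q => q.2 = j+1) := by
          intro x hx
          rw [mem_Icc] at hx
          have hle := mono x p.1 hx.1 hx.2 q2
          refine mem_filter.2 ⟨(hF1 (x, j+1)).2 ⟨hx.1, by show x ≤ a; omega,
            by show (1:ℤ) ≤ j + 1; omega, ?_⟩, rfl⟩
          show j + 1 ≤ r x
          have hgt' : j < p.2 := hgt
          omega
        have hcard' := card_le_card_of_injOn (fun x => ((x, j+1) : ℤ × ℤ))
          (fun x hx => hinj x hx)
          (fun x _ y _ hxy => by simpa using congrArg Prod.fst hxy)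
        rw [Int.card_Icc] at hcard'
        rw [colSum]
        omega)
      (fun x y hx1 hxj hy1 hyc => by
        have hyj : (y, j) ∈ F1 := colmem y j hy1 hj1 hyc
        obtain ⟨q1, q2, q3, q4⟩ := (hF1 (y, j)).1 hyj
        have : (y, x) ∈ F1 := (hF1 (y, x)).2 ⟨q1, q2, hx1, by
          show x ≤ r y
          have q4' : j ≤ r y := q4
          omega⟩
        rw [show ((x, y) : ℤ × ℤ) = swapEmb (y, x) from rfl]
        exact Finset.mem_map_of_mem _ this)
      (fun y hy1 hy2 => by
        have hyj : (y, j) ∈ F1 := colmem y j (by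
          have hcc : (1:ℤ) ≤ (colSum F1 (j+1) : ℤ) := by exact_mod_cast hc'pos
          omega) hj1 hy2
        obtain ⟨q, hq, hqy⟩ := hrows y ⟨(y, j), hyj, rfl⟩
        refine ⟨swapEmb q, ?_, by simpa [swapEmb] using hqy⟩
        rcases mem_union.1 hq with h | h
        · apply mem_union_left
          rw [mem_sdiff] at h ⊢
          exact ⟨Finset.mem_map_of_mem _ h.1, fun hc => h.2 (by
            obtain ⟨q', hq', heq⟩ := Finset.mem_map.1 hc
            rwa [swapEmb.injective heq] at hq')⟩
        · apply mem_union_right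
          rw [mem_sdiff] at h ⊢
          exact ⟨Finset.mem_map_of_mem _ h.1, fun hc => h.2 (by
            obtain ⟨q', hq', heq⟩ := Finset.mem_map.1 hc
            rwa [swapEmb.injective heq] at hq')⟩)
    rw [lineError_swap, herr] at hcore
    omega
end

section
/- Let F1 and F2 be finite subsets of ℤ² such that F1 is uniquely determined by its row and column sums, |F1| = |F2|, and the error in the line sums equals 2α for a positive integer α. Let p = |F1 ∩ F2|. Then |F1| ≤ p + (α+1)(α − 1/2) + (α+1)·√(2p + (2α−1)²/4). -/
namespace AlpersAux

abbrev Pt := ℤ × ℤ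




lemma card_eq_of_inv {X : Type*} [DecidableEq X] (s t : Finset X) (f : X → X)
    (hst : ∀ x ∈ s, f x ∈ t) (hts : ∀ x ∈ t, f x ∈ s) (hinv : ∀ x, f (f x) = x) :
    s.card = t.card :=
  Finset.card_bij' (fun a _ => f a) (fun a _ => f a) (fun a ha => hst a ha)
    (fun a ha => hts a ha) (fun a _ => hinv a) (fun a _ => hinv a)

variable {X : Type*} [DecidableEq X]

lemma exists_pairing_le (s t : Finset X) (hd : Disjoint s t) (hst : s.card ≤ t.card) :
    ∃ f : X → X, (∀ x, f (f x) = x) ∧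
      (∀ x, f x ≠ x → (x ∈ s ∧ f x ∈ t) ∨ (x ∈ t ∧ f x ∈ s)) ∧
      (∀ x ∈ s, f x ≠ x) ∧
      ((t.filter fun x => f x = x).card = t.card - s.card) := by
  obtain ⟨u, hut, hucard⟩ := Finset.exists_subset_card_eq hst
  have hsu : Disjoint s u := hd.mono_right hut
  have e : {x // x ∈ s} ≃ {x // x ∈ u} := Finset.equivOfCardEq hucard.symm
  classical
  refine ⟨fun x => if hx : x ∈ s then (e ⟨x, hx⟩ : X) else if hx : x ∈ u then (e.symm ⟨x, hx⟩ : X) else x, ?_, ?_, ?_, ?_⟩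
  · intro x
    by_cases hx : x ∈ s
    · simp only [dif_pos hx]
      have h1 : (e ⟨x, hx⟩ : X) ∈ u := (e ⟨x, hx⟩).2
      have h2 : (e ⟨x, hx⟩ : X) ∉ s := fun h => hsu.forall_ne_finset h h1 rfl
      simp only [dif_neg h2, dif_pos h1]
      have : e.symm ⟨(e ⟨x, hx⟩ : X), h1⟩ = ⟨x, hx⟩ := e.symm_apply_apply ⟨x, hx⟩
      rw [this]
    · by_cases hx' : x ∈ u
      · simp only [dif_neg hx, dif_pos hx']
        have h1 : (e.symm ⟨x, hx'⟩ : X) ∈ s := (e.symm ⟨x, hx'⟩).2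
        simp only [dif_pos h1]
        have : e ⟨(e.symm ⟨x, hx'⟩ : X), h1⟩ = ⟨x, hx'⟩ := e.apply_symm_apply ⟨x, hx'⟩
        rw [this]
      · simp only [dif_neg hx, dif_neg hx']
  · intro x hfx
    by_cases hx : x ∈ s
    · left
      refine ⟨hx, ?_⟩
      simp only [dif_pos hx]
      exact hut (e ⟨x, hx⟩).2
    · by_cases hx' : x ∈ u
      · right
        exact ⟨hut hx', by simp only [dif_neg hx, dif_pos hx']; exact (e.symm ⟨x, hx'⟩).2⟩
      · exfalso; apply hfx; simp only [dif_neg hx, dif_neg hx']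
  · intro x hx
    simp only [dif_pos hx]
    intro h
    have h1 : (e ⟨x, hx⟩ : X) ∈ u := (e ⟨x, hx⟩).2
    rw [h] at h1
    exact hsu.forall_ne_finset hx h1 rfl
  · have : t.filter (fun x => (if hx : x ∈ s then (e ⟨x, hx⟩ : X) else if hx : x ∈ u then (e.symm ⟨x, hx⟩ : X) else x) = x) = t \ u := by
      ext x
      simp only [Finset.mem_filter, Finset.mem_sdiff]
      constructor
      · rintro ⟨hxt, hfix⟩
        refine ⟨hxt, fun hxu => ?_⟩
        have hxs : x ∉ s := fun h => hd.forall_ne_finset h hxt rfl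
        simp only [dif_neg hxs, dif_pos hxu] at hfix
        have h1 : (e.symm ⟨x, hxu⟩ : X) ∈ s := (e.symm ⟨x, hxu⟩).2
        rw [hfix] at h1
        exact hxs h1
      · rintro ⟨hxt, hxu⟩
        have hxs : x ∉ s := fun h => hd.forall_ne_finset h hxt rfl
        exact ⟨hxt, by simp only [dif_neg hxs, dif_neg hxu]⟩
    rw [this, Finset.card_sdiff_of_subset hut, hucard]

lemma exists_pairing (s t : Finset X) (hd : Disjoint s t) :
    ∃ f : X → X, (∀ x, f (f x) = x) ∧
      (∀ x, f x ≠ x → (x ∈ s ∧ f x ∈ t) ∨ (x ∈ t ∧ f x ∈ s)) ∧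
      ((s.filter fun x => f x = x).card = s.card - t.card) ∧
      ((t.filter fun x => f x = x).card = t.card - s.card) := by
  rcases le_total s.card t.card with h | h
  · obtain ⟨f, h1, h2, h3, h4⟩ := exists_pairing_le s t hd h
    refine ⟨f, h1, h2, ?_, h4⟩
    rw [Nat.sub_eq_zero_of_le h, Finset.card_eq_zero, Finset.filter_eq_empty_iff]
    exact fun x hx => h3 x hx
  · obtain ⟨f, h1, h2, h3, h4⟩ := exists_pairing_le t s hd.symm h
    refine ⟨f, h1, fun x hx => (h2 x hx).symm, h4, ?_⟩
    rw [Nat.sub_eq_zero_of_le h, Finset.card_eq_zero, Finset.filter_eq_empty_iff]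
    exact fun x hx => h3 x hx

/-- Global partial-matching involution along the fibers of `proj`. -/
lemma exists_lineInv (A B : Finset Pt) (hdisj : Disjoint A B) (proj : Pt → ℤ) :
    ∃ f : Pt → Pt, (∀ x, f (f x) = x) ∧
      (∀ x, f x ≠ x → ((x ∈ A ∧ f x ∈ B) ∨ (x ∈ B ∧ f x ∈ A)) ∧ proj (f x) = proj x) ∧
      (∀ i, ((A.filter fun p => proj p = i).filter fun p => f p = p).card
          = (A.filter fun p => proj p = i).card - (B.filter fun p => proj p = i).card) ∧
      (∀ i, ((B.filter fun p => proj p = i).filter fun p => f p = p).card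
          = (B.filter fun p => proj p = i).card - (A.filter fun p => proj p = i).card) := by
  classical
  have hd : ∀ i : ℤ, Disjoint (A.filter fun p => proj p = i) (B.filter fun p => proj p = i) :=
    fun i => hdisj.mono (Finset.filter_subset _ _) (Finset.filter_subset _ _)
  choose F h1 h2 h3 h4 using fun i : ℤ =>
    exists_pairing (A.filter fun p => proj p = i) (B.filter fun p => proj p = i) (hd i)
  refine ⟨fun x => F (proj x) x, ?_, ?_, ?_, ?_⟩
  · intro x
    show F (proj (F (proj x) x)) (F (proj x) x) = x
    by_cases hm : F (proj x) x = x
    · rw [hm, hm]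
    · have := h2 (proj x) x hm
      have hproj : proj (F (proj x) x) = proj x := by
        rcases this with ⟨_, hmem⟩ | ⟨_, hmem⟩ <;>
          exact (Finset.mem_filter.1 hmem).2
      rw [hproj]
      exact h1 (proj x) x
  · intro x hm
    show (x ∈ A ∧ F (proj x) x ∈ B ∨ x ∈ B ∧ F (proj x) x ∈ A) ∧ proj (F (proj x) x) = proj x
    have := h2 (proj x) x hm
    have hproj : proj (F (proj x) x) = proj x := by
      rcases this with ⟨_, hmem⟩ | ⟨_, hmem⟩ <;>
        exact (Finset.mem_filter.1 hmem).2
    refine ⟨?_, hproj⟩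
    rcases this with ⟨ha, hb⟩ | ⟨ha, hb⟩
    · exact Or.inl ⟨(Finset.mem_filter.1 ha).1, (Finset.mem_filter.1 hb).1⟩
    · exact Or.inr ⟨(Finset.mem_filter.1 ha).1, (Finset.mem_filter.1 hb).1⟩
  · intro i
    show ((A.filter fun p => proj p = i).filter (fun p => F (proj p) p = p)).card
        = (A.filter fun p => proj p = i).card - (B.filter fun p => proj p = i).card
    have heq : (A.filter fun p => proj p = i).filter (fun p => F (proj p) p = p)
        = (A.filter fun p => proj p = i).filter (fun p => F i p = p) := by
      apply Finset.filter_congr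
      intro p hp
      have : proj p = i := (Finset.mem_filter.1 hp).2
      rw [this]
    rw [heq]
    exact h3 i
  · intro i
    show ((B.filter fun p => proj p = i).filter (fun p => F (proj p) p = p)).card
        = (B.filter fun p => proj p = i).card - (A.filter fun p => proj p = i).card
    have heq : (B.filter fun p => proj p = i).filter (fun p => F (proj p) p = p)
        = (B.filter fun p => proj p = i).filter (fun p => F i p = p) := by
      apply Finset.filter_congr
      intro p hp
      have : proj p = i := (Finset.mem_filter.1 hp).2
      rw [this]
    rw [heq]
    exact h4 i



section Drop

variable (A B S : Finset Pt) (f : Pt → Pt) (proj : Pt → ℤ)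

/-- Per-line accounting when removing a closed-under-`f` set `S`. -/
lemma line_drop (hdisj : Disjoint A B)
    (hfinv : ∀ x, f (f x) = x)
    (hfmove : ∀ x, f x ≠ x → ((x ∈ A ∧ f x ∈ B) ∨ (x ∈ B ∧ f x ∈ A)) ∧ proj (f x) = proj x)
    (hfixA : ∀ i, ((A.filter fun p => proj p = i).filter fun p => f p = p).card
        = (A.filter fun p => proj p = i).card - (B.filter fun p => proj p = i).card)
    (hfixB : ∀ i, ((B.filter fun p => proj p = i).filter fun p => f p = p).card
        = (B.filter fun p => proj p = i).card - (A.filter fun p => proj p = i).card)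
    (hSclosed : ∀ x ∈ S, f x = x ∨ f x ∈ S) (i : ℤ) :
    ((((A \ S).filter fun p => proj p = i).card : ℤ)
        - (((B \ S).filter fun p => proj p = i)).card).natAbs
      + (((S ∩ A).filter fun p => proj p = i).filter fun p => f p = p).card
      + (((S ∩ B).filter fun p => proj p = i).filter fun p => f p = p).card
    ≤ (((A.filter fun p => proj p = i).card : ℤ)
        - ((B.filter fun p => proj p = i)).card).natAbs := by
  classical
  set Ai := A.filter fun p => proj p = i with hAi
  set Bi := B.filter fun p => proj p = i with hBi
  set SAi := (S ∩ A).filter fun p => proj p = i with hSAi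
  set SBi := (S ∩ B).filter fun p => proj p = i with hSBi
  -- moving parts are in bijection
  have hbij : (SAi.filter fun p => ¬ f p = p).card = (SBi.filter fun p => ¬ f p = p).card := by
    apply card_eq_of_inv _ _ f _ _ hfinv
    · intro x hx
      simp only [hSAi, Finset.mem_filter, Finset.mem_inter] at hx
      obtain ⟨⟨⟨hxS, hxA⟩, hxproj⟩, hxm⟩ := hx
      have hm := hfmove x hxm
      have hfB : f x ∈ B := by
        rcases hm.1 with ⟨_, h⟩ | ⟨hxB, _⟩
        · exact h
        · exact absurd hxA (Finset.disjoint_right.1 hdisj hxB)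
      have hfS : f x ∈ S := by
        rcases hSclosed x hxS with h | h
        · exact absurd h hxm
        · exact h
      simp only [hSBi, Finset.mem_filter, Finset.mem_inter]
      refine ⟨⟨⟨hfS, hfB⟩, by rw [hm.2, hxproj]⟩, ?_⟩
      intro hcon
      rw [hfinv x] at hcon
      exact hxm hcon.symm
    · intro x hx
      simp only [hSBi, Finset.mem_filter, Finset.mem_inter] at hx
      obtain ⟨⟨⟨hxS, hxB⟩, hxproj⟩, hxm⟩ := hx
      have hm := hfmove x hxm
      have hfA : f x ∈ A := by
        rcases hm.1 with ⟨hxA, _⟩ | ⟨_, h⟩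
        · exact absurd hxB (Finset.disjoint_left.1 hdisj hxA)
        · exact h
      have hfS : f x ∈ S := by
        rcases hSclosed x hxS with h | h
        · exact absurd h hxm
        · exact h
      simp only [hSAi, Finset.mem_filter, Finset.mem_inter]
      refine ⟨⟨⟨hfS, hfA⟩, by rw [hm.2, hxproj]⟩, ?_⟩
      intro hcon
      rw [hfinv x] at hcon
      exact hxm hcon.symm
  have hsplitA : (SAi.filter fun p => f p = p).card + (SAi.filter fun p => ¬ f p = p).card
      = SAi.card := Finset.card_filter_add_card_filter_not _
  have hsplitB : (SBi.filter fun p => f p = p).card + (SBi.filter fun p => ¬ f p = p).card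
      = SBi.card := Finset.card_filter_add_card_filter_not _
  -- fixed points of S are among all fixed points
  have hsubA : (SAi.filter fun p => f p = p) ⊆ (Ai.filter fun p => f p = p) := by
    intro x hx
    simp only [hSAi, hAi, Finset.mem_filter, Finset.mem_inter] at hx ⊢
    exact ⟨⟨hx.1.1.2, hx.1.2⟩, hx.2⟩
  have hsubB : (SBi.filter fun p => f p = p) ⊆ (Bi.filter fun p => f p = p) := by
    intro x hx
    simp only [hSBi, hBi, Finset.mem_filter, Finset.mem_inter] at hx ⊢
    exact ⟨⟨hx.1.1.2, hx.1.2⟩, hx.2⟩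
  have hfa := (Finset.card_le_card hsubA).trans_eq (hfixA i)
  have hfb := (Finset.card_le_card hsubB).trans_eq (hfixB i)
  -- removal counts
  have hremA : ((A \ S).filter fun p => proj p = i) = Ai \ SAi := by
    ext x
    simp only [hAi, hSAi, Finset.mem_filter, Finset.mem_sdiff, Finset.mem_inter]
    tauto
  have hremB : ((B \ S).filter fun p => proj p = i) = Bi \ SBi := by
    ext x
    simp only [hBi, hSBi, Finset.mem_filter, Finset.mem_sdiff, Finset.mem_inter]
    tauto
  have hsubSA : SAi ⊆ Ai := by
    intro x hx
    simp only [hSAi, hAi, Finset.mem_filter, Finset.mem_inter] at hx ⊢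
    exact ⟨hx.1.2, hx.2⟩
  have hsubSB : SBi ⊆ Bi := by
    intro x hx
    simp only [hSBi, hBi, Finset.mem_filter, Finset.mem_inter] at hx ⊢
    exact ⟨hx.1.2, hx.2⟩
  rw [hremA, hremB, Finset.card_sdiff_of_subset hsubSA, Finset.card_sdiff_of_subset hsubSB]
  have h1 := Finset.card_le_card hsubSA
  have h2 := Finset.card_le_card hsubSB
  simp only [← hAi, ← hBi] at hfa hfb
  omega

end Drop



noncomputable def Dproj (A B : Finset Pt) (proj : Pt → ℤ) : ℕ :=
  ∑ i ∈ (A ∪ B).image proj,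
    (((A.filter fun p => proj p = i).card : ℤ) - (B.filter fun p => proj p = i).card).natAbs

lemma Dproj_superset (A B : Finset Pt) (proj : Pt → ℤ) (R : Finset ℤ)
    (hR : (A ∪ B).image proj ⊆ R) :
    Dproj A B proj = ∑ i ∈ R,
      (((A.filter fun p => proj p = i).card : ℤ) - (B.filter fun p => proj p = i).card).natAbs := by
  apply Finset.sum_subset hR
  intro i _ hi
  have hA : A.filter (fun p => proj p = i) = ∅ := by
    rw [Finset.filter_eq_empty_iff]
    intro p hp hproj
    exact hi (Finset.mem_image.2 ⟨p, Finset.mem_union_left _ hp, hproj⟩)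
  have hB : B.filter (fun p => proj p = i) = ∅ := by
    rw [Finset.filter_eq_empty_iff]
    intro p hp hproj
    exact hi (Finset.mem_image.2 ⟨p, Finset.mem_union_right _ hp, hproj⟩)
  rw [hA, hB]
  simp

lemma Dproj_drop (A B S : Finset Pt) (f : Pt → Pt) (proj : Pt → ℤ)
    (hdisj : Disjoint A B)
    (hfinv : ∀ x, f (f x) = x)
    (hfmove : ∀ x, f x ≠ x → ((x ∈ A ∧ f x ∈ B) ∨ (x ∈ B ∧ f x ∈ A)) ∧ proj (f x) = proj x)
    (hfixA : ∀ i, ((A.filter fun p => proj p = i).filter fun p => f p = p).card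
        = (A.filter fun p => proj p = i).card - (B.filter fun p => proj p = i).card)
    (hfixB : ∀ i, ((B.filter fun p => proj p = i).filter fun p => f p = p).card
        = (B.filter fun p => proj p = i).card - (A.filter fun p => proj p = i).card)
    (hSclosed : ∀ x ∈ S, f x = x ∨ f x ∈ S) (hSsub : S ⊆ A ∪ B) :
    Dproj (A \ S) (B \ S) proj + ((S ∩ A).filter fun p => f p = p).card
      + ((S ∩ B).filter fun p => f p = p).card ≤ Dproj A B proj := by
  classical
  set R := (A ∪ B).image proj with hRdef
  have hR' : ((A \ S) ∪ (B \ S)).image proj ⊆ R := by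
    apply Finset.image_subset_image
    intro x hx
    rcases Finset.mem_union.1 hx with h | h
    · exact Finset.mem_union_left _ (Finset.mem_sdiff.1 h).1
    · exact Finset.mem_union_right _ (Finset.mem_sdiff.1 h).1
  rw [Dproj_superset (A \ S) (B \ S) proj R hR']
  have hfibA : ((S ∩ A).filter fun p => f p = p).card
      = ∑ i ∈ R, (((S ∩ A).filter fun p => proj p = i).filter fun p => f p = p).card := by
    rw [Finset.card_eq_sum_card_fiberwise
      (f := proj) (t := R) (fun x hx => by
        have hxS : x ∈ S := (Finset.mem_inter.1 (Finset.mem_filter.1 hx).1).1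
        exact Finset.mem_image.2 ⟨x, hSsub hxS, rfl⟩)]
    congr 1
    ext i
    rw [Finset.filter_comm]
  have hfibB : ((S ∩ B).filter fun p => f p = p).card
      = ∑ i ∈ R, (((S ∩ B).filter fun p => proj p = i).filter fun p => f p = p).card := by
    rw [Finset.card_eq_sum_card_fiberwise
      (f := proj) (t := R) (fun x hx => by
        have hxS : x ∈ S := (Finset.mem_inter.1 (Finset.mem_filter.1 hx).1).1
        exact Finset.mem_image.2 ⟨x, hSsub hxS, rfl⟩)]
    congr 1
    ext i
    rw [Finset.filter_comm]
  rw [hfibA, hfibB, Dproj, ← hRdef, ← Finset.sum_add_distrib, ← Finset.sum_add_distrib]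
  apply Finset.sum_le_sum
  intro i _
  exact line_drop A B S f proj hdisj hfinv hfmove hfixA hfixB hSclosed i



variable {Qt : Type*} [DecidableEq Qt]

/-- Core chain-counting lemma: a sequence of points of `F1` linked through outside
points (staircase pattern) forces `F1` to be large, given nestedness of fibers. -/
lemma chain_core (F1 : Finset Qt) (k1 k2 : Qt → ℤ) (mk : ℤ → ℤ → Qt)
    (hmk : ∀ p : Qt, mk (k1 p) (k2 p) = p)
    (hk1 : ∀ x y, k1 (mk x y) = x) (hk2 : ∀ x y, k2 (mk x y) = y)
    (hnest : ∀ y y', (∀ x, mk x y ∈ F1 → mk x y' ∈ F1) ∨ (∀ x, mk x y' ∈ F1 → mk x y ∈ F1))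
    (s : ℕ) (a : ℕ → Qt) (ha : ∀ u, u < s → a u ∈ F1)
    (hb : ∀ u, u + 1 < s → ∃ b, b ∉ F1 ∧ k2 b = k2 (a u) ∧ k1 b = k1 (a (u + 1))) :
    s * (s + 1) ≤ 2 * F1.card := by
  classical
  rcases Nat.eq_zero_or_pos s with hs | hs
  · simp [hs]
  set C : ℕ → Finset ℤ := fun u => (F1.filter fun p => k2 p = k2 (a u)).image k1 with hC
  -- single chain step
  have step : ∀ u, u + 1 < s → C u ⊆ C (u + 1) ∧ ¬ C (u + 1) ⊆ C u := by
    intro u hu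
    obtain ⟨b, hbF, hb2, hb1⟩ := hb u hu
    have hw1 : k1 b ∈ C (u + 1) := by
      apply Finset.mem_image.2
      exact ⟨a (u + 1), Finset.mem_filter.2 ⟨ha _ hu, rfl⟩, hb1.symm⟩
    have hw2 : k1 b ∉ C u := by
      intro hmem
      obtain ⟨p, hp, hpk⟩ := Finset.mem_image.1 hmem
      obtain ⟨hpF, hpk2⟩ := Finset.mem_filter.1 hp
      have : p = b := by
        rw [← hmk p, ← hmk b, hpk, hpk2, hb2]
      exact hbF (this ▸ hpF)
    have hsub : C u ⊆ C (u + 1) := by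
      rcases hnest (k2 (a u)) (k2 (a (u + 1))) with h | h
      · intro x hx
        obtain ⟨p, hp, hpk⟩ := Finset.mem_image.1 hx
        obtain ⟨hpF, hpk2⟩ := Finset.mem_filter.1 hp
        have hp' : mk x (k2 (a u)) ∈ F1 := by
          rw [← hpk, ← hpk2, hmk]; exact hpF
        have := h x hp'
        exact Finset.mem_image.2 ⟨mk x (k2 (a (u+1))), Finset.mem_filter.2 ⟨this, hk2 _ _⟩, hk1 _ _⟩
      · exfalso
        have h1 : mk (k1 b) (k2 (a (u + 1))) ∈ F1 := by
          rw [hb1, hmk]; exact ha _ hu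
        have := h (k1 b) h1
        rw [← hb2, hmk] at this
        exact hbF this
    exact ⟨hsub, fun h => hw2 (h hw1)⟩
  have cardlt : ∀ u, u + 1 < s → (C u).card < (C (u + 1)).card := by
    intro u hu
    obtain ⟨h1, h2⟩ := step u hu
    exact Finset.card_lt_card (Finset.ssubset_iff_subset_ne.2 ⟨h1, fun he => h2 (he ▸ le_refl _)⟩)
  have cardmono : ∀ v, v < s → ∀ u, u < v → (C u).card < (C v).card := by
    intro v
    induction v with
    | zero => intro _ u hu; omega
    | succ n ih =>
      intro hv u hu
      rcases Nat.lt_succ_iff_lt_or_eq.1 hu with h | h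
      · exact (ih (by omega) u h).trans (cardlt n hv)
      · subst h; exact cardlt u hv
  have hge : ∀ u, u < s → u + 1 ≤ (C u).card := by
    intro u hu
    induction u with
    | zero =>
      have : k1 (a 0) ∈ C 0 :=
        Finset.mem_image.2 ⟨a 0, Finset.mem_filter.2 ⟨ha 0 hs, rfl⟩, rfl⟩
      have := Finset.card_pos.2 ⟨_, this⟩
      omega
    | succ n ih =>
      have h1 := ih (by omega)
      have h2 := cardlt n hu
      omega
  -- card of C u equals fiber card
  have hCcard : ∀ u, (C u).card = (F1.filter fun p => k2 p = k2 (a u)).card := by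
    intro u
    apply Finset.card_image_of_injOn
    intro p hp q hq hpq
    obtain ⟨_, hp2⟩ := Finset.mem_filter.1 hp
    obtain ⟨_, hq2⟩ := Finset.mem_filter.1 hq
    rw [← hmk p, ← hmk q, hpq, hp2, hq2]
  -- injectivity of u ↦ k2 (a u) on range s
  have hinjY : Set.InjOn (fun u => k2 (a u)) (Finset.range s : Set ℕ) := by
    intro u hu v hv huv
    simp only [Finset.coe_range, Set.mem_Iio] at hu hv
    by_contra hne
    have huv' : k2 (a u) = k2 (a v) := huv
    have hCuv : C u = C v := by simp only [hC]; rw [huv']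
    rcases Nat.lt_or_ge u v with h | h
    · have := cardmono v hv u h
      rw [hCuv] at this; omega
    · have h' : v < u := by omega
      have := cardmono u hu v h'
      rw [hCuv] at this; omega
  have hsum1 : ∑ u ∈ Finset.range s, (F1.filter fun p => k2 p = k2 (a u)).card ≤ F1.card := by
    rw [← Finset.sum_image (f := fun y => (F1.filter fun p => k2 p = y).card)
      (g := fun u => k2 (a u)) (fun u hu v hv h => hinjY (by simpa using hu) (by simpa using hv) h)]
    have hsub : (Finset.range s).image (fun u => k2 (a u)) ⊆ F1.image k2 := by
      intro y hy
      obtain ⟨u, hu, rfl⟩ := Finset.mem_image.1 hy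
      exact Finset.mem_image.2 ⟨a u, ha u (Finset.mem_range.1 hu), rfl⟩
    calc ∑ y ∈ (Finset.range s).image (fun u => k2 (a u)), (F1.filter fun p => k2 p = y).card
        ≤ ∑ y ∈ F1.image k2, (F1.filter fun p => k2 p = y).card :=
          Finset.sum_le_sum_of_subset hsub
      _ = F1.card := (Finset.card_eq_sum_card_fiberwise (fun p hp => Finset.mem_image_of_mem k2 hp)).symm
  have hsum2 : ∑ u ∈ Finset.range s, (u + 1) ≤
      ∑ u ∈ Finset.range s, (F1.filter fun p => k2 p = k2 (a u)).card := by
    apply Finset.sum_le_sum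
    intro u hu
    rw [← hCcard]
    exact hge u (Finset.mem_range.1 hu)
  have hgauss : (∑ u ∈ Finset.range s, (u + 1)) * 2 = s * (s + 1) := by
    have h1 : ∑ i ∈ Finset.range (s + 1), i = (∑ u ∈ Finset.range s, (u + 1)) + 0 :=
      Finset.sum_range_succ' id s
    have h2 := Finset.sum_range_id_mul_two (s + 1)
    simp only [add_zero] at h1
    rw [h1, Nat.add_sub_cancel] at h2
    rw [h2]
    ring
  have := hsum2.trans hsum1
  omega




def wdir (d0 : Bool) (t : ℕ) : Bool := if t % 2 = 0 then d0 else !d0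

def walk (σ : Bool → Pt → Pt) (d0 : Bool) (x0 : Pt) : ℕ → Pt
  | 0 => x0
  | t + 1 => σ (wdir d0 t) (walk σ d0 x0 t)

lemma wdir_succ (d0 : Bool) (t : ℕ) : wdir d0 (t + 1) = !(wdir d0 t) := by
  rcases Nat.mod_two_eq_zero_or_one t with h | h <;>
    simp [wdir, h, Nat.add_mod, Bool.not_not]

lemma wdir_eq_of_parity (d0 : Bool) {t u : ℕ} (h : t % 2 = u % 2) :
    wdir d0 t = wdir d0 u := by
  unfold wdir; rw [h]

variable {σ : Bool → Pt → Pt} {d0 : Bool} {x0 : Pt}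
variable (hinv : ∀ b x, σ b (σ b x) = x)

include hinv in
lemma walk_pred (t : ℕ) :
    σ (wdir d0 t) (walk σ d0 x0 (t + 1)) = walk σ d0 x0 t := by
  simp [walk, hinv]

include hinv in
lemma walk_inj (hend : σ (!d0) x0 = x0) :
    ∀ j, (∀ t, t < j → walk σ d0 x0 (t + 1) ≠ walk σ d0 x0 t) →
      ∀ i, i < j → walk σ d0 x0 i ≠ walk σ d0 x0 j := by
  intro j
  induction j using Nat.strong_induction_on with
  | _ j IH =>
    intro hns i hij heq
    have hj1 : 1 ≤ j := by omega
    have hjeq : j - 1 + 1 = j := by omega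
    by_cases hpar : i % 2 = j % 2
    · rcases Nat.eq_zero_or_pos i with hi | hi
      · subst hi
        have hj2 : 2 ≤ j := by omega
        have hw : wdir d0 (j - 1) = !d0 := by
          unfold wdir
          have : (j - 1) % 2 = 1 := by omega
          simp [this]
        have hpred : σ (wdir d0 (j - 1)) (walk σ d0 x0 j) = walk σ d0 x0 (j - 1) := by
          conv_lhs => rw [← hjeq]
          exact walk_pred hinv (j - 1)
        rw [← heq] at hpred
        have hg0 : walk σ d0 x0 0 = x0 := rfl
        rw [hg0, hw, hend] at hpred
        -- hpred : x0 = walk (j-1)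
        apply hns (j - 1) (by omega)
        rw [hjeq, ← heq, hg0, ← hpred]
      · have hieq : i - 1 + 1 = i := by omega
        have hw : wdir d0 (i - 1) = wdir d0 (j - 1) := by
          apply wdir_eq_of_parity; omega
        have hpi : σ (wdir d0 (i - 1)) (walk σ d0 x0 i) = walk σ d0 x0 (i - 1) := by
          conv_lhs => rw [← hieq]
          exact walk_pred hinv (i - 1)
        have hpj : σ (wdir d0 (j - 1)) (walk σ d0 x0 j) = walk σ d0 x0 (j - 1) := by
          conv_lhs => rw [← hjeq]
          exact walk_pred hinv (j - 1)
        rw [← heq, ← hw] at hpj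
        rw [hpi] at hpj
        exact IH (j - 1) (by omega) (fun t ht => hns t (by omega)) (i - 1) (by omega) hpj
    · have hw : wdir d0 i = wdir d0 (j - 1) := by
        apply wdir_eq_of_parity; omega
      have hstep : walk σ d0 x0 (i + 1) = σ (wdir d0 i) (walk σ d0 x0 i) := rfl
      have hpj : σ (wdir d0 (j - 1)) (walk σ d0 x0 j) = walk σ d0 x0 (j - 1) := by
        conv_lhs => rw [← hjeq]
        exact walk_pred hinv (j - 1)
      have hkey : walk σ d0 x0 (i + 1) = walk σ d0 x0 (j - 1) := by
        rw [hstep, heq, hw, hpj]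
      rcases Nat.lt_trichotomy (i + 1) (j - 1) with h | h | h
      · exact IH (j - 1) (by omega) (fun t ht => hns t (by omega)) (i + 1) h hkey
      · exfalso; apply hpar; omega
      · have hii : j - 1 = i := by omega
        apply hns i (by omega)
        rw [hkey, hii]

variable {A B : Finset Pt}
variable (hmove : ∀ b x, σ b x ≠ x → (x ∈ A ∧ σ b x ∈ B) ∨ (x ∈ B ∧ σ b x ∈ A))

include hmove in
lemma walk_mem (hx0 : x0 ∈ A ∪ B) :
    ∀ t, (∀ u, u < t → walk σ d0 x0 (u + 1) ≠ walk σ d0 x0 u) → walk σ d0 x0 t ∈ A ∪ B := by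
  intro t ht
  cases t with
  | zero => exact hx0
  | succ u =>
    have h := ht u (by omega)
    have hstep : walk σ d0 x0 (u + 1) = σ (wdir d0 u) (walk σ d0 x0 u) := rfl
    rw [hstep] at h ⊢
    rcases hmove _ _ h with ⟨_, hb⟩ | ⟨_, hb⟩
    · exact Finset.mem_union_right _ hb
    · exact Finset.mem_union_left _ hb

include hinv hmove in
lemma exists_stuck (hend : σ (!d0) x0 = x0) (hx0 : x0 ∈ A ∪ B) :
    ∃ N, N ≤ (A ∪ B).card ∧ (∀ t, t < N → walk σ d0 x0 (t + 1) ≠ walk σ d0 x0 t) ∧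
      walk σ d0 x0 (N + 1) = walk σ d0 x0 N := by
  classical
  set K := (A ∪ B).card with hK
  have hex : ∃ N, walk σ d0 x0 (N + 1) = walk σ d0 x0 N := by
    by_contra h
    push_neg at h
    have hns : ∀ j, ∀ t, t < j → walk σ d0 x0 (t + 1) ≠ walk σ d0 x0 t := fun j t _ => h t
    have hinjOn : Set.InjOn (walk σ d0 x0) (Finset.range (K + 2) : Set ℕ) := by
      intro u hu v hv huv
      by_contra hne
      rcases Nat.lt_or_ge u v with hlt | hge
      · exact walk_inj hinv hend v (hns v) u hlt huv
      · exact walk_inj hinv hend u (hns u) v (by omega) huv.symm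
    have hmap : ∀ t ∈ Finset.range (K + 2), walk σ d0 x0 t ∈ A ∪ B := by
      intro t _
      exact walk_mem hmove hx0 t (fun u hu => h u)
    have := Finset.card_le_card_of_injOn _ hmap (fun u hu v hv => hinjOn (by simpa using hu) (by simpa using hv))
    simp only [Finset.card_range] at this
    omega
  set N := Nat.find hex with hN
  refine ⟨N, ?_, fun t ht => Nat.find_min hex ht, Nat.find_spec hex⟩
  by_contra hcon
  push_neg at hcon
  -- N > K : but then walk injective on range (K+2) ⊆ [0,N] : contradiction
  have hns : ∀ j, j ≤ N → ∀ t, t < j → walk σ d0 x0 (t + 1) ≠ walk σ d0 x0 t :=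
    fun j hj t ht => Nat.find_min hex (by omega)
  have hinjOn : Set.InjOn (walk σ d0 x0) (Finset.range (K + 2) : Set ℕ) := by
    intro u hu v hv huv
    simp only [Finset.coe_range, Set.mem_Iio] at hu hv
    by_contra hne
    rcases Nat.lt_or_ge u v with hlt | hge
    · exact walk_inj hinv hend v (hns v (by omega)) u hlt huv
    · exact walk_inj hinv hend u (hns u (by omega)) v (by omega) huv.symm
  have hmap : ∀ t ∈ Finset.range (K + 2), walk σ d0 x0 t ∈ A ∪ B := by
    intro t ht
    simp only [Finset.mem_range] at ht
    exact walk_mem hmove hx0 t (fun u hu => Nat.find_min hex (by omega))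
  have := Finset.card_le_card_of_injOn _ hmap (fun u hu v hv => hinjOn (by simpa using hu) (by simpa using hv))
  simp only [Finset.card_range] at this
  omega

section PathStruct

variable {N : ℕ}

/-- The vertex set of the path walk. -/
noncomputable def wS (σ : Bool → Pt → Pt) (d0 : Bool) (x0 : Pt) (N : ℕ) : Finset Pt :=
  (Finset.range (N + 1)).image (walk σ d0 x0)

include hinv in
lemma walk_closed (hend : σ (!d0) x0 = x0)
    (hstuck : walk σ d0 x0 (N + 1) = walk σ d0 x0 N) :
    ∀ t, t ≤ N → ∀ b, σ b (walk σ d0 x0 t) = walk σ d0 x0 t ∨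
      σ b (walk σ d0 x0 t) ∈ wS σ d0 x0 N := by
  intro t ht b
  by_cases hb : b = wdir d0 t
  · subst hb
    rcases Nat.lt_or_ge t N with hlt | hge
    · right
      have : σ (wdir d0 t) (walk σ d0 x0 t) = walk σ d0 x0 (t + 1) := rfl
      rw [this]
      exact Finset.mem_image.2 ⟨t + 1, Finset.mem_range.2 (by omega), rfl⟩
    · left
      have htN : t = N := by omega
      subst htN
      exact hstuck
  · have hb' : b = !(wdir d0 t) := by
      revert hb; cases b <;> cases wdir d0 t <;> simp
    subst hb'
    cases t with
    | zero =>
      left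
      have : wdir d0 0 = d0 := rfl
      rw [this]
      exact hend
    | succ u =>
      right
      rw [wdir_succ, Bool.not_not]
      rw [walk_pred hinv u]
      exact Finset.mem_image.2 ⟨u, Finset.mem_range.2 (by omega), rfl⟩

include hinv in
lemma token_ge_two (hend : σ (!d0) x0 = x0)
    (hstuck : walk σ d0 x0 (N + 1) = walk σ d0 x0 N)
    (hns : ∀ t, t < N → walk σ d0 x0 (t + 1) ≠ walk σ d0 x0 t) :
    2 ≤ ((wS σ d0 x0 N).filter fun x => σ true x = x).card +
        ((wS σ d0 x0 N).filter fun x => σ false x = x).card := by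
  classical
  have hx0S : x0 ∈ wS σ d0 x0 N :=
    Finset.mem_image.2 ⟨0, Finset.mem_range.2 (by omega), rfl⟩
  have hgNS : walk σ d0 x0 N ∈ wS σ d0 x0 N :=
    Finset.mem_image.2 ⟨N, Finset.mem_range.2 (by omega), rfl⟩
  have hcomm : ∀ (P Q : ℕ),
      ((wS σ d0 x0 N).filter fun x => σ d0 x = x).card +
      ((wS σ d0 x0 N).filter fun x => σ (!d0) x = x).card ≤
      ((wS σ d0 x0 N).filter fun x => σ true x = x).card +
        ((wS σ d0 x0 N).filter fun x => σ false x = x).card := by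
    intro _ _
    cases d0 <;> simp [Bool.not_true, Bool.not_false] <;> omega
  apply le_trans _ (hcomm 0 0)
  rcases Nat.eq_zero_or_pos N with hN0 | hNpos
  · subst hN0
    have h1 : x0 ∈ (wS σ d0 x0 0).filter fun x => σ (!d0) x = x :=
      Finset.mem_filter.2 ⟨hx0S, hend⟩
    have h2 : x0 ∈ (wS σ d0 x0 0).filter fun x => σ d0 x = x := by
      refine Finset.mem_filter.2 ⟨hx0S, ?_⟩
      have : wdir d0 0 = d0 := rfl
      rw [← this]
      exact hstuck
    have c1 := Finset.card_pos.2 ⟨_, h1⟩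
    have c2 := Finset.card_pos.2 ⟨_, h2⟩
    omega
  · have hne : x0 ≠ walk σ d0 x0 N := by
      have h0 : walk σ d0 x0 0 = x0 := rfl
      intro h
      exact walk_inj hinv hend N hns 0 hNpos (h0.symm ▸ h)
    by_cases hw : wdir d0 N = !d0
    · have h1 : x0 ∈ (wS σ d0 x0 N).filter fun x => σ (!d0) x = x :=
        Finset.mem_filter.2 ⟨hx0S, hend⟩
      have hst' : σ (wdir d0 N) (walk σ d0 x0 N) = walk σ d0 x0 N := hstuck
      rw [hw] at hst'
      have h2 : walk σ d0 x0 N ∈ (wS σ d0 x0 N).filter fun x => σ (!d0) x = x :=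
        Finset.mem_filter.2 ⟨hgNS, hst'⟩
      have : ({x0, walk σ d0 x0 N} : Finset Pt) ⊆
          (wS σ d0 x0 N).filter fun x => σ (!d0) x = x := by
        intro z hz
        rcases Finset.mem_insert.1 hz with rfl | hz
        · exact h1
        · rw [Finset.mem_singleton.1 hz]; exact h2
      have hc := Finset.card_le_card this
      rw [Finset.card_insert_of_notMem (by simpa using hne), Finset.card_singleton] at hc
      omega
    · have hw' : wdir d0 N = d0 := by
        revert hw; cases d0 <;> cases hN : wdir _ N <;> simp_all
      have h1 : x0 ∈ (wS σ d0 x0 N).filter fun x => σ (!d0) x = x :=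
        Finset.mem_filter.2 ⟨hx0S, hend⟩
      have hst' : σ (wdir d0 N) (walk σ d0 x0 N) = walk σ d0 x0 N := hstuck
      rw [hw'] at hst'
      have h2 : walk σ d0 x0 N ∈ (wS σ d0 x0 N).filter fun x => σ d0 x = x :=
        Finset.mem_filter.2 ⟨hgNS, hst'⟩
      have c1 := Finset.card_pos.2 ⟨_, h1⟩
      have c2 := Finset.card_pos.2 ⟨_, h2⟩
      omega

end PathStruct

section Sides

variable {N : ℕ} (hdisj : Disjoint A B)

include hmove hdisj in
lemma walk_side (hx0 : x0 ∈ A ∪ B)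
    (hns : ∀ t, t < N → walk σ d0 x0 (t + 1) ≠ walk σ d0 x0 t) :
    ∀ t, t ≤ N → (walk σ d0 x0 t ∈ A ↔ t % 2 = (if x0 ∈ A then 0 else 1)) ∧
      (walk σ d0 x0 t ∈ B ↔ t % 2 ≠ (if x0 ∈ A then 0 else 1)) := by
  intro t
  induction t with
  | zero =>
    intro _
    by_cases hA : x0 ∈ A
    · simp only [if_pos hA]
      have hB : x0 ∉ B := Finset.disjoint_left.1 hdisj hA
      exact ⟨by simpa [walk] using hA, by simpa [walk] using hB⟩
    · have hB : x0 ∈ B := by rcases Finset.mem_union.1 hx0 with h | h; exact absurd h hA; exact h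
      simp only [if_neg hA]
      constructor
      · constructor
        · intro h; exact absurd h hA
        · omega
      · simpa [walk] using hB
  | succ u ih =>
    intro hu
    have ihu := ih (by omega)
    have hmv := hns u (by omega)
    have hstep : walk σ d0 x0 (u + 1) = σ (wdir d0 u) (walk σ d0 x0 u) := rfl
    rw [hstep] at hmv ⊢
    rcases hmove _ _ hmv with ⟨h1, h2⟩ | ⟨h1, h2⟩
    · -- walk u ∈ A, next ∈ B
      have hu2 : u % 2 = (if x0 ∈ A then 0 else 1) := (ihu.1).1 h1
      have hnA : σ (wdir d0 u) (walk σ d0 x0 u) ∉ A := Finset.disjoint_right.1 hdisj h2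
      constructor
      · constructor
        · intro h; exact absurd h hnA
        · omega
      · constructor
        · intro _; omega
        · intro _; exact h2
    · have hu2 : u % 2 ≠ (if x0 ∈ A then 0 else 1) := (ihu.2).1 h1
      have hnB : σ (wdir d0 u) (walk σ d0 x0 u) ∉ B := Finset.disjoint_left.1 hdisj h2
      have hval : (if x0 ∈ A then 0 else 1) = 0 ∨ (if x0 ∈ A then (0:ℕ)  else 1) = 1 := by
        by_cases hA : x0 ∈ A <;> simp [hA]
      constructor
      · constructor
        · intro _; omega
        · intro _; exact h2
      · constructor
        · intro h; exact absurd h hnB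
        · omega

include hinv hmove hdisj in
lemma wS_inter_A_card (hend : σ (!d0) x0 = x0) (hx0 : x0 ∈ A ∪ B)
    (hns : ∀ t, t < N → walk σ d0 x0 (t + 1) ≠ walk σ d0 x0 t) :
    ∀ ε s : ℕ, ε = (if x0 ∈ A then 0 else 1) →
      s = (if ε ≤ N then (N - ε) / 2 + 1 else 0) →
      (wS σ d0 x0 N ∩ A).card = s ∧
      (∀ u, u < s → ε + 2 * u ≤ N ∧ walk σ d0 x0 (ε + 2 * u) ∈ A) ∧
      (∀ u, u + 1 < s → walk σ d0 x0 (ε + 2 * u + 1) ∈ B) := by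
  intro ε s hε hs
  have hε01 : ε = 0 ∨ ε = 1 := by rcases hε with rfl; by_cases hA : x0 ∈ A <;> simp [hA]
  have hside := walk_side hmove hdisj hx0 hns
  have hposA : ∀ u, u < s → ε + 2 * u ≤ N ∧ walk σ d0 x0 (ε + 2 * u) ∈ A := by
    intro u hu
    have hle : ε + 2 * u ≤ N := by
      rcases hε01 with h | h <;> rw [h] at hs ⊢ <;> split at hs <;> omega
    refine ⟨hle, ?_⟩
    have := (hside _ hle).1
    rw [← hε] at this
    apply this.2
    omega
  have hposB : ∀ u, u + 1 < s → walk σ d0 x0 (ε + 2 * u + 1) ∈ B := by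
    intro u hu
    have hle : ε + 2 * u + 1 ≤ N := by
      rcases hε01 with h | h <;> rw [h] at hs ⊢ <;> split at hs <;> omega
    have := (hside _ hle).2
    rw [← hε] at this
    apply this.2
    omega
  refine ⟨?_, hposA, hposB⟩
  -- S ∩ A = image of A-positions
  have hSA : wS σ d0 x0 N ∩ A =
      ((Finset.range (N + 1)).filter fun t => t % 2 = ε).image (walk σ d0 x0) := by
    ext x
    simp only [Finset.mem_inter, wS, Finset.mem_image, Finset.mem_filter, Finset.mem_range]
    constructor
    · rintro ⟨⟨t, ht, rfl⟩, hxA⟩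
      refine ⟨t, ⟨ht, ?_⟩, rfl⟩
      have := (hside t (by omega)).1
      rw [← hε] at this
      exact this.1 hxA
    · rintro ⟨t, ⟨ht, hpar⟩, rfl⟩
      have := (hside t (by omega)).1
      rw [← hε] at this
      exact ⟨⟨t, ht, rfl⟩, this.2 hpar⟩
  rw [hSA]
  have hinjOn : ∀ u ∈ (Finset.range (N + 1)).filter fun t => t % 2 = ε,
      ∀ v ∈ (Finset.range (N + 1)).filter fun t => t % 2 = ε,
        walk σ d0 x0 u = walk σ d0 x0 v → u = v := by
    intro u hu v hv huv
    simp only [Finset.mem_filter, Finset.mem_range] at hu hv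
    by_contra hne
    rcases Nat.lt_or_ge u v with hlt | hge
    · exact walk_inj hinv hend v (fun t ht => hns t (by omega)) u hlt huv
    · exact walk_inj hinv hend u (fun t ht => hns t (by omega)) v (by omega) huv.symm
  rw [Finset.card_image_of_injOn hinjOn]
  -- count the positions
  have : (Finset.range (N + 1)).filter (fun t => t % 2 = ε) =
      (Finset.range s).image (fun u => ε + 2 * u) := by
    ext t
    simp only [Finset.mem_filter, Finset.mem_range, Finset.mem_image]
    constructor
    · rintro ⟨h1, h2⟩
      refine ⟨(t - ε) / 2, ?_, ?_⟩ <;> rcases hε01 with h | h <;> rw [h] at hs ⊢ <;>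
        split at hs <;> omega
    · rintro ⟨u, hu, rfl⟩
      constructor <;> rcases hε01 with h | h <;> rw [h] at hs ⊢ <;> split at hs <;> omega
  rw [this, Finset.card_image_of_injective _ (fun u v huv => by omega), Finset.card_range]

end Sides

section Cycle

include hinv hmove in
lemma cycle_extract (d0 : Bool) (hnofix : ∀ b x, x ∈ A ∪ B → σ b x ≠ x) (hx0 : x0 ∈ A ∪ B) :
    ∃ S : Finset Pt, S.Nonempty ∧ S ⊆ A ∪ B ∧ (∀ x ∈ S, ∀ b, σ b x ∈ S) := by
  classical
  set g := walk σ d0 x0 with hg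
  have hmemstep : ∀ t, g t ∈ A ∪ B ∧ g (t + 1) ≠ g t := by
    intro t
    induction t with
    | zero =>
      exact ⟨hx0, hnofix (wdir d0 0) _ hx0⟩
    | succ u ih =>
      have hstep : g (u + 1) = σ (wdir d0 u) (g u) := rfl
      have hmem : g (u + 1) ∈ A ∪ B := by
        rw [hstep]
        rcases hmove (wdir d0 u) (g u) (hstep ▸ ih.2) with ⟨_, h⟩ | ⟨_, h⟩
        · exact Finset.mem_union_right _ h
        · exact Finset.mem_union_left _ h
      exact ⟨hmem, hnofix (wdir d0 (u + 1)) _ hmem⟩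
  set K := (A ∪ B).card with hK
  have hex : ∃ j, ∃ i, i < j ∧ g i = g j := by
    by_contra h
    push_neg at h
    have hinjOn : ∀ u ∈ Finset.range (K + 2), ∀ v ∈ Finset.range (K + 2),
        g u = g v → u = v := by
      intro u _ v _ huv
      by_contra hne
      rcases Nat.lt_or_ge u v with hlt | hge
      · exact h v u hlt huv
      · exact h u v (by omega) huv.symm
    have hmap : ∀ t ∈ Finset.range (K + 2), g t ∈ A ∪ B := fun t _ => (hmemstep t).1
    have := Finset.card_le_card_of_injOn _ hmap hinjOn
    simp only [Finset.card_range] at this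
    omega
  set j0 := Nat.find hex with hj0
  obtain ⟨i, hij, heq⟩ := Nat.find_spec hex
  have hmin : ∀ j', j' < j0 → ∀ i', i' < j' → g i' ≠ g j' := by
    intro j' hj' i' hi' hne
    exact Nat.find_min hex hj' ⟨i', hi', hne⟩
  have hj1 : 1 ≤ j0 := by omega
  have hjeq : j0 - 1 + 1 = j0 := by omega
  -- establish i = 0 and j0 even
  have hi0 : i = 0 ∧ j0 % 2 = 0 := by
    by_cases hpar : i % 2 = j0 % 2
    · rcases Nat.eq_zero_or_pos i with hi | hi
      · subst hi
        constructor
        · rfl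
        · omega
      · exfalso
        have hieq : i - 1 + 1 = i := by omega
        have hw : wdir d0 (i - 1) = wdir d0 (j0 - 1) := by
          apply wdir_eq_of_parity; omega
        have hpi : σ (wdir d0 (i - 1)) (g i) = g (i - 1) := by
          conv_lhs => rw [← hieq]
          exact walk_pred hinv (i - 1)
        have hpj : σ (wdir d0 (j0 - 1)) (g j0) = g (j0 - 1) := by
          conv_lhs => rw [← hjeq]
          exact walk_pred hinv (j0 - 1)
        rw [← heq, ← hw, hpi] at hpj
        exact hmin (j0 - 1) (by omega) (i - 1) (by omega) hpj
    · exfalso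
      have hw : wdir d0 i = wdir d0 (j0 - 1) := by
        apply wdir_eq_of_parity; omega
      have hstep : g (i + 1) = σ (wdir d0 i) (g i) := rfl
      have hpj : σ (wdir d0 (j0 - 1)) (g j0) = g (j0 - 1) := by
        conv_lhs => rw [← hjeq]
        exact walk_pred hinv (j0 - 1)
      have hkey : g (i + 1) = g (j0 - 1) := by
        rw [hstep, heq, hw, hpj]
      rcases Nat.lt_trichotomy (i + 1) (j0 - 1) with h | h | h
      · exact hmin (j0 - 1) (by omega) (i + 1) h hkey
      · apply hpar; omega
      · have hii : j0 - 1 = i := by omega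
        rw [hii] at hkey
        exact (hmemstep i).2 hkey
  obtain ⟨hi0', hjpar⟩ := hi0
  subst hi0'
  have hj2 : 2 ≤ j0 := by omega
  refine ⟨(Finset.range j0).image g, ?_, ?_, ?_⟩
  · exact ⟨g 0, Finset.mem_image.2 ⟨0, Finset.mem_range.2 (by omega), rfl⟩⟩
  · intro x hx
    obtain ⟨t, _, rfl⟩ := Finset.mem_image.1 hx
    exact (hmemstep t).1
  · intro x hx b
    obtain ⟨t, ht, rfl⟩ := Finset.mem_image.1 hx
    rw [Finset.mem_range] at ht
    by_cases hb : b = wdir d0 t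
    · subst hb
      have hstep : σ (wdir d0 t) (g t) = g (t + 1) := rfl
      rw [hstep]
      rcases Nat.lt_or_ge (t + 1) j0 with hlt | hge
      · exact Finset.mem_image.2 ⟨t + 1, Finset.mem_range.2 hlt, rfl⟩
      · have : t + 1 = j0 := by omega
        rw [this, ← heq]
        exact Finset.mem_image.2 ⟨0, Finset.mem_range.2 (by omega), rfl⟩
    · have hb' : b = !(wdir d0 t) := by
        revert hb; cases b <;> cases wdir d0 t <;> simp
      subst hb'
      cases t with
      | zero =>
        have hw1 : wdir d0 0 = d0 := rfl
        have hw2 : wdir d0 (j0 - 1) = !d0 := by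
          have h1 : (j0 - 1) % 2 = 1 := by omega
          unfold wdir
          simp [h1]
        have hw : (!(wdir d0 0)) = wdir d0 (j0 - 1) := by rw [hw1, hw2]
        rw [hw]
        have : σ (wdir d0 (j0 - 1)) (g 0) = g (j0 - 1) := by
          rw [heq]
          have hp := walk_pred (σ := σ) (d0 := d0) (x0 := x0) hinv (j0 - 1)
          rw [hjeq] at hp
          exact hp
        rw [this]
        exact Finset.mem_image.2 ⟨j0 - 1, Finset.mem_range.2 (by omega), rfl⟩
      | succ u =>
        rw [wdir_succ, Bool.not_not, walk_pred hinv u]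
        exact Finset.mem_image.2 ⟨u, Finset.mem_range.2 (by omega), rfl⟩

end Cycle


lemma filter_swap_card (F1 SA SB : Finset (ℤ × ℤ)) (hSA : SA ⊆ F1)
    (hSB : ∀ b ∈ SB, b ∉ F1) (q : ℤ × ℤ → Prop) [DecidablePred q] :
    (((F1 \ SA) ∪ SB).filter q).card + (SA.filter q).card
      = (F1.filter q).card + (SB.filter q).card := by
  have hd : Disjoint ((F1 \ SA).filter q) (SB.filter q) := by
    rw [Finset.disjoint_left]
    intro a ha hb
    exact hSB a (Finset.mem_filter.1 hb).1 (Finset.mem_sdiff.1 (Finset.mem_filter.1 ha).1).1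
  have hsd : (F1 \ SA).filter q = F1.filter q \ SA.filter q := by
    ext a
    simp only [Finset.mem_filter, Finset.mem_sdiff]
    tauto
  rw [Finset.filter_union, Finset.card_union_of_disjoint hd, hsd,
    Finset.card_sdiff_of_subset (Finset.filter_subset_filter _ hSA)]
  have hle : (SA.filter q).card ≤ (F1.filter q).card :=
    Finset.card_le_card (Finset.filter_subset_filter _ hSA)
  omega

lemma rowSum_swap (F1 SA SB : Finset (ℤ × ℤ)) (hSA : SA ⊆ F1)
    (hSB : ∀ b ∈ SB, b ∉ F1) (h : ∀ i, rowSum SA i = rowSum SB i) (i : ℤ) :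
    rowSum ((F1 \ SA) ∪ SB) i = rowSum F1 i := by
  have := filter_swap_card F1 SA SB hSA hSB (fun p => p.1 = i)
  have h' := h i
  unfold rowSum at *
  omega

lemma colSum_swap (F1 SA SB : Finset (ℤ × ℤ)) (hSA : SA ⊆ F1)
    (hSB : ∀ b ∈ SB, b ∉ F1) (h : ∀ j, colSum SA j = colSum SB j) (j : ℤ) :
    colSum ((F1 \ SA) ∪ SB) j = colSum F1 j := by
  have := filter_swap_card F1 SA SB hSA hSB (fun p => p.2 = j)
  have h' := h j
  unfold colSum at *
  omega

lemma rowSum_eq_sum (F : Finset (ℤ × ℤ)) (i : ℤ) :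
    rowSum F i = ∑ p ∈ F, (if p.1 = i then 1 else 0) := by
  rw [rowSum, Finset.card_filter]

lemma colSum_eq_sum (F : Finset (ℤ × ℤ)) (j : ℤ) :
    colSum F j = ∑ p ∈ F, (if p.2 = j then 1 else 0) := by
  rw [colSum, Finset.card_filter]

lemma switch_free (F1 : Finset (ℤ × ℤ)) (hU : UniquelyDetermined F1) {x x' y y' : ℤ}
    (h1 : (x, y) ∈ F1) (h2 : (x', y') ∈ F1) (h3 : (x, y') ∉ F1) (h4 : (x', y) ∉ F1) :
    False := by
  have hxx : x ≠ x' := by rintro rfl; exact h3 h2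
  have hyy : y ≠ y' := by rintro rfl; exact h3 h1
  set s0 : Finset (ℤ × ℤ) := (F1.erase (x, y)).erase (x', y') with hs0
  set G : Finset (ℤ × ℤ) := insert (x, y') (insert (x', y) s0) with hG
  have hmem2 : (x', y') ∈ F1.erase (x, y) :=
    Finset.mem_erase.2 ⟨fun h => hxx (congrArg Prod.fst h).symm, h2⟩
  have hs0sub : s0 ⊆ F1 := (Finset.erase_subset _ _).trans (Finset.erase_subset _ _)
  have hn1 : (x', y) ∉ s0 := fun h => h4 (hs0sub h)
  have hn2 : (x, y') ∉ insert (x', y) s0 := by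
    simp only [Finset.mem_insert]
    rintro (h | h)
    · exact hxx (congrArg Prod.fst h)
    · exact h3 (hs0sub h)
  have key : ∀ f : ℤ × ℤ → ℕ, f (x, y') + f (x', y) = f (x, y) + f (x', y') →
      ∑ p ∈ G, f p = ∑ p ∈ F1, f p := by
    intro f hf
    rw [hG, Finset.sum_insert hn2, Finset.sum_insert hn1, hs0]
    have e1 : ∑ p ∈ (F1.erase (x, y)).erase (x', y'), f p + f (x', y') =
        ∑ p ∈ F1.erase (x, y), f p := Finset.sum_erase_add _ _ hmem2
    have e2 : ∑ p ∈ F1.erase (x, y), f p + f (x, y) = ∑ p ∈ F1, f p :=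
      Finset.sum_erase_add _ _ h1
    omega
  have hrow : ∀ i, rowSum G i = rowSum F1 i := by
    intro i
    rw [rowSum_eq_sum, rowSum_eq_sum]
    exact key _ (by simp)
  have hcol : ∀ j, colSum G j = colSum F1 j := by
    intro j
    rw [colSum_eq_sum, colSum_eq_sum]
    exact key _ (by simp [add_comm])
  have : G = F1 := hU G hrow hcol
  apply h3
  rw [← this, hG]
  exact Finset.mem_insert_self _ _

lemma nested_cols (F1 : Finset (ℤ × ℤ)) (hU : UniquelyDetermined F1) (y y' : ℤ) :
    (∀ x, (x, y) ∈ F1 → (x, y') ∈ F1) ∨ (∀ x, (x, y') ∈ F1 → (x, y) ∈ F1) := by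
  by_contra h
  push_neg at h
  obtain ⟨⟨a, ha1, ha2⟩, ⟨b, hb1, hb2⟩⟩ := h
  exact switch_free F1 hU ha1 hb1 ha2 hb2

lemma nested_rows (F1 : Finset (ℤ × ℤ)) (hU : UniquelyDetermined F1) (x x' : ℤ) :
    (∀ y, (x, y) ∈ F1 → (x', y) ∈ F1) ∨ (∀ y, (x', y) ∈ F1 → (x, y) ∈ F1) := by
  by_contra h
  push_neg at h
  obtain ⟨⟨a, ha1, ha2⟩, ⟨b, hb1, hb2⟩⟩ := h
  exact switch_free F1 hU ha1 hb1 hb2 ha2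

/-- The main combinatorial estimate, by strong induction on the discrepancy. -/
lemma core (F1 : Finset Pt) (hU : UniquelyDetermined F1) :
    ∀ k : ℕ, ∀ A B : Finset Pt, A ⊆ F1 → (∀ b ∈ B, b ∉ F1) →
      Dproj A B Prod.fst + Dproj A B Prod.snd = k →
      2 * A.card ≤ k * Nat.sqrt (2 * F1.card) := by
  intro k
  induction k using Nat.strong_induction_on with
  | _ k IH =>
    intro A B hA hB hD
    classical
    rcases Finset.eq_empty_or_nonempty A with rfl | hAne
    · simp
    have hdisj : Disjoint A B := by
      rw [Finset.disjoint_left]; intro a haA haB; exact hB a haB (hA haA)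
    obtain ⟨ρ, hρinv, hρmove, hρfixA, hρfixB⟩ := exists_lineInv A B hdisj Prod.fst
    obtain ⟨γ, hγinv, hγmove, hγfixA, hγfixB⟩ := exists_lineInv A B hdisj Prod.snd
    set σ : Bool → Pt → Pt := fun b => if b then ρ else γ with hσ
    have hσt : σ true = ρ := rfl
    have hσf : σ false = γ := rfl
    have hσinv : ∀ b x, σ b (σ b x) = x := by
      intro b x; cases b
      · exact hγinv x
      · exact hρinv x
    have hσmove : ∀ b x, σ b x ≠ x → (x ∈ A ∧ σ b x ∈ B) ∨ (x ∈ B ∧ σ b x ∈ A) := by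
      intro b x h; cases b
      · exact (hγmove x h).1
      · exact (hρmove x h).1
    by_cases hfix : ∃ b x, x ∈ A ∪ B ∧ σ b x = x
    case neg =>
      -- cycle case : contradiction with unique determination
      exfalso
      push_neg at hfix
      obtain ⟨a0, ha0⟩ := hAne
      obtain ⟨S, hSne, hSsub, hSclosed⟩ := cycle_extract hσinv hσmove true
        (fun b x hx => hfix b x hx) (Finset.mem_union_left _ ha0)
      have hrow : ∀ i, rowSum (S ∩ A) i = rowSum (S ∩ B) i := by
        intro i
        unfold rowSum
        apply card_eq_of_inv _ _ ρ ?_ ?_ hρinv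
        · intro x hx
          obtain ⟨hx', hx1⟩ := Finset.mem_filter.1 hx
          obtain ⟨hxS, hxA⟩ := Finset.mem_inter.1 hx'
          have hm : ρ x ≠ x := by
            have := hfix true x (hSsub hxS)
            rwa [hσt] at this
          have hmv := (hρmove x hm).1
          have hfB : ρ x ∈ B := by
            rcases hmv with ⟨_, h⟩ | ⟨hxB, _⟩
            · exact h
            · exact absurd hxA (Finset.disjoint_right.1 hdisj hxB)
          have hfS : ρ x ∈ S := by
            have := hSclosed x hxS true
            rwa [hσt] at this
          refine Finset.mem_filter.2 ⟨Finset.mem_inter.2 ⟨hfS, hfB⟩, ?_⟩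
          rw [(hρmove x hm).2, hx1]
        · intro x hx
          obtain ⟨hx', hx1⟩ := Finset.mem_filter.1 hx
          obtain ⟨hxS, hxB⟩ := Finset.mem_inter.1 hx'
          have hm : ρ x ≠ x := by
            have := hfix true x (hSsub hxS)
            rwa [hσt] at this
          have hmv := (hρmove x hm).1
          have hfA : ρ x ∈ A := by
            rcases hmv with ⟨hxA, _⟩ | ⟨_, h⟩
            · exact absurd hxB (Finset.disjoint_left.1 hdisj hxA)
            · exact h
          have hfS : ρ x ∈ S := by
            have := hSclosed x hxS true
            rwa [hσt] at this
          refine Finset.mem_filter.2 ⟨Finset.mem_inter.2 ⟨hfS, hfA⟩, ?_⟩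
          rw [(hρmove x hm).2, hx1]
      have hcol : ∀ j, colSum (S ∩ A) j = colSum (S ∩ B) j := by
        intro j
        unfold colSum
        apply card_eq_of_inv _ _ γ ?_ ?_ hγinv
        · intro x hx
          obtain ⟨hx', hx1⟩ := Finset.mem_filter.1 hx
          obtain ⟨hxS, hxA⟩ := Finset.mem_inter.1 hx'
          have hm : γ x ≠ x := by
            have := hfix false x (hSsub hxS)
            rwa [hσf] at this
          have hmv := (hγmove x hm).1
          have hfB : γ x ∈ B := by
            rcases hmv with ⟨_, h⟩ | ⟨hxB, _⟩
            · exact h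
            · exact absurd hxA (Finset.disjoint_right.1 hdisj hxB)
          have hfS : γ x ∈ S := by
            have := hSclosed x hxS false
            rwa [hσf] at this
          refine Finset.mem_filter.2 ⟨Finset.mem_inter.2 ⟨hfS, hfB⟩, ?_⟩
          rw [(hγmove x hm).2, hx1]
        · intro x hx
          obtain ⟨hx', hx1⟩ := Finset.mem_filter.1 hx
          obtain ⟨hxS, hxB⟩ := Finset.mem_inter.1 hx'
          have hm : γ x ≠ x := by
            have := hfix false x (hSsub hxS)
            rwa [hσf] at this
          have hmv := (hγmove x hm).1
          have hfA : γ x ∈ A := by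
            rcases hmv with ⟨hxA, _⟩ | ⟨_, h⟩
            · exact absurd hxB (Finset.disjoint_left.1 hdisj hxA)
            · exact h
          have hfS : γ x ∈ S := by
            have := hSclosed x hxS false
            rwa [hσf] at this
          refine Finset.mem_filter.2 ⟨Finset.mem_inter.2 ⟨hfS, hfA⟩, ?_⟩
          rw [(hγmove x hm).2, hx1]
      have hSA_sub : S ∩ A ⊆ F1 := fun x hx => hA (Finset.mem_inter.1 hx).2
      have hSB_out : ∀ b ∈ S ∩ B, b ∉ F1 := fun b hb => hB b (Finset.mem_inter.1 hb).2
      have hG : (F1 \ (S ∩ A)) ∪ (S ∩ B) = F1 :=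
        hU _ (fun i => rowSum_swap F1 (S ∩ A) (S ∩ B) hSA_sub hSB_out hrow i)
          (fun j => colSum_swap F1 (S ∩ A) (S ∩ B) hSA_sub hSB_out hcol j)
      obtain ⟨x, hxS⟩ := hSne
      rcases Finset.mem_union.1 (hSsub hxS) with hxA | hxB
      · have hxF : x ∈ F1 := hA hxA
        have : x ∉ (F1 \ (S ∩ A)) ∪ (S ∩ B) := by
          intro h
          rcases Finset.mem_union.1 h with h' | h'
          · exact (Finset.mem_sdiff.1 h').2 (Finset.mem_inter.2 ⟨hxS, hxA⟩)
          · exact Finset.disjoint_left.1 hdisj hxA (Finset.mem_inter.1 h').2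
        rw [hG] at this
        exact this hxF
      · have hxG : x ∈ (F1 \ (S ∩ A)) ∪ (S ∩ B) :=
          Finset.mem_union_right _ (Finset.mem_inter.2 ⟨hxS, hxB⟩)
        rw [hG] at hxG
        exact hB x hxB hxG
    case pos =>
      obtain ⟨b0, x0, hx0mem, hx0fix⟩ := hfix
      set d0 := !b0 with hd0
      have hend : σ (!d0) x0 = x0 := by
        rw [hd0, Bool.not_not]; exact hx0fix
      obtain ⟨N, hNle, hns, hstuck⟩ := exists_stuck hσinv hσmove hend hx0mem
      set S := wS σ d0 x0 N with hSdef
      have hSsub : S ⊆ A ∪ B := by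
        intro x hx
        obtain ⟨t, ht, rfl⟩ := Finset.mem_image.1 hx
        rw [Finset.mem_range] at ht
        exact walk_mem hσmove hx0mem t (fun u hu => hns u (by omega))
      have hSclosed' : ∀ x ∈ S, ∀ b, σ b x = x ∨ σ b x ∈ S := by
        intro x hx b
        obtain ⟨t, ht, rfl⟩ := Finset.mem_image.1 hx
        rw [Finset.mem_range] at ht
        exact walk_closed hσinv hend hstuck t (by omega) b
      have hρclosed : ∀ x ∈ S, ρ x = x ∨ ρ x ∈ S := by
        intro x hx
        have := hSclosed' x hx true
        rwa [hσt] at this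
      have hγclosed : ∀ x ∈ S, γ x = x ∨ γ x ∈ S := by
        intro x hx
        have := hSclosed' x hx false
        rwa [hσf] at this
      have htok := token_ge_two hσinv hend hstuck hns
      rw [← hSdef] at htok
      simp only [hσt, hσf] at htok
      have hsplit : ∀ g : Pt → Pt, (S.filter fun x => g x = x).card
          = ((S ∩ A).filter fun x => g x = x).card + ((S ∩ B).filter fun x => g x = x).card := by
        intro g
        have he : S.filter (fun x => g x = x)
            = ((S ∩ A).filter fun x => g x = x) ∪ ((S ∩ B).filter fun x => g x = x) := by
          ext x
          simp only [Finset.mem_filter, Finset.mem_union, Finset.mem_inter]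
          constructor
          · rintro ⟨hxS, hxg⟩
            rcases Finset.mem_union.1 (hSsub hxS) with h | h
            · exact Or.inl ⟨⟨hxS, h⟩, hxg⟩
            · exact Or.inr ⟨⟨hxS, h⟩, hxg⟩
          · rintro (⟨⟨h1, _⟩, h2⟩ | ⟨⟨h1, _⟩, h2⟩) <;> exact ⟨h1, h2⟩
        rw [he, Finset.card_union_of_disjoint]
        rw [Finset.disjoint_left]
        intro x hx1 hx2
        exact Finset.disjoint_left.1 hdisj
          (Finset.mem_inter.1 (Finset.mem_filter.1 hx1).1).2
          (Finset.mem_inter.1 (Finset.mem_filter.1 hx2).1).2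
      rw [hsplit ρ, hsplit γ] at htok
      have hdropRow := Dproj_drop A B S ρ Prod.fst hdisj hρinv hρmove hρfixA hρfixB hρclosed hSsub
      have hdropCol := Dproj_drop A B S γ Prod.snd hdisj hγinv hγmove hγfixA hγfixB hγclosed hSsub
      set k' := Dproj (A \ S) (B \ S) Prod.fst + Dproj (A \ S) (B \ S) Prod.snd with hk'def
      have hk' : k' + 2 ≤ k := by omega
      have hIH := IH k' (by omega) (A \ S) (B \ S)
        ((Finset.sdiff_subset).trans hA)
        (fun b hb => hB b (Finset.mem_sdiff.1 hb).1) rfl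
      -- the chain bound
      set ε := (if x0 ∈ A then (0 : ℕ) else 1) with hεdef
      set s := (if ε ≤ N then (N - ε) / 2 + 1 else 0) with hsdef
      obtain ⟨hScard, hposA, hposB⟩ :=
        wS_inter_A_card hσinv hσmove hdisj hend hx0mem hns ε s hεdef hsdef
      rw [← hSdef] at hScard
      have hchain : s * (s + 1) ≤ 2 * F1.card := by
        have hstep : ∀ t : ℕ, walk σ d0 x0 (t + 1) = σ (wdir d0 t) (walk σ d0 x0 t) :=
          fun t => rfl
        cases hdb : wdir d0 ε with
        | false =>
          apply chain_core F1 Prod.fst Prod.snd (fun x y => (x, y))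
            (fun p => rfl) (fun x y => rfl) (fun x y => rfl)
            (fun y y' => nested_cols F1 hU y y') s (fun u => walk σ d0 x0 (ε + 2 * u))
            (fun u hu => hA (hposA u hu).2)
          intro u hu
          set t := ε + 2 * u with htdef
          set b := walk σ d0 x0 (t + 1) with hbdef
          have hbB : b ∈ B := hposB u hu
          have haA : walk σ d0 x0 t ∈ A := (hposA u (by omega)).2
          have haA' : walk σ d0 x0 (ε + 2 * (u + 1)) ∈ A := (hposA (u + 1) hu).2
          refine ⟨b, hB b hbB, ?_, ?_⟩
          · -- snd b = snd (a u)
            have hw : wdir d0 t = false := by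
              rw [← hdb]
              apply wdir_eq_of_parity
              omega
            have hb1 : b = γ (walk σ d0 x0 t) := by
              rw [hbdef, hstep t, hw, hσf]
            have hmne : γ (walk σ d0 x0 t) ≠ walk σ d0 x0 t := by
              intro h
              rw [← hb1] at h  -- b = walk t ∈ A, but b ∈ B
              rw [h] at hbB
              exact Finset.disjoint_left.1 hdisj haA hbB
            rw [hb1]
            exact (hγmove _ hmne).2
          · -- fst b = fst (a (u+1))
            have hw : wdir d0 (t + 1) = true := by
              rw [wdir_succ]
              have : wdir d0 t = false := by
                rw [← hdb]; apply wdir_eq_of_parity; omega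
              rw [this]; rfl
            have ht2 : ε + 2 * (u + 1) = t + 1 + 1 := by omega
            have ha2 : walk σ d0 x0 (ε + 2 * (u + 1)) = ρ b := by
              rw [ht2, hstep (t + 1), hw, hσt, ← hbdef]
            have hmne : ρ b ≠ b := by
              intro h
              rw [← ha2] at h
              rw [h] at haA'
              exact Finset.disjoint_left.1 hdisj haA' hbB
            have := (hρmove b hmne).2
            rw [← ha2] at this
            exact this.symm
        | true =>
          apply chain_core F1 Prod.snd Prod.fst (fun x y => (y, x))
            (fun p => rfl) (fun x y => rfl) (fun x y => rfl)
            (fun y y' => nested_rows F1 hU y y') s (fun u => walk σ d0 x0 (ε + 2 * u))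
            (fun u hu => hA (hposA u hu).2)
          intro u hu
          set t := ε + 2 * u with htdef
          set b := walk σ d0 x0 (t + 1) with hbdef
          have hbB : b ∈ B := hposB u hu
          have haA : walk σ d0 x0 t ∈ A := (hposA u (by omega)).2
          have haA' : walk σ d0 x0 (ε + 2 * (u + 1)) ∈ A := (hposA (u + 1) hu).2
          refine ⟨b, hB b hbB, ?_, ?_⟩
          · -- fst b = fst (a u)
            have hw : wdir d0 t = true := by
              rw [← hdb]
              apply wdir_eq_of_parity
              omega
            have hb1 : b = ρ (walk σ d0 x0 t) := by
              rw [hbdef, hstep t, hw, hσt]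
            have hmne : ρ (walk σ d0 x0 t) ≠ walk σ d0 x0 t := by
              intro h
              rw [← hb1] at h
              rw [h] at hbB
              exact Finset.disjoint_left.1 hdisj haA hbB
            rw [hb1]
            exact (hρmove _ hmne).2
          · -- snd b = snd (a (u+1))
            have hw : wdir d0 (t + 1) = false := by
              rw [wdir_succ]
              have : wdir d0 t = true := by
                rw [← hdb]; apply wdir_eq_of_parity; omega
              rw [this]; rfl
            have ht2 : ε + 2 * (u + 1) = t + 1 + 1 := by omega
            have ha2 : walk σ d0 x0 (ε + 2 * (u + 1)) = γ b := by
              rw [ht2, hstep (t + 1), hw, hσf, ← hbdef]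
            have hmne : γ b ≠ b := by
              intro h
              rw [← ha2] at h
              rw [h] at haA'
              exact Finset.disjoint_left.1 hdisj haA' hbB
            have := (hγmove b hmne).2
            rw [← ha2] at this
            exact this.symm
      have hs_le : s ≤ Nat.sqrt (2 * F1.card) := by
        rw [Nat.le_sqrt]
        calc s * s ≤ s * (s + 1) := Nat.mul_le_mul_left s (by omega)
          _ ≤ 2 * F1.card := hchain
      -- combine
      have hcardA : A.card = (S ∩ A).card + (A \ S).card := by
        rw [Finset.inter_comm]
        exact (Finset.card_inter_add_card_sdiff A S).symm
      have hmul1 : k' * Nat.sqrt (2 * F1.card) ≤ (k - 2) * Nat.sqrt (2 * F1.card) :=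
        Nat.mul_le_mul_right _ (by omega)
      have hfin : 2 * (S ∩ A).card ≤ 2 * Nat.sqrt (2 * F1.card) := by
        rw [hScard]; omega
      calc 2 * A.card = 2 * (S ∩ A).card + 2 * (A \ S).card := by rw [hcardA]; ring
        _ ≤ 2 * Nat.sqrt (2 * F1.card) + (k - 2) * Nat.sqrt (2 * F1.card) := by
            have := hIH.trans hmul1
            omega
        _ = k * Nat.sqrt (2 * F1.card) := by
            rw [← Nat.add_mul]
            congr 1
            omega


end AlpersAux

lemma AlpersAux.final_algebra_real (a P M : ℝ) (ha : 1 ≤ a) (hP : 0 ≤ P) (hM0 : 0 ≤ M)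
    (hMsq : M ^ 2 ≤ 2 * a ^ 2 * (P + M)) :
    P + M ≤ P + (a + 1) * (a - 1/2) + (a + 1) * Real.sqrt (2 * P + (2 * a - 1) ^ 2 / 4) := by
  set Q := Real.sqrt (2 * P + (2 * a - 1) ^ 2 / 4) with hQdef
  have hargQ : 0 ≤ 2 * P + (2 * a - 1) ^ 2 / 4 := by positivity
  have hQ0 : 0 ≤ Q := Real.sqrt_nonneg _
  have hQsq : Q ^ 2 = 2 * P + (2 * a - 1) ^ 2 / 4 := Real.sq_sqrt hargQ
  have hQge : a - 1/2 ≤ Q := by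
    have h1 : Real.sqrt ((a - 1/2) ^ 2) ≤ Q := Real.sqrt_le_sqrt (by nlinarith)
    rwa [Real.sqrt_sq (by linarith)] at h1
  set W := Real.sqrt (a ^ 4 + 2 * a ^ 2 * P) with hWdef
  have hargW : 0 ≤ a ^ 4 + 2 * a ^ 2 * P := by positivity
  have hW0 : 0 ≤ W := Real.sqrt_nonneg _
  have hWsq : W ^ 2 = a ^ 4 + 2 * a ^ 2 * P := Real.sq_sqrt hargW
  have hMW : M ≤ a ^ 2 + W := by
    have h1 : (M - a ^ 2) ^ 2 ≤ a ^ 4 + 2 * a ^ 2 * P := by nlinarith [hMsq]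
    have h2 : M - a ^ 2 ≤ |M - a ^ 2| := le_abs_self _
    have h3 : |M - a ^ 2| = Real.sqrt ((M - a ^ 2) ^ 2) := (Real.sqrt_sq_eq_abs _).symm
    have h4 : Real.sqrt ((M - a ^ 2) ^ 2) ≤ W := Real.sqrt_le_sqrt h1
    linarith
  have hWR : W ≤ (a - 1) / 2 + (a + 1) * Q := by
    have hR0 : (0 : ℝ) ≤ (a - 1) / 2 + (a + 1) * Q := by
      have : (0:ℝ) ≤ (a + 1) * Q := mul_nonneg (by linarith) hQ0
      linarith
    have ht : (0:ℝ) ≤ Q - (a - 1/2) := by linarith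
    have hT1 : (0:ℝ) ≤ (a ^ 2 - 1) * (Q - (a - 1/2)) :=
      mul_nonneg (by nlinarith [sq_nonneg (a - 1)]) ht
    have hT2 : (0:ℝ) ≤ (2*a + 1) * (Q - (a - 1/2))^2 :=
      mul_nonneg (by linarith) (sq_nonneg _)
    have hT3 : (0:ℝ) ≤ ((2*a + 1) * (2 * (a - 1/2))) * (Q - (a - 1/2)) :=
      mul_nonneg (mul_nonneg (by linarith) (by linarith)) ht
    have hpoly : (0:ℝ) ≤ (a - 1) * (2*a - 1) * (a + 1) :=
      mul_nonneg (mul_nonneg (by linarith) (by linarith)) (by linarith)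
    have h1 : a ^ 4 + 2 * a ^ 2 * P ≤ ((a - 1) / 2 + (a + 1) * Q) ^ 2 := by
      nlinarith [hQsq, hT1, hT2, hT3, hpoly]
    calc W ≤ Real.sqrt (((a - 1) / 2 + (a + 1) * Q) ^ 2) := Real.sqrt_le_sqrt h1
      _ = (a - 1) / 2 + (a + 1) * Q := Real.sqrt_sq hR0
  nlinarith [hMW, hWR]

lemma AlpersAux.final_algebra (α p m n : ℕ) (hα : 1 ≤ α) (hn : n = p + m)
    (hm : m * m ≤ 2 * α ^ 2 * n) :
    (n : ℝ) ≤ (p : ℝ) + ((α : ℝ) + 1) * ((α : ℝ) - 1/2)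
      + ((α : ℝ) + 1) * Real.sqrt (2 * (p : ℝ) + (2 * (α : ℝ) - 1)^2 / 4) := by
  have ha : (1 : ℝ) ≤ (α : ℝ) := by exact_mod_cast hα
  have hMsq : ((m : ℝ)) ^ 2 ≤ 2 * ((α : ℝ)) ^ 2 * ((p : ℝ) + (m : ℝ)) := by
    have h1 : ((m * m : ℕ) : ℝ) ≤ ((2 * α ^ 2 * n : ℕ) : ℝ) := by exact_mod_cast hm
    push_cast [hn] at h1
    nlinarith [h1]
  have hgoalcast : (n : ℝ) = (p : ℝ) + (m : ℝ) := by rw [hn]; push_cast; ring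
  rw [hgoalcast]
  exact AlpersAux.final_algebra_real (α : ℝ) (p : ℝ) (m : ℝ) ha (Nat.cast_nonneg p)
    (Nat.cast_nonneg m) hMsq

theorem alpers_type_bound
    (F1 F2 : Finset (ℤ × ℤ))
    (hU : UniquelyDetermined F1)
    (hcard : F1.card = F2.card)
    (α : ℕ) (hα : 0 < α)
    (herr : lineError F1 F2 = 2 * α)
    (p : ℕ) (hp : p = (F1 ∩ F2).card) :
    (F1.card : ℝ) ≤ (p : ℝ) + ((α : ℝ) + 1) * ((α : ℝ) - 1/2)
      + ((α : ℝ) + 1) * Real.sqrt (2 * (p : ℝ) + (2 * (α : ℝ) - 1)^2 / 4) := by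
  classical
  set A := F1 \ F2 with hAdef
  set B := F2 \ F1 with hBdef
  have hAsub : A ⊆ F1 := Finset.sdiff_subset
  have hBout : ∀ b ∈ B, b ∉ F1 := fun b hb => (Finset.mem_sdiff.1 hb).2
  -- split the line sums
  have keyRow : ∀ (X Y : Finset (ℤ × ℤ)) (i : ℤ),
      rowSum X i = rowSum (X \ Y) i + rowSum (X ∩ Y) i := by
    intro X Y i
    unfold rowSum
    conv_lhs => rw [← Finset.sdiff_union_inter X Y]
    rw [Finset.filter_union, Finset.card_union_of_disjoint]
    exact Finset.disjoint_filter_filter (Finset.disjoint_sdiff_inter X Y)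
  have keyCol : ∀ (X Y : Finset (ℤ × ℤ)) (j : ℤ),
      colSum X j = colSum (X \ Y) j + colSum (X ∩ Y) j := by
    intro X Y j
    unfold colSum
    conv_lhs => rw [← Finset.sdiff_union_inter X Y]
    rw [Finset.filter_union, Finset.card_union_of_disjoint]
    exact Finset.disjoint_filter_filter (Finset.disjoint_sdiff_inter X Y)
  have hrowdiff : ∀ i, (rowSum F1 i : ℤ) - rowSum F2 i
      = ((A.filter fun pt => pt.1 = i).card : ℤ) - (B.filter fun pt => pt.1 = i).card := by
    intro i
    have h1 := keyRow F1 F2 i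
    have h2 := keyRow F2 F1 i
    have h3 : F1 ∩ F2 = F2 ∩ F1 := Finset.inter_comm F1 F2
    rw [h3] at h1
    have e1 : rowSum A i = (A.filter fun pt => pt.1 = i).card := rfl
    have e2 : rowSum B i = (B.filter fun pt => pt.1 = i).card := rfl
    rw [← hAdef] at h1
    rw [← hBdef] at h2
    rw [← e1, ← e2]
    omega
  have hcoldiff : ∀ j, (colSum F1 j : ℤ) - colSum F2 j
      = ((A.filter fun pt => pt.2 = j).card : ℤ) - (B.filter fun pt => pt.2 = j).card := by
    intro j
    have h1 := keyCol F1 F2 j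
    have h2 := keyCol F2 F1 j
    have h3 : F1 ∩ F2 = F2 ∩ F1 := Finset.inter_comm F1 F2
    rw [h3] at h1
    have e1 : colSum A j = (A.filter fun pt => pt.2 = j).card := rfl
    have e2 : colSum B j = (B.filter fun pt => pt.2 = j).card := rfl
    rw [← hAdef] at h1
    rw [← hBdef] at h2
    rw [← e1, ← e2]
    omega
  -- identify lineError with the discrepancy used in `core`
  have hfilterA : ∀ (proj : ℤ × ℤ → ℤ) (i : ℤ), i ∉ (A ∪ B).image proj →
      (A.filter fun pt => proj pt = i) = ∅ ∧ (B.filter fun pt => proj pt = i) = ∅ := by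
    intro proj i hi
    constructor <;> rw [Finset.filter_eq_empty_iff] <;> intro pt hpt hproj <;> exact
      hi (Finset.mem_image.2 ⟨pt, by simp [Finset.mem_union, hpt], hproj⟩)
  have hsumrow : ∑ᶠ i : ℤ, |(rowSum F1 i : ℤ) - rowSum F2 i|
      = (AlpersAux.Dproj A B Prod.fst : ℤ) := by
    rw [finsum_eq_finset_sum_of_support_subset _
      (s := (A ∪ B).image Prod.fst) ?_]
    · rw [AlpersAux.Dproj, Nat.cast_sum]
      apply Finset.sum_congr rfl
      intro i _
      rw [hrowdiff i, Int.abs_eq_natAbs]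
    · intro i hi
      simp only [Function.mem_support] at hi
      by_contra hmem
      apply hi
      obtain ⟨hAe, hBe⟩ := hfilterA Prod.fst i hmem
      rw [hrowdiff i, hAe, hBe]
      simp
  have hsumcol : ∑ᶠ j : ℤ, |(colSum F1 j : ℤ) - colSum F2 j|
      = (AlpersAux.Dproj A B Prod.snd : ℤ) := by
    rw [finsum_eq_finset_sum_of_support_subset _
      (s := (A ∪ B).image Prod.snd) ?_]
    · rw [AlpersAux.Dproj, Nat.cast_sum]
      apply Finset.sum_congr rfl
      intro j _
      rw [hcoldiff j, Int.abs_eq_natAbs]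
    · intro j hj
      simp only [Function.mem_support] at hj
      by_contra hmem
      apply hj
      obtain ⟨hAe, hBe⟩ := hfilterA Prod.snd j hmem
      rw [hcoldiff j, hAe, hBe]
      simp
  have hk : AlpersAux.Dproj A B Prod.fst + AlpersAux.Dproj A B Prod.snd = 2 * α := by
    have := herr
    rw [lineError, hsumrow, hsumcol] at this
    exact_mod_cast this
  have hcore := AlpersAux.core F1 hU (2 * α) A B hAsub hBout hk
  -- convert to m * m ≤ 2 α² n
  set m := A.card with hmdef
  set z := Nat.sqrt (2 * F1.card) with hzdef
  have hm_le : m ≤ α * z := by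
    have h2 : 2 * α * z = 2 * (α * z) := by ring
    rw [h2] at hcore
    omega
  have hmm : m * m ≤ 2 * α ^ 2 * F1.card := by
    have h1 : m * m ≤ (α * z) * (α * z) := Nat.mul_le_mul hm_le hm_le
    have h2 : (α * z) * (α * z) = (α * α) * (z * z) := by ring
    have h3 : z * z ≤ 2 * F1.card := Nat.sqrt_le _
    calc m * m ≤ (α * α) * (z * z) := by rw [← h2]; exact h1
      _ ≤ (α * α) * (2 * F1.card) := Nat.mul_le_mul_left _ h3
      _ = 2 * α ^ 2 * F1.card := by ring
  have hn : F1.card = p + m := by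
    have h := Finset.card_inter_add_card_sdiff F1 F2
    rw [← hAdef] at h
    omega
  exact AlpersAux.final_algebra α p m F1.card hα hn hmm
end

section
/- For every integer m ≥ 1 there exist finite subsets F1 and F2 of ℤ² such that F1 is uniquely determined by its row and column sums, |F1| = |F2| = 2^m + m·2^{m−1}, F1 ∩ F2 = ∅, and the error in the line sums equals 2·2^m (i.e. α = 2^m, so that |F1| = α + (1/2)·α·log₂ α). -/
/-! ### Auxiliary constructions -/

/-- Row lengths of the binary staircase: row `0` has `2^(n+1)` cells, row `i ≥ 1`
has `2^(n - log2 i)` cells. -/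
def Lf (n i : ℕ) : ℕ := if i = 0 then 2 ^ (n + 1) else 2 ^ (n - Nat.log 2 i)

/-- Column sets of the companion set `F2`. -/
def T2f (n i : ℕ) : Finset ℕ :=
  if i = 0 then Finset.Ico (2 ^ (n + 1)) (2 ^ (n + 1) + 2 ^ n)
  else if i < 2 ^ (n + 1) then Finset.Ico (Lf n i) (2 * Lf n i)
  else {0}

/-- Build a finite subset of `ℤ²` from row data in `ℕ²`. -/
def bld (R : Finset ℕ) (T : ℕ → Finset ℕ) : Finset (ℤ × ℤ) :=
  R.biUnion fun i => (T i).image fun j : ℕ => ((i : ℤ), (j : ℤ))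

def F1f (n : ℕ) : Finset (ℤ × ℤ) := bld (Finset.range (2 ^ (n + 1))) (fun i => Finset.range (Lf n i))

def F2f (n : ℕ) : Finset (ℤ × ℤ) := bld (Finset.range (2 ^ (n + 1) + 2 ^ n)) (T2f n)

lemma mem_bld {R : Finset ℕ} {T : ℕ → Finset ℕ} {p : ℤ × ℤ} :
    p ∈ bld R T ↔ ∃ i ∈ R, ∃ j ∈ T i, p = ((i : ℤ), (j : ℤ)) := by
  simp only [bld, Finset.mem_biUnion, Finset.mem_image]
  constructor
  · rintro ⟨i, hi, j, hj, rfl⟩; exact ⟨i, hi, j, hj, rfl⟩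
  · rintro ⟨i, hi, j, hj, rfl⟩; exact ⟨i, hi, j, hj, rfl⟩


lemma bld_disj (T : ℕ → Finset ℕ) {R : Finset ℕ} :
    ∀ x ∈ R, ∀ y ∈ R, x ≠ y →
      Disjoint ((T x).image fun j : ℕ => ((x : ℤ), (j : ℤ)))
        ((T y).image fun j : ℕ => ((y : ℤ), (j : ℤ))) := by
  intro x _ y _ hxy
  rw [Finset.disjoint_left]
  rintro p hp hq
  simp only [Finset.mem_image] at hp hq
  obtain ⟨a, _, rfl⟩ := hp
  obtain ⟨b, _, h⟩ := hq
  have : (y : ℤ) = (x : ℤ) := congrArg Prod.fst h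
  exact hxy (by exact_mod_cast this.symm)

lemma card_bld (R : Finset ℕ) (T : ℕ → Finset ℕ) :
    (bld R T).card = ∑ i ∈ R, (T i).card := by
  rw [bld, Finset.card_biUnion (bld_disj T)]
  exact Finset.sum_congr rfl fun i _ =>
    Finset.card_image_of_injective _ (fun a b h => by simpa using h)

lemma rowSum_bld (R : Finset ℕ) (T : ℕ → Finset ℕ) (z : ℤ) :
    rowSum (bld R T) z = ∑ i ∈ R, if (i : ℤ) = z then (T i).card else 0 := by
  unfold rowSum bld
  rw [Finset.filter_biUnion]
  rw [Finset.card_biUnion (fun x hx y hy hxy =>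
    (bld_disj T x hx y hy hxy).mono (Finset.filter_subset _ _) (Finset.filter_subset _ _))]
  refine Finset.sum_congr rfl fun i _ => ?_
  by_cases h : (i : ℤ) = z
  · rw [if_pos h]
    have : (((T i).image fun j : ℕ => ((i : ℤ), (j : ℤ))).filter fun p => p.1 = z)
        = (T i).image fun j : ℕ => ((i : ℤ), (j : ℤ)) := by
      refine Finset.filter_true_of_mem ?_
      rintro p hp
      simp only [Finset.mem_image] at hp
      obtain ⟨a, _, rfl⟩ := hp
      exact h
    rw [this, Finset.card_image_of_injective _ (fun a b h => by simpa using h)]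
  · rw [if_neg h]
    convert Finset.card_empty
    rw [Finset.filter_eq_empty_iff]
    rintro p hp
    simp only [Finset.mem_image] at hp
    obtain ⟨a, _, rfl⟩ := hp
    exact h

lemma rowSum_bld_cast (R : Finset ℕ) (T : ℕ → Finset ℕ) (k : ℕ) :
    rowSum (bld R T) (k : ℤ) = if k ∈ R then (T k).card else 0 := by
  rw [rowSum_bld]
  simp only [Nat.cast_inj]
  exact Finset.sum_ite_eq' R k fun i => (T i).card

lemma rowSum_bld_out (R : Finset ℕ) (T : ℕ → Finset ℕ) (z : ℤ)
    (hz : ∀ k ∈ R, (k : ℤ) ≠ z) : rowSum (bld R T) z = 0 := by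
  rw [rowSum_bld]
  exact Finset.sum_eq_zero fun i hi => if_neg (hz i hi)

lemma colSum_eq_rowSum_of_symm {F : Finset (ℤ × ℤ)} (h : ∀ p ∈ F, p.swap ∈ F) (z : ℤ) :
    colSum F z = rowSum F z := by
  unfold colSum rowSum
  refine Finset.card_bij' (fun p _ => p.swap) (fun p _ => p.swap) ?_ ?_ ?_ ?_ <;>
    intro p hp <;> simp only [Finset.mem_filter, Prod.fst_swap, Prod.snd_swap,
      Prod.swap_swap] at hp ⊢ <;>
    first
      | exact ⟨h p hp.1, hp.2⟩
      | rfl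

/-! ### Facts about `Lf` -/

lemma Lf_pos (n i : ℕ) : 0 < Lf n i := by
  unfold Lf; split <;> positivity

lemma Lf_le (n i : ℕ) : Lf n i ≤ 2 ^ (n + 1) := by
  unfold Lf; split
  · exact le_rfl
  · exact Nat.pow_le_pow_right (by norm_num) (by omega)

lemma Lf_zero (n : ℕ) : Lf n 0 = 2 ^ (n + 1) := by simp [Lf]

lemma log_le_n {n i : ℕ} (h1 : i ≠ 0) (h2 : i < 2 ^ (n + 1)) : Nat.log 2 i ≤ n := by
  have := Nat.log_lt_of_lt_pow h1 h2; omega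

lemma Lf_symm {n i j : ℕ} (hi : i < 2 ^ (n + 1)) (hj : j < Lf n i) : i < Lf n j := by
  rcases Nat.eq_zero_or_pos i with rfl | hi1
  · exact Lf_pos n j
  rcases Nat.eq_zero_or_pos j with rfl | hj1
  · rw [Lf_zero]; exact hi
  have ha : Nat.log 2 i ≤ n := log_le_n (by omega) hi
  rw [Lf, if_neg (by omega)] at hj
  have hb : Nat.log 2 j < n - Nat.log 2 i :=
    (Nat.log_lt_iff_lt_pow (by norm_num) (by omega)).2 hj
  rw [Lf, if_neg (by omega)]
  exact (Nat.log_lt_iff_lt_pow (by norm_num) (by omega)).1 (by omega)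

lemma Lf_mid_symm {n i j : ℕ} (hi0 : i ≠ 0) (hi : i < 2 ^ (n + 1))
    (h1 : Lf n i ≤ j) (h2 : j < 2 * Lf n i) :
    j ≠ 0 ∧ j < 2 ^ (n + 1) ∧ Lf n j ≤ i ∧ i < 2 * Lf n j := by
  have ha : Nat.log 2 i ≤ n := log_le_n hi0 hi
  rw [Lf, if_neg hi0] at h1 h2
  set k := n - Nat.log 2 i with hk
  have h2' : j < 2 ^ (k + 1) := by rw [pow_succ]; omega
  have hjk : Nat.log 2 j = k := Nat.log_eq_of_pow_le_of_lt_pow h1 h2'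
  have hj0 : j ≠ 0 := by have := Nat.one_le_two_pow (n := k); omega
  have hjlt : j < 2 ^ (n + 1) := lt_of_lt_of_le h2' (Nat.pow_le_pow_right (by norm_num) (by omega))
  have hLj : Lf n j = 2 ^ Nat.log 2 i := by
    rw [Lf, if_neg hj0, hjk]
    congr 1; omega
  refine ⟨hj0, hjlt, ?_, ?_⟩
  · rw [hLj]; exact Nat.pow_log_le_self 2 hi0
  · rw [hLj]
    have := Nat.lt_pow_succ_log_self (b := 2) (by norm_num) i
    calc i < 2 ^ (Nat.log 2 i + 1) := this
    _ = 2 * 2 ^ Nat.log 2 i := by rw [pow_succ]; ring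

/-! ### Membership characterizations -/

lemma mem_F1 {n : ℕ} {p : ℤ × ℤ} :
    p ∈ F1f n ↔ ∃ i j : ℕ, i < 2 ^ (n + 1) ∧ j < Lf n i ∧ p = ((i : ℤ), (j : ℤ)) := by
  rw [F1f, mem_bld]
  simp only [Finset.mem_range]
  constructor
  · rintro ⟨i, hi, j, hj, rfl⟩; exact ⟨i, j, hi, hj, rfl⟩
  · rintro ⟨i, j, hi, hj, rfl⟩; exact ⟨i, hi, j, hj, rfl⟩

lemma mem_F2 {n : ℕ} {p : ℤ × ℤ} :
    p ∈ F2f n ↔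
      (∃ j : ℕ, 2 ^ (n + 1) ≤ j ∧ j < 2 ^ (n + 1) + 2 ^ n ∧ p = ((0 : ℤ), (j : ℤ))) ∨
      (∃ i j : ℕ, i ≠ 0 ∧ i < 2 ^ (n + 1) ∧ Lf n i ≤ j ∧ j < 2 * Lf n i ∧
        p = ((i : ℤ), (j : ℤ))) ∨
      (∃ i : ℕ, 2 ^ (n + 1) ≤ i ∧ i < 2 ^ (n + 1) + 2 ^ n ∧ p = ((i : ℤ), (0 : ℤ))) := by
  rw [F2f, mem_bld]
  constructor
  · rintro ⟨i, hi, j, hj, rfl⟩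
    rw [Finset.mem_range] at hi
    rw [T2f] at hj
    by_cases h0 : i = 0
    · subst h0
      rw [if_pos rfl, Finset.mem_Ico] at hj
      exact Or.inl ⟨j, hj.1, hj.2, by norm_num⟩
    · rw [if_neg h0] at hj
      by_cases h1 : i < 2 ^ (n + 1)
      · rw [if_pos h1, Finset.mem_Ico] at hj
        exact Or.inr (Or.inl ⟨i, j, h0, h1, hj.1, hj.2, rfl⟩)
      · rw [if_neg h1, Finset.mem_singleton] at hj
        subst hj
        exact Or.inr (Or.inr ⟨i, by omega, by omega, by norm_num⟩)
  · rintro (⟨j, hj1, hj2, rfl⟩ | ⟨i, j, h0, h1, h2, h3, rfl⟩ | ⟨i, hi1, hi2, rfl⟩)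
    · refine ⟨0, ?_, j, ?_, by norm_num⟩
      · rw [Finset.mem_range]; positivity
      · rw [T2f, if_pos rfl, Finset.mem_Ico]; exact ⟨hj1, hj2⟩
    · refine ⟨i, ?_, j, ?_, rfl⟩
      · rw [Finset.mem_range]; omega
      · rw [T2f, if_neg h0, if_pos h1, Finset.mem_Ico]; exact ⟨h2, h3⟩
    · have hpow : (0 : ℕ) < 2 ^ (n + 1) := by positivity
      refine ⟨i, ?_, 0, ?_, by norm_num⟩
      · rw [Finset.mem_range]; omega
      · rw [T2f, if_neg (by omega), if_neg (by omega), Finset.mem_singleton]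

lemma sym_F1 {n : ℕ} : ∀ p ∈ F1f n, p.swap ∈ F1f n := by
  intro p hp
  rw [mem_F1] at hp ⊢
  obtain ⟨i, j, hi, hj, rfl⟩ := hp
  exact ⟨j, i, lt_of_lt_of_le hj (Lf_le n i), Lf_symm hi hj, rfl⟩

lemma sym_F2 {n : ℕ} : ∀ p ∈ F2f n, p.swap ∈ F2f n := by
  intro p hp
  rw [mem_F2] at hp ⊢
  rcases hp with ⟨j, h1, h2, rfl⟩ | ⟨i, j, h0, h1, h2, h3, rfl⟩ | ⟨i, h1, h2, rfl⟩
  · exact Or.inr (Or.inr ⟨j, h1, h2, rfl⟩)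
  · obtain ⟨hj0, hjlt, hl, hr⟩ := Lf_mid_symm h0 h1 h2 h3
    exact Or.inr (Or.inl ⟨j, i, hj0, hjlt, hl, hr, rfl⟩)
  · exact Or.inl ⟨i, h1, h2, rfl⟩

/-! ### The key sum -/

lemma sumL (n : ℕ) : ∑ i ∈ Finset.Ico 1 (2 ^ (n + 1)), 2 ^ (n - Nat.log 2 i) = (n + 1) * 2 ^ n := by
  induction n with
  | zero =>
    show ∑ i ∈ Finset.Ico 1 (1 + 1), 2 ^ (0 - Nat.log 2 i) = 1
    rw [Finset.sum_Ico_succ_top le_rfl]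
    simp
  | succ n ih =>
    have h1 : (1 : ℕ) ≤ 2 ^ (n + 1) := Nat.one_le_two_pow
    have h2 : 2 ^ (n + 1) ≤ 2 ^ (n + 2) := Nat.pow_le_pow_right (by norm_num) (by omega)
    rw [← Finset.sum_Ico_consecutive _ h1 h2]
    have e1 : ∑ i ∈ Finset.Ico 1 (2 ^ (n + 1)), 2 ^ (n + 1 - Nat.log 2 i)
        = ∑ i ∈ Finset.Ico 1 (2 ^ (n + 1)), 2 * 2 ^ (n - Nat.log 2 i) := by
      refine Finset.sum_congr rfl fun i hi => ?_
      rw [Finset.mem_Ico] at hi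
      have hlog : Nat.log 2 i ≤ n := log_le_n (by omega) hi.2
      rw [show n + 1 - Nat.log 2 i = (n - Nat.log 2 i) + 1 by omega, pow_succ]
      ring
    have e2 : ∑ i ∈ Finset.Ico (2 ^ (n + 1)) (2 ^ (n + 2)), 2 ^ (n + 1 - Nat.log 2 i)
        = 2 ^ (n + 1) := by
      have : ∀ i ∈ Finset.Ico (2 ^ (n + 1)) (2 ^ (n + 2)), 2 ^ (n + 1 - Nat.log 2 i) = 1 := by
        intro i hi
        rw [Finset.mem_Ico] at hi
        have : Nat.log 2 i = n + 1 := Nat.log_eq_of_pow_le_of_lt_pow hi.1 hi.2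
        rw [this]; simp
      rw [Finset.sum_congr rfl this, Finset.sum_const, Nat.card_Ico, smul_eq_mul, mul_one]
      rw [pow_succ]; omega
    rw [e1, e2, ← Finset.mul_sum, ih]
    ring

/-! ### Cardinalities -/

lemma card_F1 (n : ℕ) : (F1f n).card = 2 ^ (n + 1) + (n + 1) * 2 ^ n := by
  rw [F1f, card_bld]
  have : ∑ i ∈ Finset.range (2 ^ (n + 1)), (Finset.range (Lf n i)).card
      = ∑ i ∈ Finset.range (2 ^ (n + 1)), Lf n i := by
    simp [Finset.card_range]
  rw [this, Finset.range_eq_Ico,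
    Finset.sum_eq_sum_Ico_succ_bot (by positivity : 0 < 2 ^ (n + 1))]
  have : ∑ i ∈ Finset.Ico 1 (2 ^ (n + 1)), Lf n i
      = ∑ i ∈ Finset.Ico 1 (2 ^ (n + 1)), 2 ^ (n - Nat.log 2 i) := by
    refine Finset.sum_congr rfl fun i hi => ?_
    rw [Finset.mem_Ico] at hi
    rw [Lf, if_neg (by omega)]
  rw [this, sumL, Lf_zero]

lemma card_T2f (n k : ℕ) :
    (T2f n k).card = if k = 0 then 2 ^ n else if k < 2 ^ (n + 1) then Lf n k else 1 := by
  rw [T2f]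
  split_ifs with h1 h2
  · rw [Nat.card_Ico, Nat.add_sub_cancel_left]
  · rw [Nat.card_Ico, two_mul, Nat.add_sub_cancel]
  · simp

lemma card_F2 (n : ℕ) : (F2f n).card = 2 ^ (n + 1) + (n + 1) * 2 ^ n := by
  rw [F2f, card_bld]
  rw [Finset.range_eq_Ico,
    Finset.sum_eq_sum_Ico_succ_bot (by positivity : 0 < 2 ^ (n + 1) + 2 ^ n)]
  have hM : (1 : ℕ) ≤ 2 ^ (n + 1) := Nat.one_le_two_pow
  rw [← Finset.sum_Ico_consecutive _ hM (by omega : 2 ^ (n + 1) ≤ 2 ^ (n + 1) + 2 ^ n)]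
  have e0 : (T2f n 0).card = 2 ^ n := by rw [card_T2f]; simp
  have e1 : ∑ i ∈ Finset.Ico 1 (2 ^ (n + 1)), (T2f n i).card
      = ∑ i ∈ Finset.Ico 1 (2 ^ (n + 1)), 2 ^ (n - Nat.log 2 i) := by
    refine Finset.sum_congr rfl fun i hi => ?_
    rw [Finset.mem_Ico] at hi
    rw [card_T2f, if_neg (by omega), if_pos hi.2, Lf, if_neg (by omega)]
  have e2 : ∑ i ∈ Finset.Ico (2 ^ (n + 1)) (2 ^ (n + 1) + 2 ^ n), (T2f n i).card
      = 2 ^ n := by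
    have : ∀ i ∈ Finset.Ico (2 ^ (n + 1)) (2 ^ (n + 1) + 2 ^ n), (T2f n i).card = 1 := by
      intro i hi
      rw [Finset.mem_Ico] at hi
      rw [card_T2f, if_neg (by omega), if_neg (by omega)]
    rw [Finset.sum_congr rfl this, Finset.sum_const, Nat.card_Ico, smul_eq_mul, mul_one]
    omega
  rw [e0, e1, e2, sumL]
  ring

/-! ### Disjointness -/

lemma disj_F1_F2 (n : ℕ) : F1f n ∩ F2f n = ∅ := by
  rw [Finset.eq_empty_iff_forall_notMem]
  intro p hp
  rw [Finset.mem_inter] at hp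
  obtain ⟨h1, h2⟩ := hp
  rw [mem_F1] at h1
  obtain ⟨i, j, hi, hj, rfl⟩ := h1
  rw [mem_F2] at h2
  rcases h2 with ⟨j', hj1, hj2, he⟩ | ⟨i', j', h0, h1', h2', h3', he⟩ | ⟨i', hi1, hi2, he⟩
  · rw [Prod.mk.injEq] at he
    have hi0 : (i : ℤ) = 0 := he.1
    have hjj : (j : ℤ) = (j' : ℤ) := he.2
    have : i = 0 := by exact_mod_cast hi0
    subst this
    rw [Lf_zero] at hj
    have : j = j' := by exact_mod_cast hjj
    omega
  · rw [Prod.mk.injEq] at he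
    have : i = i' := by exact_mod_cast he.1
    subst this
    have : j = j' := by exact_mod_cast he.2
    omega
  · rw [Prod.mk.injEq] at he
    have : i = i' := by exact_mod_cast he.1
    omega

/-! ### Row sums -/

lemma rS1 (n k : ℕ) :
    rowSum (F1f n) (k : ℤ) = if k < 2 ^ (n + 1) then Lf n k else 0 := by
  rw [F1f, rowSum_bld_cast]
  simp [Finset.mem_range, Finset.card_range]

lemma rS2 (n k : ℕ) :
    rowSum (F2f n) (k : ℤ) = if k = 0 then 2 ^ n else if k < 2 ^ (n + 1) then Lf n k
      else if k < 2 ^ (n + 1) + 2 ^ n then 1 else 0 := by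
  rw [F2f, rowSum_bld_cast]
  simp only [Finset.mem_range]
  rw [card_T2f]
  have h1 := Nat.one_le_two_pow (n := n)
  have h2 := Nat.one_le_two_pow (n := n + 1)
  split_ifs <;> omega

/-! ### The error sum -/

lemma row_err (n : ℕ) :
    ∑ᶠ z : ℤ, |(rowSum (F1f n) z : ℤ) - (rowSum (F2f n) z : ℤ)| = 2 ^ (n + 1) := by
  classical
  set M := 2 ^ (n + 1) with hMdef
  set H := 2 ^ n with hHdef
  set f : ℤ → ℤ := fun z => |(rowSum (F1f n) z : ℤ) - (rowSum (F2f n) z : ℤ)| with hf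
  have hsupp : Function.support f ⊆ ((Finset.range (M + H)).image (Nat.cast : ℕ → ℤ) : Finset ℤ) := by
    intro z hz
    rw [Function.mem_support] at hz
    by_contra hmem
    apply hz
    have hz' : ∀ k ∈ Finset.range (M + H), (k : ℤ) ≠ z := by
      intro k hk he
      exact hmem (by
        simp only [Finset.coe_image, Set.mem_image, Finset.mem_coe]
        exact ⟨k, hk, he⟩)
    have h1 : rowSum (F1f n) z = 0 := by
      rw [F1f]
      refine rowSum_bld_out _ _ _ fun k hk => hz' k ?_
      rw [Finset.mem_range] at hk ⊢
      omega
    have h2 : rowSum (F2f n) z = 0 := by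
      rw [F2f]
      exact rowSum_bld_out _ _ _ hz'
    rw [hf]
    simp [h1, h2]
  rw [finsum_eq_sum_of_support_subset f hsupp]
  rw [Finset.sum_image (fun a _ b _ h => by exact_mod_cast h)]
  have hpt : ∀ k ∈ Finset.range (M + H),
      f (k : ℤ) = if k = 0 then (H : ℤ) else if k < M then 0 else 1 := by
    intro k hk
    rw [Finset.mem_range] at hk
    rw [hf]
    simp only
    rw [rS1, rS2]
    have hH1 : (1 : ℕ) ≤ H := Nat.one_le_two_pow
    by_cases h0 : k = 0
    · subst h0
      rw [if_pos (by positivity), if_pos rfl, if_pos rfl, Lf_zero]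
      rw [show ((2 ^ (n + 1) : ℕ) : ℤ) - ((2 ^ n : ℕ) : ℤ) = ((2 ^ n : ℕ) : ℤ) by
        push_cast; ring]
      rw [abs_of_nonneg (by positivity)]
    · rw [if_neg h0]
      by_cases h1 : k < M
      · rw [if_pos h1, if_pos h1, if_neg h0, if_pos h1]
        simp
      · rw [if_neg h1, if_neg h1, if_neg h0, if_neg h1, if_pos (by omega)]
        simp
  rw [Finset.sum_congr rfl hpt]
  have hM1 : (1 : ℕ) ≤ M := Nat.one_le_two_pow
  rw [Finset.range_eq_Ico, Finset.sum_eq_sum_Ico_succ_bot (by omega : 0 < M + H)]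
  rw [← Finset.sum_Ico_consecutive _ (by omega : (1:ℕ) ≤ M) (by omega : M ≤ M + H)]
  rw [if_pos rfl]
  have e1 : ∑ i ∈ Finset.Ico 1 M, (if i = 0 then (H : ℤ) else if i < M then 0 else 1) = 0 := by
    refine Finset.sum_eq_zero fun i hi => ?_
    rw [Finset.mem_Ico] at hi
    rw [if_neg (by omega), if_pos hi.2]
  have e2 : ∑ i ∈ Finset.Ico M (M + H), (if i = 0 then (H : ℤ) else if i < M then 0 else 1)
      = (H : ℤ) := by
    have : ∀ i ∈ Finset.Ico M (M + H),
        (if i = 0 then (H : ℤ) else if i < M then 0 else 1) = 1 := by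
      intro i hi
      rw [Finset.mem_Ico] at hi
      rw [if_neg (by omega), if_neg (by omega)]
    rw [Finset.sum_congr rfl this, Finset.sum_const, Nat.card_Ico, nsmul_eq_mul, mul_one,
      Nat.add_sub_cancel_left]
  rw [e1, e2]
  push_cast
  ring_nf
  norm_cast

/-! ### Uniqueness -/

lemma sum_fst_eq (G : Finset (ℤ × ℤ)) (I : Finset ℤ) (h : ∀ p ∈ G, p.1 ∈ I) (f : ℤ → ℤ) :
    ∑ p ∈ G, f p.1 = ∑ i ∈ I, (rowSum G i : ℤ) * f i := by
  rw [← Finset.sum_fiberwise_of_maps_to h (fun p => f p.1)]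
  refine Finset.sum_congr rfl fun i _ => ?_
  have : ∀ p ∈ G.filter (fun p => p.1 = i), f p.1 = f i := by
    intro p hp
    rw [Finset.mem_filter] at hp
    rw [hp.2]
  rw [Finset.sum_congr rfl this, Finset.sum_const, rowSum, nsmul_eq_mul]

lemma sum_snd_eq (G : Finset (ℤ × ℤ)) (J : Finset ℤ) (h : ∀ p ∈ G, p.2 ∈ J) (g : ℤ → ℤ) :
    ∑ p ∈ G, g p.2 = ∑ j ∈ J, (colSum G j : ℤ) * g j := by
  rw [← Finset.sum_fiberwise_of_maps_to h (fun p => g p.2)]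
  refine Finset.sum_congr rfl fun j _ => ?_
  have : ∀ p ∈ G.filter (fun p => p.2 = j), g p.2 = g j := by
    intro p hp
    rw [Finset.mem_filter] at hp
    rw [hp.2]
  rw [Finset.sum_congr rfl this, Finset.sum_const, colSum, nsmul_eq_mul]

lemma additive_unique (F : Finset (ℤ × ℤ)) (f g : ℤ → ℤ)
    (hpos : ∀ p ∈ F, 0 < f p.1 + g p.2)
    (hneg : ∀ p : ℤ × ℤ, p ∉ F → f p.1 + g p.2 < 0) :
    UniquelyDetermined F := by
  classical
  intro G hr hc
  set I := (G ∪ F).image Prod.fst with hI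
  set J := (G ∪ F).image Prod.snd with hJ
  have hGI : ∀ p ∈ G, p.1 ∈ I := fun p hp =>
    Finset.mem_image_of_mem _ (Finset.mem_union_left _ hp)
  have hFI : ∀ p ∈ F, p.1 ∈ I := fun p hp =>
    Finset.mem_image_of_mem _ (Finset.mem_union_right _ hp)
  have hGJ : ∀ p ∈ G, p.2 ∈ J := fun p hp =>
    Finset.mem_image_of_mem _ (Finset.mem_union_left _ hp)
  have hFJ : ∀ p ∈ F, p.2 ∈ J := fun p hp =>
    Finset.mem_image_of_mem _ (Finset.mem_union_right _ hp)
  have key : ∑ p ∈ G, (f p.1 + g p.2) = ∑ p ∈ F, (f p.1 + g p.2) := by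
    rw [Finset.sum_add_distrib, Finset.sum_add_distrib,
      sum_fst_eq G I hGI f, sum_snd_eq G J hGJ g,
      sum_fst_eq F I hFI f, sum_snd_eq F J hFJ g]
    congr 1
    · exact Finset.sum_congr rfl fun i _ => by rw [hr i]
    · exact Finset.sum_congr rfl fun j _ => by rw [hc j]
  set w : ℤ × ℤ → ℤ := fun p => f p.1 + g p.2 with hw
  have hsplitG : ∑ p ∈ G, w p
      = ∑ p ∈ G.filter (· ∈ F), w p + ∑ p ∈ G.filter (· ∉ F), w p :=
    (Finset.sum_filter_add_sum_filter_not G _ w).symm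
  have hsplitF : ∑ p ∈ F, w p
      = ∑ p ∈ F.filter (· ∈ G), w p + ∑ p ∈ F.filter (· ∉ G), w p :=
    (Finset.sum_filter_add_sum_filter_not F _ w).symm
  have hff : G.filter (· ∈ F) = F.filter (· ∈ G) := by
    ext p
    simp only [Finset.mem_filter]
    tauto
  have hE : ∑ p ∈ G.filter (· ∉ F), w p = ∑ p ∈ F.filter (· ∉ G), w p := by
    have := key
    rw [hsplitG, hsplitF, hff] at this
    omega
  have hGF : G.filter (· ∉ F) = ∅ := by
    by_contra hne
    have hne' : (G.filter (· ∉ F)).Nonempty := Finset.nonempty_iff_ne_empty.2 hne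
    have hlt : ∑ p ∈ G.filter (· ∉ F), w p < 0 := by
      refine Finset.sum_neg (fun p hp => ?_) hne'
      rw [Finset.mem_filter] at hp
      exact hneg p hp.2
    have hge : 0 ≤ ∑ p ∈ F.filter (· ∉ G), w p := by
      refine Finset.sum_nonneg fun p hp => ?_
      rw [Finset.mem_filter] at hp
      exact le_of_lt (hpos p hp.1)
    omega
  have hFG : F.filter (· ∉ G) = ∅ := by
    by_contra hne
    have hne' : (F.filter (· ∉ G)).Nonempty := Finset.nonempty_iff_ne_empty.2 hne
    have hgt : 0 < ∑ p ∈ F.filter (· ∉ G), w p := by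
      refine Finset.sum_pos (fun p hp => ?_) hne'
      rw [Finset.mem_filter] at hp
      exact hpos p hp.1
    have hle : ∑ p ∈ G.filter (· ∉ F), w p ≤ 0 := by
      refine Finset.sum_nonpos fun p hp => ?_
      rw [Finset.mem_filter] at hp
      exact le_of_lt (hneg p hp.2)
    omega
  have hsub1 : G ⊆ F := by
    intro p hp
    by_contra hpf
    have : p ∈ G.filter (· ∉ F) := Finset.mem_filter.2 ⟨hp, hpf⟩
    rw [hGF] at this
    exact absurd this (Finset.notMem_empty p)
  have hsub2 : F ⊆ G := by
    intro p hp
    by_contra hpg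
    have : p ∈ F.filter (· ∉ G) := Finset.mem_filter.2 ⟨hp, hpg⟩
    rw [hFG] at this
    exact absurd this (Finset.notMem_empty p)
  exact Finset.Subset.antisymm hsub1 hsub2

lemma unique_F1 (n : ℕ) : UniquelyDetermined (F1f n) := by
  classical
  set M : ℤ := ((2 ^ (n + 1) : ℕ) : ℤ) with hM
  have hMpos : 0 < M := by positivity
  set f : ℤ → ℤ := fun z => if 0 ≤ z ∧ z < M then 2 * (Lf n z.toNat : ℤ) - 1 else -(4 * M)
    with hfdef
  set g : ℤ → ℤ := fun z => if 0 ≤ z ∧ z < M then -2 * z else -(4 * M) with hgdef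
  apply additive_unique (F1f n) f g
  · intro p hp
    rw [mem_F1] at hp
    obtain ⟨i, j, hi, hj, rfl⟩ := hp
    have hiM : ((i : ℤ)) < M := by rw [hM]; exact_mod_cast hi
    have hjM : ((j : ℤ)) < M := by
      rw [hM]
      have : j < 2 ^ (n + 1) := lt_of_lt_of_le hj (Lf_le n i)
      exact_mod_cast this
    rw [hfdef, hgdef]
    simp only
    rw [if_pos ⟨by positivity, hiM⟩, if_pos ⟨by positivity, hjM⟩]
    rw [Int.toNat_natCast]
    have hj' : (j : ℤ) < (Lf n i : ℤ) := by exact_mod_cast hj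
    omega
  · intro p hp
    obtain ⟨x, y⟩ := p
    simp only
    rw [hfdef, hgdef]
    simp only
    by_cases hx : 0 ≤ x ∧ x < M
    · rw [if_pos hx]
      have hxt : (x.toNat : ℤ) = x := Int.toNat_of_nonneg hx.1
      have hxM : x.toNat < 2 ^ (n + 1) := by
        have := hx.2
        rw [hM] at this
        omega
      have hLle : (Lf n x.toNat : ℤ) ≤ M := by
        rw [hM]
        exact_mod_cast Lf_le n x.toNat
      by_cases hy : 0 ≤ y ∧ y < M
      · rw [if_pos hy]
        have hyt : (y.toNat : ℤ) = y := Int.toNat_of_nonneg hy.1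
        have hnm : ¬ (y.toNat < Lf n x.toNat) := by
          intro hcon
          apply hp
          rw [mem_F1]
          exact ⟨x.toNat, y.toNat, hxM, hcon, by rw [Prod.mk.injEq]; exact ⟨hxt.symm, hyt.symm⟩⟩
        have : (Lf n x.toNat : ℤ) ≤ y := by omega
        omega
      · rw [if_neg hy]
        omega
    · rw [if_neg hx]
      by_cases hy : 0 ≤ y ∧ y < M
      · rw [if_pos hy]
        omega
      · rw [if_neg hy]
        omega

/-! ### Main theorem -/

theorem disjoint_example_exists (m : ℕ) (hm : 1 ≤ m) :
    ∃ F1 F2 : Finset (ℤ × ℤ),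
      UniquelyDetermined F1 ∧
      F1.card = 2 ^ m + m * 2 ^ (m - 1) ∧
      F2.card = 2 ^ m + m * 2 ^ (m - 1) ∧
      F1 ∩ F2 = ∅ ∧
      lineError F1 F2 = 2 * 2 ^ m := by
  obtain ⟨n, rfl⟩ : ∃ n, m = n + 1 := ⟨m - 1, (Nat.succ_pred_eq_of_pos hm).symm⟩
  refine ⟨F1f n, F2f n, unique_F1 n, ?_, ?_, disj_F1_F2 n, ?_⟩
  · rw [card_F1]; simp
  · rw [card_F2]; simp
  · rw [lineError]
    have hc : ∀ z : ℤ, |(colSum (F1f n) z : ℤ) - (colSum (F2f n) z : ℤ)|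
        = |(rowSum (F1f n) z : ℤ) - (rowSum (F2f n) z : ℤ)| := by
      intro z
      rw [colSum_eq_rowSum_of_symm sym_F1 z, colSum_eq_rowSum_of_symm sym_F2 z]
    rw [finsum_congr hc, row_err]
    ring
end

section
/- For all positive integers N and α there exist finite subsets F1 and F2 of ℤ² such that F1 is uniquely determined by its row and column sums, |F1| = |F2|, the error in the line sums equals 2α, |F1 ∩ F2| = N² + N²α − Nα, and |F1| = N² + N²α + Nα (so that |F1| = |F1 ∩ F2| + 2Nα). -/
namespace LIEE

open Finset

/-- Build a planar set from a family of rows. -/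
def rowsF (s : Finset ℤ) (f : ℤ → Finset ℤ) : Finset (ℤ × ℤ) :=
  s.biUnion fun i => (f i).image fun j => (i, j)

lemma mem_rowsF {s : Finset ℤ} {f : ℤ → Finset ℤ} {p : ℤ × ℤ} :
    p ∈ rowsF s f ↔ p.1 ∈ s ∧ p.2 ∈ f p.1 := by
  obtain ⟨x, y⟩ := p
  simp only [rowsF, mem_biUnion, mem_image, Prod.mk.injEq]
  constructor
  · rintro ⟨i, hi, j, hj, rfl, rfl⟩; exact ⟨hi, hj⟩
  · rintro ⟨hx, hy⟩; exact ⟨x, hx, y, hy, rfl, rfl⟩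

lemma rowSum_rowsF (s : Finset ℤ) (f : ℤ → Finset ℤ) (i : ℤ) :
    rowSum (rowsF s f) i = if i ∈ s then (f i).card else 0 := by
  have hinj : Function.Injective (fun j => ((i, j) : ℤ × ℤ)) := by
    intro x y h; simpa using h
  unfold rowSum
  by_cases hi : i ∈ s
  · rw [if_pos hi, ← Finset.card_image_of_injective (f i) hinj]
    congr 1
    ext ⟨x, y⟩
    simp only [mem_filter, mem_rowsF, mem_image]
    constructor
    · rintro ⟨⟨hx, hy⟩, rfl⟩; exact ⟨y, hy, rfl⟩
    · rintro ⟨j, hj, h⟩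
      obtain ⟨rfl, rfl⟩ : i = x ∧ j = y := by simpa [Prod.ext_iff] using h
      exact ⟨⟨hi, hj⟩, rfl⟩
  · rw [if_neg hi, Finset.card_eq_zero, Finset.filter_eq_empty_iff]
    rintro ⟨x, y⟩ hp rfl
    exact hi (mem_rowsF.1 hp).1

lemma colSum_rowsF (s : Finset ℤ) (f : ℤ → Finset ℤ) (j : ℤ) :
    colSum (rowsF s f) j = (s.filter (fun i => j ∈ f i)).card := by
  have hinj : Function.Injective (fun i => ((i, j) : ℤ × ℤ)) := by
    intro x y h; simpa using h
  unfold colSum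
  rw [← Finset.card_image_of_injective _ hinj]
  congr 1
  ext ⟨x, y⟩
  simp only [mem_filter, mem_rowsF, mem_image]
  constructor
  · rintro ⟨⟨hx, hy⟩, rfl⟩; exact ⟨x, ⟨hx, hy⟩, rfl⟩
  · rintro ⟨i, ⟨hi, hj⟩, h⟩
    obtain ⟨rfl, rfl⟩ : i = x ∧ j = y := by simpa [Prod.ext_iff] using h
    exact ⟨⟨hi, hj⟩, rfl⟩

lemma card_rowsF (s : Finset ℤ) (f : ℤ → Finset ℤ) :
    (rowsF s f).card = ∑ i ∈ s, (f i).card := by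
  unfold rowsF
  rw [Finset.card_biUnion]
  · refine Finset.sum_congr rfl fun i _ => ?_
    exact Finset.card_image_of_injective _ (by intro x y h; simpa using h)
  · intro i _ i' _ hne
    simp only [Finset.disjoint_left, mem_image]
    rintro ⟨x, y⟩ ⟨j, _, h⟩ ⟨j', _, h'⟩
    apply hne
    have h1 : i = x := (Prod.ext_iff.1 h).1
    have h2 : i' = x := (Prod.ext_iff.1 h').1
    omega

lemma inter_rowsF (s : Finset ℤ) (f g : ℤ → Finset ℤ) :
    rowsF s f ∩ rowsF s g = rowsF s (fun i => f i ∩ g i) := by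
  ext p
  simp only [mem_inter, mem_rowsF]
  tauto

end LIEE
namespace LIEE

open Finset

/-- integer division helper -/
lemma ediv_eq_of {x q c : ℤ} (hc : 0 < c) (h1 : q * c ≤ x) (h2 : x < (q + 1) * c) :
    x / c = q := by
  have h3 : q ≤ x / c := (Int.le_ediv_iff_mul_le hc).2 h1
  have h4 : x / c < q + 1 := (Int.ediv_lt_iff_lt_mul hc).2 h2
  omega

lemma ediv_bounds (x c : ℤ) (hc : 0 < c) :
    c * (x / c) ≤ x ∧ x < c * (x / c) + c := by
  have h1 := Int.mul_ediv_add_emod x c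
  have h2 := Int.emod_nonneg x (ne_of_gt hc)
  have h3 := Int.emod_lt_of_pos x hc
  omega

section Construction

variable (N a : ℕ)

/-- row lengths of the staircase `F1` -/
def lam (i : ℤ) : ℤ :=
  if i < (N : ℤ) then (N : ℤ) + ((N : ℤ) - i) * (a : ℤ)
  else (N : ℤ) - (i - (N : ℤ)) / (a : ℤ)

/-- the set of (indices of) nonempty rows -/
def s0 : Finset ℤ := (range (N + N * a)).image (fun n : ℕ => (n : ℤ))

noncomputable def row1 (i : ℤ) : Finset ℤ := Finset.Ico 0 (lam N a i)

/-- removed cells in row `i` -/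
noncomputable def rrow (i : ℤ) : Finset ℤ :=
  if i < (N : ℤ) then Finset.Ico (lam N a i - a) (lam N a i) else {lam N a i - 1}

/-- added cells in row `i` -/
noncomputable def arow (i : ℤ) : Finset ℤ :=
  if i < (N : ℤ) then Finset.Ico (lam N a i) (lam N a i + a)
  else if i < (N : ℤ) + a then {i} else {lam N a i}

noncomputable def row2 (i : ℤ) : Finset ℤ := (row1 N a i \ rrow N a i) ∪ arow N a i

noncomputable def F1 : Finset (ℤ × ℤ) := rowsF (s0 N a) (row1 N a)

noncomputable def F2 : Finset (ℤ × ℤ) := rowsF (s0 N a) (row2 N a)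

variable {N a : ℕ} (hN : 0 < N) (ha : 0 < a)

lemma mem_s0 {i : ℤ} : i ∈ s0 N a ↔ 0 ≤ i ∧ i < (N : ℤ) + (N : ℤ) * a := by
  simp only [s0, mem_image, mem_range]
  constructor
  · rintro ⟨n, hn, rfl⟩
    constructor
    · exact Int.natCast_nonneg n
    · have : ((n : ℤ)) < ((N + N * a : ℕ) : ℤ) := by exact_mod_cast hn
      push_cast at this; linarith
  · rintro ⟨h0, h1⟩
    refine ⟨i.toNat, ?_, by omega⟩
    have : ((N + N * a : ℕ) : ℤ) = (N : ℤ) + (N : ℤ) * a := by push_cast; ring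
    omega

include ha in
lemma lam_antitone {i i' : ℤ} (h : i ≤ i') : lam N a i' ≤ lam N a i := by
  have haz : (0 : ℤ) < a := by exact_mod_cast ha
  unfold lam
  by_cases h1 : i < (N : ℤ)
  · by_cases h2 : i' < (N : ℤ)
    · rw [if_pos h1, if_pos h2]
      have : ((N : ℤ) - i') * a ≤ ((N : ℤ) - i) * a :=
        mul_le_mul_of_nonneg_right (by omega) (by omega)
      omega
    · rw [if_pos h1, if_neg h2]
      have hd : 0 ≤ (i' - (N : ℤ)) / a := Int.ediv_nonneg (by omega) (by omega)
      have : 0 ≤ ((N : ℤ) - i) * a := mul_nonneg (by omega) (by omega)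
      omega
  · have h2 : ¬ i' < (N : ℤ) := by omega
    rw [if_neg h1, if_neg h2]
    have : (i - (N : ℤ)) / a ≤ (i' - (N : ℤ)) / a := Int.ediv_le_ediv haz (by omega)
    omega

include hN ha in
lemma lam_pos {i : ℤ} (h0 : 0 ≤ i) (h1 : i < (N : ℤ) + (N : ℤ) * a) : 1 ≤ lam N a i := by
  have haz : (0 : ℤ) < a := by exact_mod_cast ha
  have hNz : (1 : ℤ) ≤ N := by exact_mod_cast hN
  unfold lam
  by_cases hc : i < (N : ℤ)
  · rw [if_pos hc]
    have : 0 ≤ ((N : ℤ) - i) * a := mul_nonneg (by omega) (by omega)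
    omega
  · rw [if_neg hc]
    have : (i - (N : ℤ)) / a < (N : ℤ) := (Int.ediv_lt_iff_lt_mul haz).2 (by linarith)
    omega

include hN ha in
lemma lam_le_top {i : ℤ} (h0 : 0 ≤ i) : lam N a i ≤ (N : ℤ) + (N : ℤ) * a := by
  have haz : (0 : ℤ) < a := by exact_mod_cast ha
  unfold lam
  by_cases hc : i < (N : ℤ)
  · rw [if_pos hc]
    have : ((N : ℤ) - i) * a ≤ (N : ℤ) * a :=
      mul_le_mul_of_nonneg_right (by omega) (by omega)
    omega
  · rw [if_neg hc]
    have hd : 0 ≤ (i - (N : ℤ)) / a := Int.ediv_nonneg (by omega) (by omega)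
    have : 0 ≤ (N : ℤ) * a := mul_nonneg (by omega) (by omega)
    omega

include hN ha in
lemma lam_ge_lower {i : ℤ} (hc : ¬ i < (N : ℤ)) (h1 : i < (N : ℤ) + (N : ℤ) * a) :
    1 ≤ lam N a i ∧ lam N a i ≤ (N : ℤ) := by
  have haz : (0 : ℤ) < a := by exact_mod_cast ha
  constructor
  · exact lam_pos hN ha (by omega) h1
  · unfold lam
    rw [if_neg hc]
    have hd : 0 ≤ (i - (N : ℤ)) / a := Int.ediv_nonneg (by omega) (by omega)
    omega

include ha in
lemma lam_ge_upper {i : ℤ} (hc : i < (N : ℤ)) :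
    (N : ℤ) + a ≤ lam N a i := by
  have haz : (0 : ℤ) < a := by exact_mod_cast ha
  unfold lam
  rw [if_pos hc]
  have : (1 : ℤ) * a ≤ ((N : ℤ) - i) * a := mul_le_mul_of_nonneg_right (by omega) (by omega)
  omega

end Construction

end LIEE
namespace LIEE

open Finset

section Counting

variable {N a : ℕ} (hN : 0 < N) (ha : 0 < a)

lemma lam_up {i : ℤ} (hc : i < (N : ℤ)) :
    lam N a i = (N : ℤ) + ((N : ℤ) - i) * a := by unfold lam; rw [if_pos hc]

lemma lam_lo {i : ℤ} (hc : ¬ i < (N : ℤ)) :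
    lam N a i = (N : ℤ) - (i - (N : ℤ)) / a := by unfold lam; rw [if_neg hc]

include hN ha in
lemma filter_rrow_card (j : ℤ) :
    ((s0 N a).filter (fun i => j ∈ rrow N a i)).card =
      if 0 ≤ j ∧ j < (N : ℤ) then a
      else if (N : ℤ) ≤ j ∧ j < (N : ℤ) + (N : ℤ) * a then 1 else 0 := by
  have haz : (0 : ℤ) < a := by exact_mod_cast ha
  have hNz : (1 : ℤ) ≤ N := by exact_mod_cast hN
  have hNa : (a : ℤ) ≤ (N : ℤ) * a := le_mul_of_one_le_left (by omega) hNz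
  have hNa2 : (N : ℤ) ≤ (N : ℤ) * a := le_mul_of_one_le_right (by omega) (by exact_mod_cast ha)
  by_cases hA : 0 ≤ j ∧ j < (N : ℤ)
  · rw [if_pos hA]
    have hset : (s0 N a).filter (fun i => j ∈ rrow N a i) =
        Finset.Ico ((N : ℤ) + ((N : ℤ) - 1 - j) * a) ((N : ℤ) + ((N : ℤ) - j) * a) := by
      ext i
      simp only [mem_filter, mem_s0, Finset.mem_Ico]
      constructor
      · rintro ⟨⟨h0, h1⟩, hP⟩
        by_cases hc : i < (N : ℤ)
        · simp only [rrow, if_pos hc, Finset.mem_Ico, lam_up hc] at hP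
          have := lam_ge_upper (N := N) ha hc
          rw [lam_up hc] at this
          omega
        · simp only [rrow, if_neg hc, Finset.mem_singleton, lam_lo hc] at hP
          have hb := ediv_bounds (i - (N : ℤ)) a haz
          have hq : (i - (N : ℤ)) / a = (N : ℤ) - 1 - j := by omega
          rw [hq] at hb
          have e1 : (a : ℤ) * ((N : ℤ) - 1 - j) = ((N : ℤ) - 1 - j) * a := by ring
          have e2 : ((N : ℤ) - j) * a = ((N : ℤ) - 1 - j) * a + a := by ring
          omega
      · rintro ⟨hlo, hhi⟩
        have hp0 : 0 ≤ ((N : ℤ) - 1 - j) * a := mul_nonneg (by omega) (by omega)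
        have hp1 : ((N : ℤ) - j) * a ≤ (N : ℤ) * a :=
          mul_le_mul_of_nonneg_right (by omega) (by omega)
        have hc : ¬ i < (N : ℤ) := by omega
        have hq : (i - (N : ℤ)) / a = (N : ℤ) - 1 - j := by
          refine ediv_eq_of haz (by omega) ?_
          have : ((N : ℤ) - 1 - j + 1) * a = ((N : ℤ) - j) * a := by ring
          omega
        refine ⟨⟨by omega, by omega⟩, ?_⟩
        simp only [rrow, if_neg hc, Finset.mem_singleton, lam_lo hc, hq]
        omega
    rw [hset, Int.card_Ico]
    have : ((N : ℤ) + ((N : ℤ) - j) * a) - ((N : ℤ) + ((N : ℤ) - 1 - j) * a) = (a : ℤ) := by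
      ring
    omega
  · rw [if_neg hA]
    by_cases hB : (N : ℤ) ≤ j ∧ j < (N : ℤ) + (N : ℤ) * a
    · rw [if_pos hB]
      have hset : (s0 N a).filter (fun i => j ∈ rrow N a i) =
          {(N : ℤ) - 1 - (j - (N : ℤ)) / a} := by
        ext i
        simp only [mem_filter, mem_s0, Finset.mem_singleton]
        constructor
        · rintro ⟨⟨h0, h1⟩, hP⟩
          by_cases hc : i < (N : ℤ)
          · simp only [rrow, if_pos hc, Finset.mem_Ico, lam_up hc] at hP
            have hq : (j - (N : ℤ)) / a = (N : ℤ) - i - 1 := by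
              refine ediv_eq_of haz ?_ ?_
              · have : ((N : ℤ) - i - 1) * a = ((N : ℤ) - i) * a - a := by ring
                omega
              · have : ((N : ℤ) - i - 1 + 1) * a = ((N : ℤ) - i) * a := by ring
                omega
            omega
          · simp only [rrow, if_neg hc, Finset.mem_singleton, lam_lo hc] at hP
            have hd : 0 ≤ (i - (N : ℤ)) / a := Int.ediv_nonneg (by omega) (by omega)
            omega
        · rintro rfl
          have hq0 : 0 ≤ (j - (N : ℤ)) / a := Int.ediv_nonneg (by omega) (by omega)
          have hq1 : (j - (N : ℤ)) / a < (N : ℤ) :=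
            (Int.ediv_lt_iff_lt_mul haz).2 (by linarith)
          have hc : (N : ℤ) - 1 - (j - (N : ℤ)) / a < (N : ℤ) := by omega
          refine ⟨⟨by omega, by omega⟩, ?_⟩
          simp only [rrow, if_pos hc, Finset.mem_Ico, lam_up hc]
          have hb := ediv_bounds (j - (N : ℤ)) a haz
          have e1 : ((N : ℤ) - ((N : ℤ) - 1 - (j - (N : ℤ)) / a)) * a
              = (a : ℤ) * ((j - (N : ℤ)) / a) + a := by ring
          omega
      rw [hset, Finset.card_singleton]
    · rw [if_neg hB]
      rw [Finset.card_eq_zero, Finset.filter_eq_empty_iff]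
      intro i hi
      rw [mem_s0] at hi
      obtain ⟨h0, h1⟩ := hi
      by_cases hc : i < (N : ℤ)
      · simp only [rrow, if_pos hc, Finset.mem_Ico, lam_up hc]
        intro hcon
        have h2 := lam_le_top (N := N) hN ha h0
        rw [lam_up hc] at h2
        have h3 : (1 : ℤ) * a ≤ ((N : ℤ) - i) * a :=
          mul_le_mul_of_nonneg_right (by omega) (by omega)
        omega
      · simp only [rrow, if_neg hc, Finset.mem_singleton]
        intro hcon
        have h2 := lam_ge_lower hN ha hc h1
        omega

include hN ha in
lemma filter_arow_card (j : ℤ) :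
    ((s0 N a).filter (fun i => j ∈ arow N a i)).card =
      if 1 ≤ j ∧ j < (N : ℤ) then a
      else if (N : ℤ) ≤ j ∧ j < (N : ℤ) + (N : ℤ) * a + a then 1 else 0 := by
  have haz : (0 : ℤ) < a := by exact_mod_cast ha
  have hNz : (1 : ℤ) ≤ N := by exact_mod_cast hN
  have hNa : (a : ℤ) ≤ (N : ℤ) * a := le_mul_of_one_le_left (by omega) hNz
  have hNa2 : (N : ℤ) ≤ (N : ℤ) * a := le_mul_of_one_le_right (by omega) (by exact_mod_cast ha)
  by_cases hA : 1 ≤ j ∧ j < (N : ℤ)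
  · rw [if_pos hA]
    have hset : (s0 N a).filter (fun i => j ∈ arow N a i) =
        Finset.Ico ((N : ℤ) + ((N : ℤ) - j) * a) ((N : ℤ) + ((N : ℤ) - j + 1) * a) := by
      ext i
      simp only [mem_filter, mem_s0, Finset.mem_Ico]
      constructor
      · rintro ⟨⟨h0, h1⟩, hP⟩
        by_cases hc : i < (N : ℤ)
        · simp only [arow, if_pos hc, Finset.mem_Ico, lam_up hc] at hP
          have := lam_ge_upper (N := N) ha hc
          rw [lam_up hc] at this
          omega
        · by_cases hc2 : i < (N : ℤ) + a
          · simp only [arow, if_neg hc, if_pos hc2, Finset.mem_singleton] at hP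
            omega
          · simp only [arow, if_neg hc, if_neg hc2, Finset.mem_singleton, lam_lo hc] at hP
            have hb := ediv_bounds (i - (N : ℤ)) a haz
            have hq : (i - (N : ℤ)) / a = (N : ℤ) - j := by omega
            rw [hq] at hb
            have e1 : (a : ℤ) * ((N : ℤ) - j) = ((N : ℤ) - j) * a := by ring
            have e2 : ((N : ℤ) - j + 1) * a = ((N : ℤ) - j) * a + a := by ring
            omega
      · rintro ⟨hlo, hhi⟩
        have hp0 : (1 : ℤ) * a ≤ ((N : ℤ) - j) * a :=
          mul_le_mul_of_nonneg_right (by omega) (by omega)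
        have hp1 : ((N : ℤ) - j + 1) * a ≤ (N : ℤ) * a :=
          mul_le_mul_of_nonneg_right (by omega) (by omega)
        have hc : ¬ i < (N : ℤ) := by omega
        have hc2 : ¬ i < (N : ℤ) + a := by omega
        have hq : (i - (N : ℤ)) / a = (N : ℤ) - j := by
          refine ediv_eq_of haz (by omega) (by omega)
        refine ⟨⟨by omega, by omega⟩, ?_⟩
        simp only [arow, if_neg hc, if_neg hc2, Finset.mem_singleton, lam_lo hc, hq]
        omega
    rw [hset, Int.card_Ico]
    have : ((N : ℤ) + ((N : ℤ) - j + 1) * a) - ((N : ℤ) + ((N : ℤ) - j) * a) = (a : ℤ) := by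
      ring
    omega
  · rw [if_neg hA]
    by_cases hB : (N : ℤ) ≤ j ∧ j < (N : ℤ) + (N : ℤ) * a + a
    · rw [if_pos hB]
      by_cases hBi : j < (N : ℤ) + a
      · -- middle rows: the singleton {j}
        have hset : (s0 N a).filter (fun i => j ∈ arow N a i) = {j} := by
          ext i
          simp only [mem_filter, mem_s0, Finset.mem_singleton]
          constructor
          · rintro ⟨⟨h0, h1⟩, hP⟩
            by_cases hc : i < (N : ℤ)
            · simp only [arow, if_pos hc, Finset.mem_Ico, lam_up hc] at hP
              have : (1 : ℤ) * a ≤ ((N : ℤ) - i) * a :=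
                mul_le_mul_of_nonneg_right (by omega) (by omega)
              omega
            · by_cases hc2 : i < (N : ℤ) + a
              · simp only [arow, if_neg hc, if_pos hc2, Finset.mem_singleton] at hP
                omega
              · simp only [arow, if_neg hc, if_neg hc2, Finset.mem_singleton, lam_lo hc] at hP
                have hd : 1 ≤ (i - (N : ℤ)) / a := (Int.le_ediv_iff_mul_le haz).2 (by omega)
                omega
          · intro h
            have hc : ¬ i < (N : ℤ) := by omega
            have hc2 : i < (N : ℤ) + a := by omega
            refine ⟨⟨by omega, by omega⟩, ?_⟩
            simp only [arow, if_neg hc, if_pos hc2, Finset.mem_singleton]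
            omega
        rw [hset, Finset.card_singleton]
      · -- upper rows: singleton row N - (j-N)/a
        have hset : (s0 N a).filter (fun i => j ∈ arow N a i) =
            {(N : ℤ) - (j - (N : ℤ)) / a} := by
          ext i
          simp only [mem_filter, mem_s0, Finset.mem_singleton]
          constructor
          · rintro ⟨⟨h0, h1⟩, hP⟩
            by_cases hc : i < (N : ℤ)
            · simp only [arow, if_pos hc, Finset.mem_Ico, lam_up hc] at hP
              have hq : (j - (N : ℤ)) / a = (N : ℤ) - i := by
                refine ediv_eq_of haz ?_ ?_
                · omega
                · have : ((N : ℤ) - i + 1) * a = ((N : ℤ) - i) * a + a := by ring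
                  omega
              omega
            · by_cases hc2 : i < (N : ℤ) + a
              · simp only [arow, if_neg hc, if_pos hc2, Finset.mem_singleton] at hP
                omega
              · simp only [arow, if_neg hc, if_neg hc2, Finset.mem_singleton, lam_lo hc] at hP
                have hd : 0 ≤ (i - (N : ℤ)) / a := Int.ediv_nonneg (by omega) (by omega)
                omega
          · rintro rfl
            have hq0 : 1 ≤ (j - (N : ℤ)) / a :=
              (Int.le_ediv_iff_mul_le haz).2 (by omega)
            have hq1 : (j - (N : ℤ)) / a ≤ (N : ℤ) := by
              have : (j - (N : ℤ)) / a < (N : ℤ) + 1 :=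
                (Int.ediv_lt_iff_lt_mul haz).2 (by nlinarith)
              omega
            have hc : (N : ℤ) - (j - (N : ℤ)) / a < (N : ℤ) := by omega
            refine ⟨⟨by omega, by omega⟩, ?_⟩
            simp only [arow, if_pos hc, Finset.mem_Ico, lam_up hc]
            have hb := ediv_bounds (j - (N : ℤ)) a haz
            have e1 : ((N : ℤ) - ((N : ℤ) - (j - (N : ℤ)) / a)) * a
                = (a : ℤ) * ((j - (N : ℤ)) / a) := by ring
            omega
        rw [hset, Finset.card_singleton]
    · rw [if_neg hB]
      rw [Finset.card_eq_zero, Finset.filter_eq_empty_iff]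
      intro i hi
      rw [mem_s0] at hi
      obtain ⟨h0, h1⟩ := hi
      by_cases hc : i < (N : ℤ)
      · simp only [arow, if_pos hc, Finset.mem_Ico, lam_up hc]
        intro hcon
        have h2 := lam_le_top (N := N) hN ha h0
        rw [lam_up hc] at h2
        have h3 : (1 : ℤ) * a ≤ ((N : ℤ) - i) * a :=
          mul_le_mul_of_nonneg_right (by omega) (by omega)
        omega
      · by_cases hc2 : i < (N : ℤ) + a
        · simp only [arow, if_neg hc, if_pos hc2, Finset.mem_singleton]
          omega
        · simp only [arow, if_neg hc, if_neg hc2, Finset.mem_singleton]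
          intro hcon
          have h2 := lam_ge_lower hN ha hc h1
          omega

end Counting

end LIEE
namespace LIEE

open Finset

section Rows

variable {N a : ℕ} (hN : 0 < N) (ha : 0 < a)

include hN ha in
lemma rrow_subset {i : ℤ} (h0 : 0 ≤ i) (h1 : i < (N : ℤ) + (N : ℤ) * a) :
    rrow N a i ⊆ row1 N a i := by
  have haz : (0 : ℤ) < a := by exact_mod_cast ha
  intro j hj
  by_cases hc : i < (N : ℤ)
  · simp only [rrow, if_pos hc, Finset.mem_Ico] at hj
    have := lam_ge_upper (N := N) ha hc
    simp only [row1, Finset.mem_Ico]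
    omega
  · simp only [rrow, if_neg hc, Finset.mem_singleton] at hj
    have := lam_pos hN ha h0 h1
    simp only [row1, Finset.mem_Ico]
    omega

include hN ha in
lemma arow_disj {i : ℤ} (h0 : 0 ≤ i) (h1 : i < (N : ℤ) + (N : ℤ) * a) :
    ∀ j ∈ arow N a i, j ∉ row1 N a i := by
  have haz : (0 : ℤ) < a := by exact_mod_cast ha
  intro j hj
  simp only [row1, Finset.mem_Ico]
  by_cases hc : i < (N : ℤ)
  · simp only [arow, if_pos hc, Finset.mem_Ico] at hj
    omega
  · have hl := lam_ge_lower hN ha hc h1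
    by_cases hc2 : i < (N : ℤ) + a
    · simp only [arow, if_neg hc, if_pos hc2, Finset.mem_singleton] at hj
      omega
    · simp only [arow, if_neg hc, if_neg hc2, Finset.mem_singleton] at hj
      omega

include hN ha in
lemma card_row1 {i : ℤ} (h0 : 0 ≤ i) (h1 : i < (N : ℤ) + (N : ℤ) * a) :
    ((row1 N a i).card : ℤ) = lam N a i := by
  have := lam_pos hN ha h0 h1
  simp only [row1, Int.card_Ico]
  omega

lemma card_rrow_arow {i : ℤ} :
    (rrow N a i).card = (arow N a i).card := by
  by_cases hc : i < (N : ℤ)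
  · simp only [rrow, arow, if_pos hc, Int.card_Ico]
    omega
  · by_cases hc2 : i < (N : ℤ) + a
    · simp only [rrow, arow, if_neg hc, if_pos hc2, Finset.card_singleton]
    · simp only [rrow, arow, if_neg hc, if_neg hc2, Finset.card_singleton]

include hN ha in
lemma card_rrow_le {i : ℤ} (h0 : 0 ≤ i) (h1 : i < (N : ℤ) + (N : ℤ) * a) :
    (rrow N a i).card ≤ (row1 N a i).card :=
  Finset.card_le_card (rrow_subset hN ha h0 h1)

include hN ha in
lemma card_rrow_val {i : ℤ} (h0 : 0 ≤ i) (h1 : i < (N : ℤ) + (N : ℤ) * a) :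
    ((rrow N a i).card : ℤ) = if i < (N : ℤ) then (a : ℤ) else 1 := by
  by_cases hc : i < (N : ℤ)
  · have := lam_ge_upper (N := N) ha hc
    simp only [rrow, if_pos hc, Int.card_Ico]
    omega
  · by_cases hc2 : i < (N : ℤ) + a
    · simp only [rrow, if_neg hc, Finset.card_singleton]; norm_num
    · simp only [rrow, if_neg hc, Finset.card_singleton]; norm_num

include hN ha in
lemma row2_card_eq {i : ℤ} (h0 : 0 ≤ i) (h1 : i < (N : ℤ) + (N : ℤ) * a) :
    (row2 N a i).card = (row1 N a i).card := by
  have hdisj : Disjoint (row1 N a i \ rrow N a i) (arow N a i) := by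
    rw [Finset.disjoint_right]
    intro j hj hj2
    exact arow_disj hN ha h0 h1 j hj (Finset.mem_sdiff.1 hj2).1
  have h2 : (row2 N a i).card = (row1 N a i).card - (rrow N a i).card + (arow N a i).card := by
    rw [row2, Finset.card_union_of_disjoint hdisj,
      Finset.card_sdiff_of_subset (rrow_subset hN ha h0 h1)]
  rw [h2, ← card_rrow_arow]
  have := card_rrow_le hN ha h0 h1
  omega

include hN ha in
lemma row1_inter_row2 {i : ℤ} (h0 : 0 ≤ i) (h1 : i < (N : ℤ) + (N : ℤ) * a) :
    row1 N a i ∩ row2 N a i = row1 N a i \ rrow N a i := by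
  ext j
  simp only [Finset.mem_inter, row2, Finset.mem_union, Finset.mem_sdiff]
  have := arow_disj hN ha h0 h1 j
  tauto

include hN ha in
lemma rowSum_eq (i : ℤ) : rowSum (F2 N a) i = rowSum (F1 N a) i := by
  rw [F1, F2, rowSum_rowsF, rowSum_rowsF]
  by_cases hi : i ∈ s0 N a
  · rw [if_pos hi, if_pos hi]
    obtain ⟨h0, h1⟩ := mem_s0.1 hi
    exact row2_card_eq hN ha h0 h1
  · rw [if_neg hi, if_neg hi]

include hN ha in
lemma colSum_relation (j : ℤ) :
    (colSum (F2 N a) j : ℤ) = (colSum (F1 N a) j : ℤ)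
      - ((s0 N a).filter (fun i => j ∈ rrow N a i)).card
      + ((s0 N a).filter (fun i => j ∈ arow N a i)).card := by
  rw [F1, F2, colSum_rowsF, colSum_rowsF]
  set A1 := (s0 N a).filter (fun i => j ∈ row1 N a i) with hA1
  set AR := (s0 N a).filter (fun i => j ∈ rrow N a i) with hAR
  set AA := (s0 N a).filter (fun i => j ∈ arow N a i) with hAA
  have hsub : AR ⊆ A1 := by
    intro i hi
    rw [hAR, Finset.mem_filter] at hi
    obtain ⟨h0, h1⟩ := mem_s0.1 hi.1
    exact Finset.mem_filter.2 ⟨hi.1, rrow_subset hN ha h0 h1 hi.2⟩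
  have hdisj : Disjoint (A1 \ AR) AA := by
    rw [Finset.disjoint_right]
    intro i hi hi2
    rw [hAA, Finset.mem_filter] at hi
    rw [Finset.mem_sdiff, hA1, Finset.mem_filter] at hi2
    obtain ⟨h0, h1⟩ := mem_s0.1 hi.1
    exact arow_disj hN ha h0 h1 j hi.2 hi2.1.2
  have hset : (s0 N a).filter (fun i => j ∈ row2 N a i) = (A1 \ AR) ∪ AA := by
    ext i
    simp only [Finset.mem_filter, Finset.mem_union, Finset.mem_sdiff, hA1, hAR, hAA,
      row2, Finset.mem_union, Finset.mem_sdiff]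
    tauto
  rw [hset, Finset.card_union_of_disjoint hdisj, Finset.card_sdiff_of_subset hsub]
  have := Finset.card_le_card hsub
  push_cast [Nat.cast_sub this]
  ring

end Rows

end LIEE
namespace LIEE

open Finset

section Sums

variable {N a : ℕ} (hN : 0 < N) (ha : 0 < a)

lemma Sdiv (n : ℕ) (hapos : 0 < a) :
    ∑ k ∈ range (n * a), k / a = a * ∑ q ∈ range n, q := by
  induction n with
  | zero => simp
  | succ n ih =>
    have hsplit : ∑ k ∈ range ((n + 1) * a), k / a
        = (∑ k ∈ range (n * a), k / a) + ∑ k ∈ Ico (n * a) ((n + 1) * a), k / a := by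
      simp only [range_eq_Ico]
      exact (Finset.sum_Ico_consecutive _ (Nat.zero_le _)
        (Nat.mul_le_mul_right a (Nat.le_succ n))).symm
    have hblock : ∑ k ∈ Ico (n * a) ((n + 1) * a), k / a = a * n := by
      rw [Finset.sum_Ico_eq_sum_range]
      have hw : (n + 1) * a - n * a = a := by ring_nf; omega
      rw [hw]
      have hterm : ∀ t ∈ range a, (n * a + t) / a = n := by
        intro t ht
        rw [mem_range] at ht
        rw [mul_comm n a, Nat.mul_add_div hapos, Nat.div_eq_of_lt ht]
        omega
      rw [Finset.sum_congr rfl hterm, Finset.sum_const, card_range, smul_eq_mul, mul_comm]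
    rw [hsplit, hblock, ih, Finset.sum_range_succ]
    ring

lemma sum_over_s0 (g : ℤ → ℤ) :
    ∑ i ∈ s0 N a, g i = ∑ n ∈ range (N + N * a), g (n : ℤ) := by
  rw [s0, Finset.sum_image]
  intro x _ y _ h
  simpa using h

include hN ha in
lemma sum_lam_eq :
    ∑ i ∈ s0 N a, lam N a i = (N : ℤ) ^ 2 + (N : ℤ) ^ 2 * a + (N : ℤ) * a := by
  have haz : (0 : ℤ) < a := by exact_mod_cast ha
  have hNz : (1 : ℤ) ≤ N := by exact_mod_cast hN
  rw [sum_over_s0]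
  have hB : ∑ i ∈ Ico N (N + N * a), lam N a (i : ℤ)
      = ∑ k ∈ range (N * a), lam N a ((N + k : ℕ) : ℤ) := by
    rw [Finset.sum_Ico_eq_sum_range]
    have hw : N + N * a - N = N * a := by omega
    rw [hw]
  have hsplit : ∑ n ∈ range (N + N * a), lam N a (n : ℤ)
      = (∑ n ∈ range N, lam N a (n : ℤ)) + ∑ k ∈ range (N * a), lam N a ((N + k : ℕ) : ℤ) := by
    rw [← hB]
    simp only [range_eq_Ico]
    exact (Finset.sum_Ico_consecutive _ (Nat.zero_le _) (Nat.le_add_right N (N * a))).symm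
  rw [hsplit]
  have hU : ∑ n ∈ range N, lam N a (n : ℤ)
      = (N : ℤ) * N + ((N : ℤ) * N - (∑ n ∈ range N, (n : ℤ))) * a := by
    have : ∀ n ∈ range N, lam N a (n : ℤ) = (N : ℤ) + ((N : ℤ) - n) * a := by
      intro n hn
      rw [mem_range] at hn
      exact lam_up (by exact_mod_cast hn)
    rw [Finset.sum_congr rfl this, Finset.sum_add_distrib, Finset.sum_const, card_range,
      ← Finset.sum_mul, Finset.sum_sub_distrib, Finset.sum_const, card_range]
    push_cast
    ring
  have hL : ∑ k ∈ range (N * a), lam N a ((N + k : ℕ) : ℤ)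
      = (N : ℤ) * (N * a) - (a : ℤ) * (∑ q ∈ range N, (q : ℤ)) := by
    have hterm : ∀ k ∈ range (N * a), lam N a ((N + k : ℕ) : ℤ) = (N : ℤ) - ((k / a : ℕ) : ℤ) := by
      intro k hk
      have hc : ¬ ((N + k : ℕ) : ℤ) < (N : ℤ) := by push_cast; omega
      rw [lam_lo hc]
      have : ((N + k : ℕ) : ℤ) - (N : ℤ) = (k : ℤ) := by push_cast; ring
      rw [this, ← Int.natCast_div]
    rw [Finset.sum_congr rfl hterm, Finset.sum_sub_distrib, Finset.sum_const, card_range]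
    have hcast : ∑ k ∈ range (N * a), ((k / a : ℕ) : ℤ) = ((∑ k ∈ range (N * a), k / a : ℕ) : ℤ) := by
      push_cast
      rfl
    rw [hcast, Sdiv N ha]
    have : ((a * ∑ q ∈ range N, q : ℕ) : ℤ) = (a : ℤ) * ∑ q ∈ range N, (q : ℤ) := by
      push_cast
      rfl
    rw [this]
    push_cast
    ring
  rw [hU, hL]
  have hT : (∑ n ∈ range N, (n : ℤ)) * 2 = (N : ℤ) * ((N : ℤ) - 1) := by
    have h1 := Finset.sum_range_id_mul_two N
    have h2 : ((∑ i ∈ range N, i : ℕ) : ℤ) = ∑ n ∈ range N, (n : ℤ) := by push_cast; rfl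
    have h3 : (((N * (N - 1) : ℕ)) : ℤ) = (N : ℤ) * ((N : ℤ) - 1) := by
      push_cast [Nat.cast_sub hN]
      ring
    calc (∑ n ∈ range N, (n : ℤ)) * 2 = ((∑ i ∈ range N, i : ℕ) : ℤ) * 2 := by rw [h2]
      _ = (((∑ i ∈ range N, i) * 2 : ℕ) : ℤ) := by push_cast; ring
      _ = (((N * (N - 1) : ℕ)) : ℤ) := by rw [h1]
      _ = (N : ℤ) * ((N : ℤ) - 1) := h3
  linear_combination (- (a : ℤ)) * hT

include hN ha in
lemma sum_rrow_eq :
    ∑ i ∈ s0 N a, ((rrow N a i).card : ℤ) = 2 * (N : ℤ) * a := by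
  rw [sum_over_s0]
  have hB : ∑ i ∈ Ico N (N + N * a), ((rrow N a (i : ℤ)).card : ℤ)
      = ∑ k ∈ range (N * a), ((rrow N a ((N + k : ℕ) : ℤ)).card : ℤ) := by
    rw [Finset.sum_Ico_eq_sum_range]
    have hw : N + N * a - N = N * a := by omega
    rw [hw]
  have hsplit : ∑ n ∈ range (N + N * a), ((rrow N a (n : ℤ)).card : ℤ)
      = (∑ n ∈ range N, ((rrow N a (n : ℤ)).card : ℤ))
        + ∑ k ∈ range (N * a), ((rrow N a ((N + k : ℕ) : ℤ)).card : ℤ) := by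
    rw [← hB]
    simp only [range_eq_Ico]
    exact (Finset.sum_Ico_consecutive _ (Nat.zero_le _) (Nat.le_add_right N (N * a))).symm
  rw [hsplit]
  have hNa2 : (N : ℤ) ≤ (N : ℤ) * a := le_mul_of_one_le_right (by positivity) (by exact_mod_cast ha)
  have hU : ∀ n ∈ range N, ((rrow N a (n : ℤ)).card : ℤ) = (a : ℤ) := by
    intro n hn
    rw [mem_range] at hn
    have hc : ((n : ℤ)) < (N : ℤ) := by exact_mod_cast hn
    rw [card_rrow_val hN ha (by positivity) (by omega), if_pos hc]
  have hL : ∀ k ∈ range (N * a), ((rrow N a ((N + k : ℕ) : ℤ)).card : ℤ) = 1 := by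
    intro k hk
    rw [mem_range] at hk
    have hc : ¬ ((N + k : ℕ) : ℤ) < (N : ℤ) := by push_cast; omega
    have hb : ((N + k : ℕ) : ℤ) < (N : ℤ) + (N : ℤ) * a := by
      push_cast
      have : (k : ℤ) < (N : ℤ) * a := by exact_mod_cast hk
      omega
    rw [card_rrow_val hN ha (by positivity) hb, if_neg hc]
  rw [Finset.sum_congr rfl hU, Finset.sum_congr rfl hL, Finset.sum_const, Finset.sum_const,
    card_range, card_range]
  simp only [nsmul_eq_mul]
  push_cast
  ring

include hN ha in
lemma cardF1 : (((F1 N a).card : ℤ)) = (N : ℤ) ^ 2 + (N : ℤ) ^ 2 * a + (N : ℤ) * a := by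
  rw [F1, card_rowsF]
  have : ((∑ i ∈ s0 N a, (row1 N a i).card : ℕ) : ℤ) = ∑ i ∈ s0 N a, ((row1 N a i).card : ℤ) := by
    push_cast; rfl
  rw [this]
  rw [Finset.sum_congr rfl (fun i hi => ?_), sum_lam_eq hN ha]
  obtain ⟨h0, h1⟩ := mem_s0.1 hi
  exact card_row1 hN ha h0 h1

include hN ha in
lemma cardF2 : (F1 N a).card = (F2 N a).card := by
  rw [F1, F2, card_rowsF, card_rowsF]
  refine Finset.sum_congr rfl fun i hi => ?_
  obtain ⟨h0, h1⟩ := mem_s0.1 hi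
  exact (row2_card_eq hN ha h0 h1).symm

include hN ha in
lemma cardInter :
    (((F1 N a ∩ F2 N a).card : ℤ)) = (N : ℤ) ^ 2 + (N : ℤ) ^ 2 * a - (N : ℤ) * a := by
  rw [F1, F2, inter_rowsF, card_rowsF]
  have hpt : ∀ i ∈ s0 N a, ((row1 N a i ∩ row2 N a i).card : ℤ)
      = lam N a i - ((rrow N a i).card : ℤ) := by
    intro i hi
    obtain ⟨h0, h1⟩ := mem_s0.1 hi
    rw [row1_inter_row2 hN ha h0 h1, Finset.card_sdiff_of_subset (rrow_subset hN ha h0 h1),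
      Nat.cast_sub (card_rrow_le hN ha h0 h1), card_row1 hN ha h0 h1]
  have hcast : ((∑ i ∈ s0 N a, (row1 N a i ∩ row2 N a i).card : ℕ) : ℤ)
      = ∑ i ∈ s0 N a, ((row1 N a i ∩ row2 N a i).card : ℤ) := by push_cast; rfl
  rw [hcast, Finset.sum_congr rfl hpt, Finset.sum_sub_distrib, sum_lam_eq hN ha,
    sum_rrow_eq hN ha]
  ring

end Sums

end LIEE
namespace LIEE

open Finset

section Error

variable {N a : ℕ} (hN : 0 < N) (ha : 0 < a)

include hN ha in
lemma errAbs (j : ℤ) :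
    |(colSum (F1 N a) j : ℤ) - (colSum (F2 N a) j : ℤ)|
      = (if j = 0 then (a : ℤ) else 0)
        + (if (N : ℤ) + (N : ℤ) * a ≤ j ∧ j < (N : ℤ) + (N : ℤ) * a + a then 1 else 0) := by
  have haz : (0 : ℤ) < a := by exact_mod_cast ha
  have hNz : (1 : ℤ) ≤ N := by exact_mod_cast hN
  have hNa : (a : ℤ) ≤ (N : ℤ) * a := le_mul_of_one_le_left (by omega) hNz
  have hNa2 : (N : ℤ) ≤ (N : ℤ) * a := le_mul_of_one_le_right (by omega) (by exact_mod_cast ha)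
  have hrel := colSum_relation hN ha (N := N) (a := a) j
  have hdiff : (colSum (F1 N a) j : ℤ) - (colSum (F2 N a) j : ℤ)
      = (((s0 N a).filter (fun i => j ∈ rrow N a i)).card : ℤ)
        - (((s0 N a).filter (fun i => j ∈ arow N a i)).card : ℤ) := by omega
  rw [hdiff, filter_rrow_card hN ha j, filter_arow_card hN ha j]
  split_ifs <;> rw [abs_sub_comm] <;>
    first
      | (rw [abs_of_nonneg (by omega)]; omega)
      | (rw [abs_of_nonpos (by omega)]; omega)

include hN ha in
lemma lineError_eq : lineError (F1 N a) (F2 N a) = 2 * (a : ℤ) := by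
  have haz : (0 : ℤ) < a := by exact_mod_cast ha
  have hNz : (1 : ℤ) ≤ N := by exact_mod_cast hN
  have hNa : (a : ℤ) ≤ (N : ℤ) * a := le_mul_of_one_le_left (by omega) hNz
  have hNa2 : (N : ℤ) ≤ (N : ℤ) * a := le_mul_of_one_le_right (by omega) (by exact_mod_cast ha)
  unfold lineError
  have hrow : ∀ i : ℤ, |(rowSum (F1 N a) i : ℤ) - (rowSum (F2 N a) i : ℤ)| = 0 := by
    intro i
    rw [rowSum_eq hN ha i]
    simp
  rw [finsum_congr hrow, finsum_zero]
  set S := Finset.Ico (0 : ℤ) ((N : ℤ) + (N : ℤ) * a + a) with hS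
  have hsupp : Function.support
      (fun j => |(colSum (F1 N a) j : ℤ) - (colSum (F2 N a) j : ℤ)|) ⊆ ↑S := by
    intro j hj
    simp only [Function.mem_support] at hj
    rw [errAbs hN ha j] at hj
    simp only [hS, Finset.coe_Ico, Set.mem_Ico]
    by_contra hc
    push_neg at hc
    have h1 : ¬ (j = 0) := by
      intro h
      have := hc (by omega)
      omega
    have h2 : ¬ ((N : ℤ) + (N : ℤ) * a ≤ j ∧ j < (N : ℤ) + (N : ℤ) * a + a) := by
      rintro ⟨hx1, hx2⟩
      have := hc (by omega)
      omega
    rw [if_neg h1, if_neg h2] at hj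
    exact hj (by norm_num)
  rw [finsum_eq_sum_of_support_subset _ hsupp]
  rw [Finset.sum_congr rfl (fun j _ => errAbs hN ha j), Finset.sum_add_distrib]
  have hfirst : ∑ j ∈ S, (if j = 0 then (a : ℤ) else 0) = (a : ℤ) := by
    rw [Finset.sum_ite_eq' S (0 : ℤ) (fun _ => (a : ℤ))]
    rw [if_pos]
    simp only [hS, Finset.mem_Ico]
    omega
  have hsecond : ∑ j ∈ S,
      (if (N : ℤ) + (N : ℤ) * a ≤ j ∧ j < (N : ℤ) + (N : ℤ) * a + a then (1 : ℤ) else 0)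
        = (a : ℤ) := by
    rw [Finset.sum_ite, Finset.sum_const, Finset.sum_const_zero, add_zero]
    have hfil : S.filter (fun j => (N : ℤ) + (N : ℤ) * a ≤ j ∧ j < (N : ℤ) + (N : ℤ) * a + a)
        = Finset.Ico ((N : ℤ) + (N : ℤ) * a) ((N : ℤ) + (N : ℤ) * a + a) := by
      ext j
      simp only [Finset.mem_filter, hS, Finset.mem_Ico]
      omega
    rw [hfil, Int.card_Ico]
    have : ((N : ℤ) + (N : ℤ) * a + a) - ((N : ℤ) + (N : ℤ) * a) = (a : ℤ) := by ring
    rw [this]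
    simp
  rw [hfirst, hsecond]
  ring

end Error

end LIEE
namespace LIEE

open Finset

section Unique

variable {N a : ℕ} (hN : 0 < N) (ha : 0 < a)

lemma sum_fst (F : Finset (ℤ × ℤ)) (t : Finset ℤ) (h : ∀ p ∈ F, p.1 ∈ t) (u : ℤ → ℚ) :
    ∑ p ∈ F, u p.1 = ∑ i ∈ t, (rowSum F i : ℚ) * u i := by
  rw [← Finset.sum_fiberwise_of_maps_to h (fun p => u p.1)]
  refine Finset.sum_congr rfl fun i _ => ?_
  rw [Finset.sum_congr rfl (fun p hp => by rw [(Finset.mem_filter.1 hp).2] :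
    ∀ p ∈ F.filter (fun p => p.1 = i), u p.1 = u i), Finset.sum_const, rowSum, nsmul_eq_mul]

lemma sum_snd (F : Finset (ℤ × ℤ)) (t : Finset ℤ) (h : ∀ p ∈ F, p.2 ∈ t) (u : ℤ → ℚ) :
    ∑ p ∈ F, u p.2 = ∑ j ∈ t, (colSum F j : ℚ) * u j := by
  rw [← Finset.sum_fiberwise_of_maps_to h (fun p => u p.2)]
  refine Finset.sum_congr rfl fun j _ => ?_
  rw [Finset.sum_congr rfl (fun p hp => by rw [(Finset.mem_filter.1 hp).2] :
    ∀ p ∈ F.filter (fun p => p.2 = j), u p.2 = u j), Finset.sum_const, colSum, nsmul_eq_mul]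

include hN ha in
lemma colSum_F1_pos {p : ℤ × ℤ} (hp : p ∈ F1 N a) :
    p.1 + 1 ≤ (colSum (F1 N a) p.2 : ℤ) := by
  obtain ⟨hi, hj⟩ := mem_rowsF.1 hp
  obtain ⟨h0, h1⟩ := mem_s0.1 hi
  simp only [row1, Finset.mem_Ico] at hj
  have hsub : Finset.Ico (0 : ℤ) (p.1 + 1) ⊆ (s0 N a).filter (fun i => p.2 ∈ row1 N a i) := by
    intro i' hi'
    rw [Finset.mem_Ico] at hi'
    refine Finset.mem_filter.2 ⟨mem_s0.2 ⟨hi'.1, by omega⟩, ?_⟩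
    simp only [row1, Finset.mem_Ico]
    have := lam_antitone (N := N) ha (show i' ≤ p.1 by omega)
    omega
  have hcard := Finset.card_le_card hsub
  rw [Int.card_Ico] at hcard
  rw [F1, colSum_rowsF]
  omega

include hN ha in
lemma colSum_F1_small {p : ℤ × ℤ} (hi : p.1 ∈ s0 N a) (hj0 : 0 ≤ p.2)
    (hp : p ∉ F1 N a) : (colSum (F1 N a) p.2 : ℤ) ≤ p.1 := by
  obtain ⟨h0, h1⟩ := mem_s0.1 hi
  have hj : ¬ p.2 ∈ row1 N a p.1 := by
    intro hcon
    exact hp (mem_rowsF.2 ⟨hi, hcon⟩)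
  simp only [row1, Finset.mem_Ico] at hj
  have hjlam : lam N a p.1 ≤ p.2 := by omega
  have hsub : (s0 N a).filter (fun i => p.2 ∈ row1 N a i) ⊆ Finset.Ico (0 : ℤ) p.1 := by
    intro i' hi'
    obtain ⟨hs, hmem⟩ := Finset.mem_filter.1 hi'
    obtain ⟨h0', h1'⟩ := mem_s0.1 hs
    simp only [row1, Finset.mem_Ico] at hmem
    rw [Finset.mem_Ico]
    refine ⟨h0', ?_⟩
    by_contra hcon
    have := lam_antitone (N := N) ha (show p.1 ≤ i' by omega)
    omega
  have hcard := Finset.card_le_card hsub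
  rw [Int.card_Ico] at hcard
  rw [F1, colSum_rowsF]
  omega

include hN ha in
lemma colSum_F1_outside {j : ℤ} (h : ¬ (0 ≤ j ∧ j < (N : ℤ) + (N : ℤ) * a)) :
    colSum (F1 N a) j = 0 := by
  rw [F1, colSum_rowsF, Finset.card_eq_zero, Finset.filter_eq_empty_iff]
  intro i hi
  obtain ⟨h0, h1⟩ := mem_s0.1 hi
  simp only [row1, Finset.mem_Ico]
  intro hcon
  exact h ⟨hcon.1, lt_of_lt_of_le hcon.2 (lam_le_top hN ha h0)⟩

include hN ha in
theorem F1_unique : UniquelyDetermined (F1 N a) := by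
  intro G hr hc
  have haz : (0 : ℤ) < a := by exact_mod_cast ha
  have hNz : (1 : ℤ) ≤ N := by exact_mod_cast hN
  -- G is contained in the rows s0 and columns [0, N+Na)
  have hGrow : ∀ p ∈ G, p.1 ∈ s0 N a := by
    intro p hp
    by_contra hcon
    have h1 : rowSum G p.1 = 0 := by
      rw [hr, F1, rowSum_rowsF, if_neg hcon]
    have h2 : p ∈ G.filter (fun q => q.1 = p.1) := Finset.mem_filter.2 ⟨hp, rfl⟩
    have h3 := Finset.card_ne_zero_of_mem h2
    exact h3 h1
  have hGcol : ∀ p ∈ G, p.2 ∈ Finset.Ico (0 : ℤ) ((N : ℤ) + (N : ℤ) * a) := by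
    intro p hp
    by_contra hcon
    rw [Finset.mem_Ico] at hcon
    have h1 : colSum G p.2 = 0 := by
      rw [hc, colSum_F1_outside hN ha hcon]
    have h2 : p ∈ G.filter (fun q => q.2 = p.2) := Finset.mem_filter.2 ⟨hp, rfl⟩
    exact (Finset.card_ne_zero_of_mem h2) h1
  have hF1row : ∀ p ∈ F1 N a, p.1 ∈ s0 N a := fun p hp => (mem_rowsF.1 hp).1
  have hF1col : ∀ p ∈ F1 N a, p.2 ∈ Finset.Ico (0 : ℤ) ((N : ℤ) + (N : ℤ) * a) := by
    intro p hp
    obtain ⟨hi, hj⟩ := mem_rowsF.1 hp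
    obtain ⟨h0, h1⟩ := mem_s0.1 hi
    simp only [row1, Finset.mem_Ico] at hj
    rw [Finset.mem_Ico]
    exact ⟨hj.1, lt_of_lt_of_le hj.2 (lam_le_top hN ha h0)⟩
  -- the weight function
  set w : ℤ × ℤ → ℚ := fun p => (colSum (F1 N a) p.2 : ℚ) - (p.1 : ℚ) - 1/2 with hw
  -- equality of weighted sums
  have hsplitw : ∀ (F : Finset (ℤ × ℤ)), (∀ p ∈ F, p.1 ∈ s0 N a) →
      (∀ p ∈ F, p.2 ∈ Finset.Ico (0 : ℤ) ((N : ℤ) + (N : ℤ) * a)) →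
      ∑ p ∈ F, w p = (∑ j ∈ Finset.Ico (0 : ℤ) ((N : ℤ) + (N : ℤ) * a),
          (colSum F j : ℚ) * (colSum (F1 N a) j : ℚ))
        + ∑ i ∈ s0 N a, (rowSum F i : ℚ) * (-(i : ℚ) - 1/2) := by
    intro F hrow hcol
    have : ∑ p ∈ F, w p = (∑ p ∈ F, ((colSum (F1 N a) p.2 : ℚ)))
        + ∑ p ∈ F, (-(p.1 : ℚ) - 1/2) := by
      rw [← Finset.sum_add_distrib]
      refine Finset.sum_congr rfl fun p _ => ?_
      rw [hw]
      ring
    rw [this, sum_snd F _ hcol (fun j => (colSum (F1 N a) j : ℚ)),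
      sum_fst F _ hrow (fun i => -(i : ℚ) - 1/2)]
  have hsumeq : ∑ p ∈ G, w p = ∑ p ∈ F1 N a, w p := by
    rw [hsplitw G hGrow hGcol, hsplitw (F1 N a) hF1row hF1col]
    congr 1
    · exact Finset.sum_congr rfl fun j _ => by rw [hc]
    · exact Finset.sum_congr rfl fun i _ => by rw [hr]
  -- cardinalities agree
  have hcardeq : G.card = (F1 N a).card := by
    have h1 : ((G.card : ℚ)) = ∑ i ∈ s0 N a, (rowSum G i : ℚ) * 1 := by
      rw [← sum_fst G _ hGrow (fun _ => (1 : ℚ))]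
      simp
    have h2 : (((F1 N a).card : ℚ)) = ∑ i ∈ s0 N a, (rowSum (F1 N a) i : ℚ) * 1 := by
      rw [← sum_fst (F1 N a) _ hF1row (fun _ => (1 : ℚ))]
      simp
    have h3 : ((G.card : ℚ)) = ((F1 N a).card : ℚ) := by
      rw [h1, h2]
      exact Finset.sum_congr rfl fun i _ => by rw [hr]
    exact_mod_cast h3
  -- positivity and negativity of weights
  have hpos : ∀ p ∈ F1 N a \ G, 0 < w p := by
    intro p hp
    have hp1 := (Finset.mem_sdiff.1 hp).1
    have := colSum_F1_pos hN ha hp1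
    rw [hw]
    have hq : (p.1 : ℚ) + 1 ≤ ((colSum (F1 N a) p.2 : ℤ) : ℚ) := by exact_mod_cast this
    push_cast at hq ⊢
    linarith
  have hneg : ∀ p ∈ G \ F1 N a, w p < 0 := by
    intro p hp
    obtain ⟨hpG, hpF⟩ := Finset.mem_sdiff.1 hp
    have h0 : 0 ≤ p.2 := by
      have := hGcol p hpG
      rw [Finset.mem_Ico] at this
      exact this.1
    have := colSum_F1_small hN ha (hGrow p hpG) h0 hpF
    rw [hw]
    have hq : ((colSum (F1 N a) p.2 : ℤ) : ℚ) ≤ (p.1 : ℚ) := by exact_mod_cast this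
    push_cast at hq ⊢
    linarith
  -- conclusion
  have hdiffsum : ∑ p ∈ G \ F1 N a, w p = ∑ p ∈ F1 N a \ G, w p := by
    have h1 := Finset.sum_inter_add_sum_sdiff G (F1 N a) w
    have h2 := Finset.sum_inter_add_sum_sdiff (F1 N a) G w
    rw [Finset.inter_comm] at h2
    have : (∑ p ∈ G ∩ F1 N a, w p) + ∑ p ∈ G \ F1 N a, w p
        = (∑ p ∈ G ∩ F1 N a, w p) + ∑ p ∈ F1 N a \ G, w p := by
      rw [h1, h2, hsumeq]
    linarith
  by_contra hne
  have hGdiff : (G \ F1 N a).Nonempty := by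
    rw [Finset.sdiff_nonempty]
    intro hsub
    exact hne (Finset.eq_of_subset_of_card_le hsub (by omega))
  have hF1diff : (F1 N a \ G).Nonempty := by
    rw [Finset.sdiff_nonempty]
    intro hsub
    exact hne (Finset.eq_of_subset_of_card_le hsub (by omega)).symm
  have h1 : ∑ p ∈ G \ F1 N a, w p < 0 := Finset.sum_neg hneg hGdiff
  have h2 : 0 < ∑ p ∈ F1 N a \ G, w p := Finset.sum_pos hpos hF1diff
  rw [hdiffsum] at h1
  linarith

end Unique

end LIEE

theorem large_intersection_example_exists (N α : ℕ) (hN : 0 < N) (hα : 0 < α) :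
    ∃ F1 F2 : Finset (ℤ × ℤ),
      UniquelyDetermined F1 ∧
      F1.card = F2.card ∧
      lineError F1 F2 = 2 * α ∧
      ((F1 ∩ F2).card : ℤ) = (N : ℤ) ^ 2 + (N : ℤ) ^ 2 * α - (N : ℤ) * α ∧
      (F1.card : ℤ) = (N : ℤ) ^ 2 + (N : ℤ) ^ 2 * α + (N : ℤ) * α := by
  refine ⟨LIEE.F1 N α, LIEE.F2 N α, LIEE.F1_unique hN hα, LIEE.cardF2 hN hα,
    LIEE.lineError_eq hN hα, LIEE.cardInter hN hα, LIEE.cardF1 hN hα⟩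
end
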